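/- arXiv:1403.3489 — 7 statements merged into one kernel-verified Lean document; each statement's English description precedes it below -/
import Mathlib

section
/- Let m, N, p ≥ 1 be integers and let a = (a₁,…,a_m), u = (u₁,…,u_m) be vectors of positive integers such that Σ_{i=1}^m aᵢuᵢ = p·N and aᵢ > p²·(Σ_{j=1}^m uⱼ)·(Π_{j=1}^m uⱼ) for every i. Then a is (N,u)-rearrangeable if and only if gcd(u₁,…,u_m) divides N; moreover, in this case the rearranging matrix C can be chosen to have exactly p rows. -/
lemma bezout_bdd (a b : ℕ) (ha : 0 < a) (hb : 0 < b) :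
    ∃ α β : ℤ, α * a + β * b = Nat.gcd a b ∧ |α| ≤ b ∧ |β| ≤ a := by
  set g : ℕ := Nat.gcd a b with hgdef
  have hg : 0 < g := Nat.gcd_pos_of_pos_left b ha
  set k : ℕ := b / g with hkdef
  have hk : 0 < k := Nat.div_pos (Nat.le_of_dvd hb (Nat.gcd_dvd_right a b)) hg
  have hkg : (k : ℤ) * g = b := by
    exact_mod_cast congrArg (Nat.cast : ℕ → ℤ) (Nat.div_mul_cancel (Nat.gcd_dvd_right a b))
  set A : ℤ := Nat.gcdA a b with hAdef
  set B : ℤ := Nat.gcdB a b with hBdef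
  have hbez : (g : ℤ) = a * A + b * B := Nat.gcd_eq_gcd_ab a b
  set α : ℤ := A % k with hαdef
  have hα0 : 0 ≤ α := Int.emod_nonneg A (by positivity)
  have hαk : α < k := Int.emod_lt_of_pos A (by exact_mod_cast hk)
  have hdvd : (b : ℤ) ∣ (g - α * a) := by
    have h1 : (k : ℤ) ∣ (A - α) := Int.dvd_self_sub_of_emod_eq rfl
    obtain ⟨t, ht⟩ := h1
    have hga : (g : ℤ) ∣ a := Int.natCast_dvd_natCast.mpr (Nat.gcd_dvd_left a b)
    obtain ⟨a', ha'⟩ := hga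
    refine ⟨a' * t + B, ?_⟩
    have : (g : ℤ) - α * a = a * (A - α) + b * B := by rw [hbez]; ring
    rw [this, ht, ha', ← hkg]; ring
  obtain ⟨β, hβ⟩ := hdvd
  refine ⟨α, β, by linarith [hβ], ?_, ?_⟩
  · rw [abs_of_nonneg hα0]
    have : (k : ℤ) ≤ b := by exact_mod_cast Nat.div_le_self b g
    linarith
  · have hβb : β * b = g - α * a := by linarith [hβ]
    have h1 : β * b ≤ a * b := by
      have : (g : ℤ) ≤ a * b := by
        have := Nat.le_of_dvd ha (Nat.gcd_dvd_left a b)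
        have hb1 : (1 : ℤ) ≤ b := by exact_mod_cast hb
        nlinarith [this, (Nat.cast_le (α := ℤ)).mpr this]
      nlinarith [mul_nonneg hα0 (by positivity : (0:ℤ) ≤ (a:ℤ))]
    have h2 : -(a * b : ℤ) ≤ β * b := by
      have hαb : α ≤ b := by
        have : (k : ℤ) ≤ b := by exact_mod_cast Nat.div_le_self b g
        linarith
      have : α * a ≤ b * a := by
        apply mul_le_mul_of_nonneg_right hαb (by positivity)
      nlinarith [hg, (by positivity : (0:ℤ) ≤ (g:ℤ))]
    rw [abs_le]
    constructor
    · nlinarith [hb, (by exact_mod_cast hb : (0:ℤ) < (b:ℤ))]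
    · nlinarith [(by exact_mod_cast hb : (0:ℤ) < (b:ℤ))]



lemma bezout_finset {ι : Type*} [DecidableEq ι] (u : ι → ℕ) {s : Finset ι}
    (hs : s.Nonempty) (hu : ∀ i ∈ s, 0 < u i) :
    ∃ x : ι → ℤ, (∑ i ∈ s, x i * u i) = ((s.gcd u : ℕ) : ℤ) ∧
      ∀ i ∈ s, |x i| ≤ ((∏ i ∈ s, u i : ℕ) : ℤ) := by
  induction hs using Finset.Nonempty.cons_induction with
  | singleton a =>
    refine ⟨fun i => if i = a then 1 else 0, ?_, ?_⟩
    · simp [Finset.gcd_singleton]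
    · intro i hi
      simp only [Finset.mem_singleton] at hi
      subst hi
      simp only [if_pos rfl, Finset.prod_singleton, abs_one]
      exact_mod_cast hu i (Finset.mem_singleton_self i)
  | cons a s h hs ih =>
    have hua : 0 < u a := hu a (Finset.mem_cons_self a s)
    have hus : ∀ i ∈ s, 0 < u i := fun i hi => hu i (Finset.mem_cons_of_mem hi)
    obtain ⟨i0, hi0⟩ := hs
    have hg' : 0 < s.gcd u := Nat.pos_of_ne_zero
      (fun h0 => (hus i0 hi0).ne' (Finset.gcd_eq_zero_iff.mp h0 i0 hi0))
    obtain ⟨y, hy1, hy2⟩ := ih hus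
    obtain ⟨α, β, hαβ, hα, hβ⟩ := bezout_bdd (u a) (s.gcd u) hua hg'
    refine ⟨fun i => if i = a then α else β * y i, ?_, ?_⟩
    · rw [Finset.sum_cons]
      dsimp only
      have hcg : ∀ i ∈ s, (if i = a then α else β * y i) * (u i : ℤ) = β * (y i * u i) := by
        intro i hi
        rw [if_neg (by rintro rfl; exact h hi)]
        ring
      rw [Finset.sum_congr rfl hcg, ← Finset.mul_sum, hy1, if_pos rfl]
      rw [Finset.cons_eq_insert, Finset.gcd_insert]
      have hng : GCDMonoid.gcd (u a) (s.gcd u) = Nat.gcd (u a) (s.gcd u) := rfl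
      rw [hng, ← hαβ]
    · intro i hi
      rw [Finset.prod_cons]
      dsimp only
      have hPpos : (0:ℤ) ≤ ((∏ i ∈ s, u i : ℕ) : ℤ) := by positivity
      rcases Finset.mem_cons.mp hi with rfl | hi'
      · rw [if_pos rfl]
        have h2 : s.gcd u ≤ u i0 := Nat.le_of_dvd (hus i0 hi0) (Finset.gcd_dvd hi0)
        have h3 : u i0 ≤ ∏ i ∈ s, u i :=
          Finset.single_le_prod' (fun j hj => (hus j hj)) hi0
        have h1 : ((s.gcd u : ℕ) : ℤ) ≤ ((∏ i ∈ s, u i : ℕ) : ℤ) := by exact_mod_cast h2.trans h3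
        have h4 : (1:ℤ) ≤ (u i : ℤ) := by exact_mod_cast hua
        push_cast at h1 ⊢
        nlinarith [hα]
      · rw [if_neg (by rintro rfl; exact h hi')]
        rw [abs_mul]
        have := mul_le_mul hβ (hy2 i hi') (abs_nonneg _) (by positivity : (0:ℤ) ≤ (u a : ℤ))
        push_cast at this ⊢
        linarith


lemma arith1 (p T : ℕ) (hp : 1 ≤ p) :
    (p+1) * ((p^2+1)*T) ≤ p * ((p+1)^2 * T + 1) := by
  obtain ⟨q, rfl⟩ := Nat.exists_eq_add_of_le hp
  nlinarith [Nat.zero_le (q*q*T), Nat.zero_le (q*T)]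


lemma construct {m : ℕ} (N : ℕ) (u : Fin m → ℕ) (hm : 0 < m) (hu : ∀ i, 0 < u i)
    (hdvd : Finset.univ.gcd u ∣ N) :
    ∀ p : ℕ, 1 ≤ p → ∀ a : Fin m → ℕ,
      (∑ i, a i * u i = p * N) →
      (∀ i, p ^ 2 * (∑ j, u j) * (∏ j, u j) < a i) →
      ∃ C : Fin p → Fin m → ℕ,
        (∀ j, ∑ s, C s j = a j) ∧ (∀ s, ∑ j, C s j * u j = N) := by
  have hFm : Nonempty (Fin m) := ⟨⟨0, hm⟩⟩
  set S : ℕ := ∑ j, u j with hSdef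
  set P : ℕ := ∏ j, u j with hPdef
  have hS : 0 < S := Finset.sum_pos (fun i _ => hu i) Finset.univ_nonempty
  have hP : 0 < P := Finset.prod_pos (fun i _ => hu i)
  have hg : 0 < Finset.univ.gcd u := Nat.pos_of_ne_zero (fun h0 =>
    (hu (Classical.arbitrary (Fin m))).ne'
      (Finset.gcd_eq_zero_iff.mp h0 _ (Finset.mem_univ _)))
  intro p hp
  induction p, hp using Nat.le_induction with
  | base =>
    intro a hsum hbig
    exact ⟨fun _ => a, fun j => by simp, fun s => by simpa using hsum⟩
  | succ p hp ih =>
    intro a hsum hbig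
    have hq : 0 < p + 1 := Nat.succ_pos p
    set b : Fin m → ℕ := fun j => a j / (p + 1) with hbdef
    have hqb : ∀ j, (p + 1) * b j ≤ a j := fun j => by
      rw [hbdef]; exact Nat.mul_div_le (a j) (p+1)
    have hbN : ∑ j, b j * u j ≤ N := by
      have h1 : (p+1) * (∑ j, b j * u j) ≤ (p+1) * N := by
        rw [← hsum, Finset.mul_sum]
        apply Finset.sum_le_sum
        intro j _
        calc (p+1) * (b j * u j) = ((p+1) * b j) * u j := by ring
          _ ≤ a j * u j := Nat.mul_le_mul_right _ (hqb j)
      exact Nat.le_of_mul_le_mul_left h1 hq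
    set D : ℕ := N - ∑ j, b j * u j with hDdef
    have hDsum : ∑ j, b j * u j + D = N := by rw [hDdef]; omega
    have hqD : (p+1) * D ≤ p * S := by
      have key : (p+1) * N ≤ (p+1) * (∑ j, b j * u j) + p * S := by
        rw [← hsum, Finset.mul_sum, hSdef, Finset.mul_sum, ← Finset.sum_add_distrib]
        apply Finset.sum_le_sum
        intro j _
        have h2 : a j ≤ (p+1) * (a j / (p+1)) + p := by
          have e1 := Nat.div_add_mod (a j) (p+1)
          have e2 := Nat.mod_lt (a j) hq
          omega
        calc a j * u j ≤ ((p+1) * b j + p) * u j := Nat.mul_le_mul_right _ h2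
          _ = (p+1) * (b j * u j) + p * u j := by ring
      have h3 : (p+1) * D = (p+1) * N - (p+1) * (∑ j, b j * u j) := by
        rw [hDdef, Nat.mul_sub]
      omega
    set g : ℕ := Finset.univ.gcd u with hgdef
    have hgD : g ∣ D := by
      rw [hDdef]
      exact Nat.dvd_sub hdvd
        (Finset.dvd_sum fun j _ => ((Finset.gcd_dvd (Finset.mem_univ j)).mul_left (b j)))
    set e : ℕ := D / g with hedef
    have he : g * e = D := Nat.mul_div_cancel' hgD
    have he' : e ≤ D := Nat.div_le_self D g
    obtain ⟨x, hx1, hx2⟩ := bezout_finset u Finset.univ_nonempty (fun i _ => hu i)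
    have hPD : P * D < S * P := by
      have h5 : (p+1) * (P * D) ≤ p * (S * P) := by
        calc (p+1) * (P * D) = P * ((p+1) * D) := by ring
          _ ≤ P * (p * S) := Nat.mul_le_mul_left _ hqD
          _ = p * (S * P) := by ring
      have h6 : p * (S * P) < (p+1) * (S * P) := by
        have hSP : 0 < S * P := Nat.mul_pos hS hP
        nlinarith
      exact lt_of_mul_lt_mul_left (lt_of_le_of_lt h5 h6) (Nat.zero_le _)
    have hb_lb : ∀ j, (p+1) * S * P ≤ b j := by
      intro j
      rw [hbdef]
      rw [Nat.le_div_iff_mul_le hq]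
      have := hbig j
      nlinarith
    -- the integer row vector
    have hδ : ∀ j, |x j * e| ≤ ((P * D : ℕ) : ℤ) := by
      intro j
      rw [abs_mul]
      have h7 : |(e : ℤ)| = (e : ℤ) := abs_of_nonneg (by positivity)
      push_cast
      calc |x j| * |(e:ℤ)| ≤ (P : ℤ) * (e : ℤ) := by
            rw [h7]
            exact mul_le_mul (hx2 j (Finset.mem_univ j)) (le_refl _) (by positivity) (by positivity)
        _ ≤ (P : ℤ) * (D : ℤ) := by
            have : (e:ℤ) ≤ (D:ℤ) := by exact_mod_cast he'
            nlinarith [(by positivity : (0:ℤ) ≤ (P:ℤ))]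
    set cZ : Fin m → ℤ := fun j => (b j : ℤ) + x j * e with hcZdef
    have hcZ0 : ∀ j, 0 ≤ cZ j := by
      intro j
      rw [hcZdef]
      have h8 : ((P * D : ℕ) : ℤ) ≤ ((b j : ℕ) : ℤ) := by
        have : P * D ≤ b j := le_trans (le_of_lt hPD) (by
          calc S * P ≤ (p+1) * S * P :=
                Nat.mul_le_mul_right P (Nat.le_mul_of_pos_left S hq)
            _ ≤ b j := hb_lb j)
        exact_mod_cast this
      have := hδ j
      have := abs_le.mp this
      dsimp only
      linarith
    set c : Fin m → ℕ := fun j => (cZ j).toNat with hcdef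
    have hc : ∀ j, (c j : ℤ) = cZ j := fun j => Int.toNat_of_nonneg (hcZ0 j)
    have hcu : ∑ j, c j * u j = N := by
      have hZ : ((∑ j, c j * u j : ℕ) : ℤ) = (N : ℤ) := by
        push_cast
        calc ∑ j, (c j : ℤ) * (u j : ℤ)
            = ∑ j, ((b j : ℤ) * u j + (x j * u j) * e) := by
              apply Finset.sum_congr rfl
              intro j _
              rw [hc j, hcZdef]
              ring
          _ = (∑ j, (b j : ℤ) * u j) + (∑ j, x j * (u j:ℤ)) * e := by
              rw [Finset.sum_add_distrib, Finset.sum_mul]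
          _ = (∑ j, (b j : ℤ) * u j) + (g : ℤ) * e := by rw [hx1]
          _ = (N : ℤ) := by
              have : ((∑ j, b j * u j : ℕ) : ℤ) + ((g * e : ℕ) : ℤ) = (N : ℤ) := by
                rw [he]; exact_mod_cast congrArg (Nat.cast : ℕ → ℤ) hDsum
              push_cast at this
              linarith
      exact_mod_cast hZ
    have hchi : ∀ j, c j ≤ b j + (S * P - 1) := by
      intro j
      have h9 : cZ j ≤ (b j : ℤ) + ((P * D : ℕ) : ℤ) := by
        rw [hcZdef]
        have := (abs_le.mp (hδ j)).2
        dsimp only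
        linarith
      have h10 : ((P * D : ℕ) : ℤ) ≤ ((S * P - 1 : ℕ) : ℤ) := by
        have : P * D ≤ S * P - 1 := by omega
        exact_mod_cast this
      have : (c j : ℤ) ≤ ((b j + (S * P - 1) : ℕ) : ℤ) := by
        rw [hc j]; push_cast; push_cast at h9 h10; linarith
      exact_mod_cast this
    have hgap : ∀ j, b j + (p^2 * (S*P) + S*P) ≤ a j := by
      intro j
      have h11 : (p+1) * ((p^2+1)*(S*P)) ≤ p * a j := by
        have h12 : p * ((p+1)^2 * (S*P) + 1) ≤ p * a j := by
          refine Nat.mul_le_mul_left p ?_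
          have := hbig j
          have : (p+1)^2 * (S*P) = (p+1)^2 * S * P := by ring
          omega
        exact le_trans (arith1 p (S*P) hp) h12
      have h13 : (p+1) * (b j + (p^2 * (S*P) + S*P)) ≤ (p+1) * a j := by
        have : (p+1) * (b j + (p^2 * (S*P) + S*P))
            = (p+1) * b j + (p+1) * ((p^2+1)*(S*P)) := by ring
        rw [this]
        calc (p+1) * b j + (p+1) * ((p^2+1)*(S*P)) ≤ a j + p * a j :=
              Nat.add_le_add (hqb j) h11
          _ = (p+1) * a j := by ring
      exact Nat.le_of_mul_le_mul_left h13 hq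
    have hc_lt : ∀ j, c j + p^2 * (S*P) < a j := by
      intro j
      have := hchi j
      have := hgap j
      have hSP1 : 1 ≤ S * P := Nat.mul_pos hS hP
      omega
    have hc_le : ∀ j, c j ≤ a j := fun j => by have := hc_lt j; omega
    set a' : Fin m → ℕ := fun j => a j - c j with ha'def
    have ha'sum : ∑ i, a' i * u i = p * N := by
      have h14 : ∑ j, a' j * u j + ∑ j, c j * u j = ∑ j, a j * u j := by
        rw [← Finset.sum_add_distrib]
        apply Finset.sum_congr rfl
        intro j _
        rw [ha'def]
        have := hc_le j
        dsimp only
        rw [← Nat.add_mul, Nat.sub_add_cancel this]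
      rw [hcu, hsum] at h14
      have : (p+1) * N = p * N + N := by ring
      omega
    have ha'big : ∀ i, p ^ 2 * S * P < a' i := by
      intro i
      have := hc_lt i
      rw [ha'def]
      dsimp only
      have := hc_le i
      have h15 : p^2 * S * P = p^2 * (S * P) := by ring
      omega
    obtain ⟨C', hC'col, hC'row⟩ := ih a' ha'sum ha'big
    refine ⟨Fin.cons c C', ?_, ?_⟩
    · intro j
      rw [Fin.sum_univ_succ]
      simp only [Fin.cons_zero, Fin.cons_succ]
      rw [hC'col j]
      rw [ha'def]
      have := hc_le j
      dsimp only
      omega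
    · intro s
      refine Fin.cases ?_ ?_ s
      · simpa [Fin.cons_zero] using hcu
      · intro i
        simpa [Fin.cons_succ] using hC'row i

/-- `a` is `(N, u)`-rearrangeable: there is a `p × m` matrix `C` of nonnegative
integers whose column sums match `a` and whose rows all have `u`-weighted sum `N`. -/
def IsRearrangeable {m : ℕ} (N : ℕ) (u a : Fin m → ℕ) : Prop :=
  ∃ p : ℕ, 1 ≤ p ∧ ∃ C : Fin p → Fin m → ℕ,
    (∀ j, ∑ s, C s j = a j) ∧ (∀ s, ∑ j, C s j * u j = N)

theorem stmt0 {m N p : ℕ} (hm : 1 ≤ m) (hN : 1 ≤ N) (hp : 1 ≤ p)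
    (a u : Fin m → ℕ) (ha : ∀ i, 0 < a i) (hu : ∀ i, 0 < u i)
    (hsum : ∑ i, a i * u i = p * N)
    (hbig : ∀ i, a i > p ^ 2 * (∑ j, u j) * (∏ j, u j)) :
    (IsRearrangeable N u a ↔ Finset.univ.gcd u ∣ N) ∧
    (Finset.univ.gcd u ∣ N →
      ∃ C : Fin p → Fin m → ℕ,
        (∀ j, ∑ s, C s j = a j) ∧ (∀ s, ∑ j, C s j * u j = N)) := by
  have fwd : IsRearrangeable N u a → Finset.univ.gcd u ∣ N := by
    rintro ⟨p', hp', C, hcol, hrow⟩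
    have : Nonempty (Fin p') := ⟨⟨0, hp'⟩⟩
    obtain ⟨s⟩ := this
    rw [← hrow s]
    exact Finset.dvd_sum fun j _ =>
      (Finset.gcd_dvd (Finset.mem_univ j)).mul_left (C s j)
  refine ⟨⟨fwd, fun h => ?_⟩, fun h => ?_⟩
  · obtain ⟨C, h1, h2⟩ := construct N u hm hu h p hp a hsum hbig
    exact ⟨p, hp, C, h1, h2⟩
  · exact construct N u hm hu h p hp a hsum hbig
end

section
/- Let A be an m×m primitive matrix with nonnegative integer entries, let N ≥ 1 be an integer, let u = (u₁,…,u_m) be a vector of positive integers with A·u = N·u, and set g = gcd(u₁,…,u_m). Then there exists an integer k ≥ 1 such that every row of A^k is (g·N^k, u)-rearrangeable; moreover, for each i, the rearranging matrix for the i-th row of A^k can be chosen with exactly uᵢ/g rows. -/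
lemma finset_bezout {ι : Type*} [DecidableEq ι] (s : Finset ι) (f : ι → ℕ) :
    ∃ z : ι → ℤ, ∑ j ∈ s, z j * f j = ((s.gcd f : ℕ) : ℤ) := by
  classical
  induction s using Finset.induction_on with
  | empty => exact ⟨0, by simp⟩
  | @insert a s ha ih =>
    obtain ⟨z, hz⟩ := ih
    refine ⟨fun j => if j = a then Nat.gcdA (f a) (s.gcd f) else Nat.gcdB (f a) (s.gcd f) * z j, ?_⟩
    rw [Finset.sum_insert ha, Finset.gcd_insert]
    simp only [if_pos rfl]
    have h1 : ∑ j ∈ s, (if j = a then Nat.gcdA (f a) (s.gcd f) else Nat.gcdB (f a) (s.gcd f) * z j) * (f j : ℤ)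
        = Nat.gcdB (f a) (s.gcd f) * ∑ j ∈ s, z j * f j := by
      rw [Finset.mul_sum]
      refine Finset.sum_congr rfl fun j hj => ?_
      rw [if_neg (by rintro rfl; exact ha hj)]
      ring
    rw [h1, hz]
    have hb := Nat.gcd_eq_gcd_ab (f a) (s.gcd f)
    rw [gcd_eq_nat_gcd, hb]
    simp only [if_true]
    ring


lemma partition_lemma {m : ℕ} (v : Fin m → ℕ) (z : Fin m → ℤ)
    (hz : ∑ j, z j * v j = 1) :
    ∀ p : ℕ, 0 < p → ∀ (a : Fin m → ℕ) (S : ℕ),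
      (∑ j, a j * v j = p * S) →
      (∀ j, ((∑ j, v j) * (Finset.univ.sup fun j => (z j).natAbs)) * ((p - 1) * (p + 2)) ≤ a j) →
      ∃ C : Fin p → Fin m → ℕ, (∀ j, ∑ s, C s j = a j) ∧ (∀ s, ∑ j, C s j * v j = S) := by
  set V := ∑ j, v j with hV
  set Z := Finset.univ.sup fun j => (z j).natAbs with hZ
  intro p
  induction p with
  | zero => omega
  | succ q ih =>
    intro _ a S hsum hbig
    rcases Nat.eq_zero_or_pos q with rfl | hq
    · -- p = 1
      refine ⟨fun _ => a, fun j => ?_, fun s => ?_⟩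
      · simp
      · simpa using hsum
    obtain ⟨r, rfl⟩ : ∃ r, q = r + 1 := ⟨q - 1, by omega⟩
    have hzZ : ∀ j, (z j).natAbs ≤ Z := fun j => by rw [hZ]; exact Finset.le_sup (f := fun j => (z j).natAbs) (Finset.mem_univ j)
    have hbigr : ∀ j, V * Z * ((r + 1) * (r + 4)) ≤ a j := by
      intro j
      have := hbig j
      simpa using this
    set b : Fin m → ℕ := fun j => a j / (r + 2) with hb
    have hbq : ∀ j, (r + 2) * b j ≤ a j := fun j => Nat.mul_div_le (a j) (r + 2)
    set T := ∑ j, b j * v j with hT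
    set E := ∑ j, (a j % (r + 2)) * v j with hE
    have h2 : E + (r + 2) * T = (r + 2) * S := by
      rw [hE, hT, Finset.mul_sum, ← Finset.sum_add_distrib, ← hsum]
      refine Finset.sum_congr rfl fun j _ => ?_
      rw [← mul_assoc, ← add_mul]
      congr 1
      show a j % (r + 2) + (r + 2) * (a j / (r + 2)) = a j
      exact Nat.mod_add_div (a j) (r + 2)
    have hTS : T ≤ S :=
      Nat.le_of_mul_le_mul_left (h2 ▸ Nat.le_add_left _ _) (by omega)
    have hEv : E ≤ (r + 1) * V := by
      rw [hE, hV, Finset.mul_sum]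
      refine Finset.sum_le_sum fun j _ => Nat.mul_le_mul_right _ ?_
      have := Nat.mod_lt (a j) (y := r + 2) (by omega)
      omega
    set d := S - T with hd
    have hdT : T + d = S := by omega
    have hdv : d ≤ V := by
      have hmul : (r + 2) * S ≤ (r + 2) * (T + V) := by nlinarith [h2, hEv]
      have := Nat.le_of_mul_le_mul_left hmul (by omega : 0 < r + 2)
      omega
    have hdW : d * Z ≤ V * Z := Nat.mul_le_mul_right _ hdv
    have hWb : ∀ j, V * Z ≤ b j := by
      intro j
      have h1 : V * Z * (r + 2) ≤ a j :=
        le_trans (mul_le_mul_right (by nlinarith : r + 2 ≤ (r + 1) * (r + 4)) (V * Z)) (hbigr j)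
      rw [hb]
      exact (Nat.le_div_iff_mul_le (by omega)).mpr h1
    have hdz1 : ∀ j, (d : ℤ) * z j ≤ (V * Z : ℕ) := by
      intro j
      calc (d : ℤ) * z j ≤ (d : ℤ) * (z j).natAbs := by
            refine mul_le_mul_of_nonneg_left ?_ (by positivity)
            exact Int.le_natAbs
        _ ≤ ((d * Z : ℕ) : ℤ) := by
            push_cast
            exact mul_le_mul_of_nonneg_left (by rw [Int.abs_eq_natAbs]; exact_mod_cast hzZ j) (by positivity)
        _ ≤ ((V * Z : ℕ) : ℤ) := by exact_mod_cast hdW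
    have hdz2 : ∀ j, -((V * Z : ℕ) : ℤ) ≤ (d : ℤ) * z j := by
      intro j
      calc -((V * Z : ℕ) : ℤ) ≤ -((d * Z : ℕ) : ℤ) := by
            simp only [neg_le_neg_iff]
            exact_mod_cast hdW
        _ ≤ (d : ℤ) * z j := by
            push_cast
            have h1 : -((Z : ℤ)) ≤ z j := by
              have := hzZ j
              have h2 : |z j| ≤ (Z : ℤ) := by
                rw [Int.abs_eq_natAbs]; exact_mod_cast this
              linarith [neg_abs_le (z j)]
            nlinarith [Int.natCast_nonneg d]
    have hx0 : ∀ j, (0 : ℤ) ≤ (b j : ℤ) + d * z j := by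
      intro j
      have h1 := hdz2 j
      have h2 : ((V * Z : ℕ) : ℤ) ≤ (b j : ℤ) := by exact_mod_cast hWb j
      linarith
    set X : Fin m → ℕ := fun j => ((b j : ℤ) + d * z j).toNat with hX
    have hXZ : ∀ j, (X j : ℤ) = (b j : ℤ) + d * z j := fun j => Int.toNat_of_nonneg (hx0 j)
    have hXrow : ∑ j, X j * v j = S := by
      have hcast : (∑ j, (X j : ℤ) * (v j : ℤ)) = (S : ℤ) := by
        calc ∑ j, (X j : ℤ) * (v j : ℤ)
            = ∑ j, ((b j : ℤ) * v j + (d : ℤ) * (z j * v j)) := by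
              refine Finset.sum_congr rfl fun j _ => ?_
              rw [hXZ j]; ring
          _ = (∑ j, (b j : ℤ) * v j) + (d : ℤ) * ∑ j, z j * v j := by
              rw [Finset.sum_add_distrib, Finset.mul_sum]
          _ = (T : ℤ) + d := by rw [hz, hT]; push_cast; ring
          _ = (S : ℤ) := by exact_mod_cast hdT
      exact_mod_cast hcast
    have hXub : ∀ j, X j ≤ b j + V * Z := by
      intro j
      have : (X j : ℤ) ≤ (b j : ℤ) + (V * Z : ℕ) := by rw [hXZ j]; linarith [hdz1 j]
      exact_mod_cast this
    have hXa : ∀ j, X j + V * Z * (r * (r + 3)) ≤ a j := by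
      intro j
      have h1 := hXub j
      have h2 := hbq j
      have h3 := hbigr j
      have key : (r + 2) * (b j + V * Z + V * Z * (r * (r + 3))) ≤ (r + 2) * a j := by
        nlinarith [h2, mul_le_mul_right h3 (r + 1)]
      have h4 := Nat.le_of_mul_le_mul_left key (by omega : 0 < r + 2)
      omega
    have hXle : ∀ j, X j ≤ a j := fun j => le_trans (Nat.le_add_right _ _) (hXa j)
    have hsum' : ∑ j, (a j - X j) * v j = (r + 1) * S := by
      have hcast : (∑ j, ((a j - X j : ℕ) : ℤ) * (v j : ℤ)) = ((r + 1 : ℕ) : ℤ) * S := by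
        calc ∑ j, ((a j - X j : ℕ) : ℤ) * (v j : ℤ)
            = ∑ j, ((a j : ℤ) * v j - (X j : ℤ) * v j) := by
              refine Finset.sum_congr rfl fun j _ => ?_
              rw [Nat.cast_sub (hXle j)]; ring
          _ = (∑ j, (a j : ℤ) * v j) - ∑ j, (X j : ℤ) * v j := Finset.sum_sub_distrib _ _
          _ = ((r + 2 : ℕ) : ℤ) * S - S := by
              rw [show (∑ j, (a j : ℤ) * v j) = ((r + 2 : ℕ) : ℤ) * S by exact_mod_cast hsum]
              rw [show (∑ j, (X j : ℤ) * v j) = (S : ℤ) by exact_mod_cast hXrow]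
          _ = ((r + 1 : ℕ) : ℤ) * S := by push_cast; ring
      exact_mod_cast hcast
    have hbig' : ∀ j, V * Z * ((r + 1 - 1) * (r + 1 + 2)) ≤ a j - X j := by
      intro j
      have h := hXa j
      rw [show r + 1 - 1 = r from by omega, show r + 1 + 2 = r + 3 from by omega]
      omega
    obtain ⟨C', hC'col, hC'row⟩ := ih (by omega) (fun j => a j - X j) S hsum' hbig'
    refine ⟨Fin.cons X C', fun j => ?_, fun s => ?_⟩
    · rw [Fin.sum_univ_succ]
      simp only [Fin.cons_zero, Fin.cons_succ]
      have := hC'col j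
      have := hXle j
      omega
    · refine Fin.cases ?_ ?_ s
      · simpa using hXrow
      · intro i
        simpa using hC'row i


lemma pow_entry_growth {m : ℕ} (A : Matrix (Fin m) (Fin m) ℕ) (n : ℕ)
    (hpos : ∀ i j, 0 < (A ^ n) i j) :
    ∀ t, ∀ i j, m ^ t ≤ (A ^ (n * (t + 1))) i j := by
  intro t
  induction t with
  | zero => intro i j; simpa using Nat.one_le_iff_ne_zero.mpr (hpos i j).ne'
  | succ t ih =>
    intro i j
    have hsplit : A ^ (n * (t + 2)) = A ^ (n * (t + 1)) * A ^ n := by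
      rw [← pow_add]; ring_nf
    rw [hsplit, Matrix.mul_apply]
    calc m ^ (t + 1) = ∑ _l : Fin m, m ^ t := by
          rw [Finset.sum_const, Finset.card_univ, Fintype.card_fin, smul_eq_mul, pow_succ]; ring
      _ ≤ ∑ l, (A ^ (n * (t + 1))) i l * (A ^ n) l j := by
          refine Finset.sum_le_sum fun l _ => ?_
          calc m ^ t = m ^ t * 1 := (mul_one _).symm
            _ ≤ (A ^ (n * (t + 1))) i l * (A ^ n) l j :=
              Nat.mul_le_mul (ih i l) (hpos l j)

lemma eig_pow {m : ℕ} (A : Matrix (Fin m) (Fin m) ℕ) (N : ℕ) (u : Fin m → ℕ)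
    (heig : A.mulVec u = N • u) :
    ∀ k i, ∑ j, (A ^ k) i j * u j = N ^ k * u i := by
  intro k
  induction k with
  | zero => intro i; simp [Matrix.one_apply]
  | succ k ih =>
    intro i
    have h1 : (A ^ (k + 1)).mulVec u = A.mulVec ((A ^ k).mulVec u) := by
      rw [pow_succ', Matrix.mulVec_mulVec]
    have h2 : ∀ i', ((A ^ k).mulVec u) i' = N ^ k * u i' := fun i' => by
      simpa [Matrix.mulVec, dotProduct] using ih i'
    have h3 : (A ^ k).mulVec u = (N ^ k) • u := funext fun i' => by
      simpa using h2 i'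
    calc ∑ j, (A ^ (k + 1)) i j * u j = ((A ^ (k + 1)).mulVec u) i := by
          simp [Matrix.mulVec, dotProduct]
      _ = (A.mulVec ((N ^ k) • u)) i := by rw [h1, h3]
      _ = ((N ^ k) • A.mulVec u) i := by rw [Matrix.mulVec_smul]
      _ = N ^ k * (N * u i) := by rw [heig]; simp [mul_comm]
      _ = N ^ (k + 1) * u i := by ring

/-- `A` is primitive: some power of `A` has all entries positive. -/
def Matrix.IsPrimitiveNat {m : ℕ} (A : Matrix (Fin m) (Fin m) ℕ) : Prop :=
  ∃ n : ℕ, 1 ≤ n ∧ ∀ i j, 0 < (A ^ n) i j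

theorem stmt1 {m : ℕ} (hm : 1 ≤ m) (A : Matrix (Fin m) (Fin m) ℕ)
    (hA : A.IsPrimitiveNat) (N : ℕ) (hN : 1 ≤ N)
    (u : Fin m → ℕ) (hu : ∀ i, 0 < u i)
    (heig : A.mulVec u = N • u) :
    ∃ k : ℕ, 1 ≤ k ∧ ∀ i : Fin m,
      ∃ C : Fin (u i / Finset.univ.gcd u) → Fin m → ℕ,
        (∀ j, ∑ s, C s j = (A ^ k) i j) ∧
        (∀ s, ∑ j, C s j * u j = Finset.univ.gcd u * N ^ k) := by
  classical
  obtain ⟨n, hn1, hnpos⟩ := hA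
  set g := Finset.univ.gcd u with hg
  have hgd : ∀ j, g ∣ u j := fun j => Finset.gcd_dvd (Finset.mem_univ j)
  have hg0 : 0 < g := by
    rcases Nat.eq_zero_or_pos g with h0 | h
    · have h1 := Nat.eq_zero_of_zero_dvd (h0 ▸ hgd ⟨0, hm⟩)
      have := hu ⟨0, hm⟩
      omega
    · exact h
  set v : Fin m → ℕ := fun j => u j / g with hv
  have hgv : ∀ j, g * v j = u j := fun j => Nat.mul_div_cancel' (hgd j)
  have hgcdv : Finset.univ.gcd v = 1 := by
    have h1 : g * Finset.univ.gcd v ∣ g * 1 := by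
      rw [mul_one]
      refine Finset.dvd_gcd fun j _ => ?_
      have h2 : g * Finset.univ.gcd v ∣ g * v j :=
        mul_dvd_mul_left g (Finset.gcd_dvd (Finset.mem_univ j))
      rwa [hgv] at h2
    have h3 := (mul_dvd_mul_iff_left (by omega : g ≠ 0)).mp h1
    exact Nat.dvd_one.mp h3
  obtain ⟨z, hz⟩ := finset_bezout Finset.univ v
  rw [hgcdv] at hz
  push_cast at hz
  set Z := Finset.univ.sup fun j => (z j).natAbs with hZ
  set V := ∑ j, v j with hV
  set P := Finset.univ.sup fun i => u i / g with hP
  set B := V * Z * ((P - 1) * (P + 2)) with hB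
  refine ⟨n * (B + 1), Nat.mul_pos hn1 (Nat.succ_pos B), fun i => ?_⟩
  set k := n * (B + 1) with hk
  set p := u i / g with hp
  have hppos : 0 < p := Nat.div_pos (Nat.le_of_dvd (hu i) (hgd i)) hg0
  have hgp : g * p = u i := Nat.mul_div_cancel' (hgd i)
  have hrow : ∑ j, (A ^ k) i j * v j = p * N ^ k := by
    have h1 := eig_pow A N u heig k i
    have h2 : g * (∑ j, (A ^ k) i j * v j) = g * (p * N ^ k) := by
      rw [Finset.mul_sum]
      calc ∑ j, g * ((A ^ k) i j * v j) = ∑ j, (A ^ k) i j * u j := by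
            refine Finset.sum_congr rfl fun j _ => ?_
            rw [← hgv j]; ring
        _ = N ^ k * u i := h1
        _ = g * (p * N ^ k) := by rw [← hgp]; ring
    exact Nat.eq_of_mul_eq_mul_left hg0 h2
  have hbig : ∀ j, V * Z * ((p - 1) * (p + 2)) ≤ (A ^ k) i j := by
    intro j
    rcases Nat.lt_or_ge p 2 with h | h
    · have hp1 : p = 1 := by omega
      simp [hp1]
    · have hm2 : 2 ≤ m := by
        by_contra hc
        have hm1 : m = 1 := by omega
        subst hm1
        have hdvd : u i ∣ g := by
          rw [hg]
          exact Finset.dvd_gcd fun j' _ => by rw [Subsingleton.elim j' i]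
        have h3 : g = u i := Nat.dvd_antisymm (hgd i) hdvd
        rw [hp, h3, Nat.div_self (hu i)] at h
        omega
      have hpP : p ≤ P := by
        rw [hp, hP]
        exact Finset.le_sup (f := fun i => u i / g) (Finset.mem_univ i)
      have hBi : V * Z * ((p - 1) * (p + 2)) ≤ B := by
        rw [hB]
        exact mul_le_mul_right (Nat.mul_le_mul (by omega) (by omega)) (V * Z)
      have hgrow := pow_entry_growth A n hnpos B i j
      rw [← hk] at hgrow
      have h2B : B < 2 ^ B := Nat.lt_two_pow_self (n := B)
      have h2m : 2 ^ B ≤ m ^ B := Nat.pow_le_pow_left hm2 B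
      omega
  obtain ⟨C, hCcol, hCrow⟩ :=
    partition_lemma v z hz p hppos (fun j => (A ^ k) i j) (N ^ k) hrow hbig
  refine ⟨C, hCcol, fun s => ?_⟩
  have h1 := hCrow s
  calc ∑ j, C s j * u j = ∑ j, g * (C s j * v j) := by
        refine Finset.sum_congr rfl fun j _ => ?_
        rw [← hgv j]; ring
    _ = g * N ^ k := by rw [← Finset.mul_sum, h1]
end

section
/- Let A be an m×m primitive matrix with nonnegative integer entries, let N ≥ 1 be an integer, let u = (u₁,…,u_m) be a vector of positive integers with (A·u)ᵢ ≤ N·uᵢ for every i, and set g = gcd(u₁,…,u_m). Then there exists an integer k ≥ 1 such that every row of A^k is (g·N^k, u)-quasi-rearrangeable; moreover, for each i, the rearranging matrix for the i-th row of A^k can be chosen with exactly uᵢ/g rows. -/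
lemma bezout_finset_s2 {ι : Type*} [DecidableEq ι] (v : ι → ℕ) (s : Finset ι) :
    ∃ z : ι → ℤ, ∑ j ∈ s, z j * (v j : ℤ) = ((Finset.gcd s v : ℕ) : ℤ) := by
  induction s using Finset.induction_on with
  | empty => exact ⟨0, by simp⟩
  | @insert a s ha ih =>
    obtain ⟨z, hz⟩ := ih
    refine ⟨fun j => if j = a then Nat.gcdA (v a) (s.gcd v) else Nat.gcdB (v a) (s.gcd v) * z j, ?_⟩
    rw [Finset.sum_insert ha, Finset.gcd_insert]
    have hne : ∀ j ∈ s, j ≠ a := fun j hj => by rintro rfl; exact ha hj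
    have hrw : ∀ j ∈ s, (if j = a then Nat.gcdA (v a) (s.gcd v) else Nat.gcdB (v a) (s.gcd v) * z j) * (v j : ℤ)
        = Nat.gcdB (v a) (s.gcd v) * (z j * (v j : ℤ)) := fun j hj => by
      rw [if_neg (hne j hj)]; ring
    rw [Finset.sum_congr rfl hrw, ← Finset.mul_sum, hz]
    simp only [eq_self_iff_true, if_true]
    have h1 : (gcd (v a) (s.gcd v) : ℕ) = Nat.gcd (v a) (s.gcd v) := rfl
    rw [h1, Nat.gcd_eq_gcd_ab (v a) (s.gcd v)]
    ring


lemma pack {m : ℕ} (v : Fin m → ℕ) (hv : ∀ j, 0 < v j)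
    (z : Fin m → ℤ) (hz : ∑ j, z j * (v j : ℤ) = 1)
    (W : ℕ) (hW : W = 1 + ((∑ j, v j) + 1) * ∑ j, (z j).natAbs) :
    ∀ (p : ℕ), 1 ≤ p → ∀ (Cap : ℕ) (l : Fin m → ℕ),
      (∑ j, l j * v j ≤ p * Cap) →
      (2 ≤ p → ∀ j, p ^ 2 * W ≤ l j) →
      ∃ C : Fin p → Fin m → ℕ, (∀ j, ∑ s, C s j = l j) ∧ (∀ s, ∑ j, C s j * v j ≤ Cap) := by
  intro p
  induction p with
  | zero => omega
  | succ q ih =>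
    intro _ Cap l htot habund
    rcases Nat.eq_zero_or_pos q with rfl | hq
    · exact ⟨fun _ => l, fun j => by simp, fun s => by simpa using htot⟩
    -- now p = q + 1 with q ≥ 1, so p ≥ 2
    set V : ℕ := ∑ j, v j with hV
    set Z : ℕ := ∑ j, (z j).natAbs with hZ
    set K : ℕ := (V + 1) * Z with hK
    have hWK : W = K + 1 := by rw [hW, hK, hV, hZ]; ring
    set p : ℕ := q + 1 with hp
    have hp0 : 0 < p := by omega
    have hp2 : 2 ≤ p := by omega
    have habund' : ∀ j, p ^ 2 * W ≤ l j := habund hp2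
    set S : ℕ := ∑ j, l j * v j with hS
    set F : ℕ := ∑ j, (l j / p) * v j with hF
    set t : ℕ := (S + q) / p with ht
    -- basic div facts
    have hd_lb : ∀ j, p * W ≤ l j / p := by
      intro j
      rw [Nat.le_div_iff_mul_le hp0]
      calc p * W * p = p ^ 2 * W := by ring
        _ ≤ l j := habund' j
    have hdp : ∀ j, p * (l j / p) ≤ l j := by
      intro j
      calc p * (l j / p) = l j / p * p := by ring
        _ ≤ l j := Nat.div_mul_le_self _ _
    have hdlt : ∀ j, l j ≤ p * (l j / p) + q := by
      intro j
      have h1 := Nat.div_add_mod (l j) p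
      have h2 : l j % p < p := Nat.mod_lt _ hp0
      omega
    have hFt : F ≤ t := by
      have h1 : F * p ≤ S := by
        rw [hF, hS, Finset.sum_mul]
        apply Finset.sum_le_sum
        intro j _
        calc l j / p * v j * p = p * (l j / p) * v j := by ring
          _ ≤ l j * v j := Nat.mul_le_mul_right _ (hdp j)
      have h2 : F ≤ S / p := (Nat.le_div_iff_mul_le hp0).2 h1
      have h3 : S / p ≤ t := by rw [ht]; exact Nat.div_le_div_right (by omega)
      omega
    have htCap : t ≤ Cap := by
      rw [ht, Nat.div_le_iff_le_mul_add_pred hp0]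
      omega
    have hSpt : S ≤ p * t := by
      have h1 := Nat.div_add_mod (S + q) p
      have h2 : (S + q) % p < p := Nat.mod_lt _ hp0
      rw [ht]
      omega
    have hδ : t - F ≤ V + 1 := by
      have htS : t ≤ S / p + 1 := by
        rw [ht]
        have h1 : (S + q) / p ≤ (S + p) / p := Nat.div_le_div_right (by omega)
        rwa [Nat.add_div_right _ hp0] at h1
      have hSpF : S / p ≤ F + V := by
        rw [Nat.div_le_iff_le_mul_add_pred hp0]
        have h1 : S ≤ p * F + p * V := by
          conv_lhs => rw [hS]
          calc ∑ j, l j * v j ≤ ∑ j, (p * (l j / p) + q) * v j := by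
                apply Finset.sum_le_sum
                intro j _
                exact Nat.mul_le_mul_right _ (hdlt j)
            _ = p * F + q * V := by
                rw [hF, hV, Finset.mul_sum, Finset.mul_sum, ← Finset.sum_add_distrib]
                apply Finset.sum_congr rfl
                intro j _
                ring
            _ ≤ p * F + p * V := by
                have : q * V ≤ p * V := Nat.mul_le_mul_right _ (by omega)
                omega
        have h2 : p * (F + V) = p * F + p * V := by ring
        omega
      omega
    set δ : ℕ := t - F with hδ_def
    -- bound on δ * |z j|
    have hzK : ∀ j, δ * (z j).natAbs ≤ K := by
      intro j
      rw [hK]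
      apply Nat.mul_le_mul
      · omega
      · rw [hZ]
        exact Finset.single_le_sum (f := fun j => (z j).natAbs) (fun _ _ => Nat.zero_le _)
          (Finset.mem_univ j)
    have habs : ∀ j, |(δ : ℤ) * z j| = ((δ * (z j).natAbs : ℕ) : ℤ) := by
      intro j
      rw [abs_mul, Nat.cast_mul, Int.abs_natCast, Int.abs_eq_natAbs]
    have hKd : ∀ j, K ≤ l j / p := by
      intro j
      have h1 := hd_lb j
      have h2 : W ≤ p * W := Nat.le_mul_of_pos_left _ hp0
      omega
    have hc_nonneg : ∀ j, 0 ≤ ((l j / p : ℕ) : ℤ) + (δ : ℤ) * z j := by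
      intro j
      have h1 : ((δ * (z j).natAbs : ℕ) : ℤ) ≤ (K : ℤ) := by exact_mod_cast hzK j
      have h2 := neg_abs_le ((δ : ℤ) * z j)
      have h3 := habs j
      have h5 : (K : ℤ) ≤ ((l j / p : ℕ) : ℤ) := by exact_mod_cast hKd j
      omega
    obtain ⟨c, hc_def⟩ : ∃ c : Fin m → ℕ,
        ∀ j, c j = (((l j / p : ℕ) : ℤ) + (δ : ℤ) * z j).toNat := ⟨_, fun _ => rfl⟩
    have hc_cast : ∀ j, (c j : ℤ) = ((l j / p : ℕ) : ℤ) + (δ : ℤ) * z j := by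
      intro j
      rw [hc_def j]
      exact Int.toNat_of_nonneg (hc_nonneg j)
    have hcK : ∀ j, c j ≤ l j / p + K := by
      intro j
      have h1 : (c j : ℤ) ≤ ((l j / p : ℕ) : ℤ) + (K : ℤ) := by
        rw [hc_cast j]
        have h3 := habs j
        have h4 := le_abs_self ((δ : ℤ) * z j)
        have h5 : ((δ * (z j).natAbs : ℕ) : ℤ) ≤ (K : ℤ) := by exact_mod_cast hzK j
        omega
      exact_mod_cast h1
    have hcl : ∀ j, c j ≤ l j := by
      intro j
      have h1 := hcK j
      have h2 := hd_lb j
      have h3 := hdp j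
      have h4 : 2 * (l j / p) ≤ p * (l j / p) := Nat.mul_le_mul_right _ hp2
      have h5 : W ≤ p * W := Nat.le_mul_of_pos_left _ hp0
      omega
    have hcv : ∑ j, c j * v j = t := by
      have h1 : ((∑ j, c j * v j : ℕ) : ℤ) = (t : ℤ) := by
        push_cast
        calc ∑ j, (c j : ℤ) * (v j : ℤ)
            = ∑ j, (((l j / p : ℕ) : ℤ) + (δ : ℤ) * z j) * (v j : ℤ) := by
              apply Finset.sum_congr rfl
              intro j _
              rw [hc_cast j]
          _ = (∑ j, ((l j / p : ℕ) : ℤ) * v j) + (δ : ℤ) * ∑ j, z j * (v j : ℤ) := by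
              rw [Finset.mul_sum, ← Finset.sum_add_distrib]
              apply Finset.sum_congr rfl
              intro j _
              ring
          _ = (F : ℤ) + (δ : ℤ) := by
              rw [hz, mul_one, hF]
              push_cast
              ring
          _ = (t : ℤ) := by
              rw [hδ_def]
              push_cast [Nat.cast_sub hFt]
              ring
      exact_mod_cast h1
    -- leftover counts
    obtain ⟨l', hl'_def⟩ : ∃ l' : Fin m → ℕ, ∀ j, l' j = l j - c j := ⟨_, fun _ => rfl⟩
    have hsum' : ∑ j, l' j * v j + t = S := by
      rw [← hcv, hS, ← Finset.sum_add_distrib]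
      apply Finset.sum_congr rfl
      intro j _
      rw [hl'_def j, ← Nat.add_mul, Nat.sub_add_cancel (hcl j)]
    have htot' : ∑ j, l' j * v j ≤ q * Cap := by
      have key : p * (∑ j, l' j * v j) ≤ p * (q * Cap) := by
        have h1 : p * (∑ j, l' j * v j) + p * t = p * S := by
          rw [← Nat.mul_add, hsum']
        have h2 : p * S = q * S + S := by rw [hp]; ring
        have h3 : q * S ≤ q * (p * Cap) := Nat.mul_le_mul_left _ htot
        have h4 : q * (p * Cap) = p * (q * Cap) := by ring
        omega
      exact Nat.le_of_mul_le_mul_left key hp0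
    have habund'' : 2 ≤ q → ∀ j, q ^ 2 * W ≤ l' j := by
      intro hq2 j
      have h1 : q * (p * W) ≤ q * (l j / p) := Nat.mul_le_mul_left _ (hd_lb j)
      have h2 : q * (p * W) = q ^ 2 * W + q * W := by rw [hp]; ring
      have h3 : 2 * W ≤ q * W := Nat.mul_le_mul_right _ hq2
      have h4 : q * (l j / p) + l j / p = p * (l j / p) := by rw [hp]; ring
      have h5 := hdp j
      have h6 := hcK j
      rw [hl'_def j]
      omega
    obtain ⟨C', hC'col, hC'row⟩ := ih hq Cap l' htot' habund''
    refine ⟨fun s => Fin.cons (α := fun _ => Fin m → ℕ) c C' s, ?_, ?_⟩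
    · intro j
      rw [Fin.sum_univ_succ]
      simp only [Fin.cons_zero, Fin.cons_succ]
      rw [hC'col j, hl'_def j]
      have := hcl j
      omega
    · intro s
      refine Fin.cases ?_ ?_ s
      · simpa [hcv] using htCap
      · intro s'
        simpa using hC'row s'

theorem stmt2 {m : ℕ} (hm : 1 ≤ m) (A : Matrix (Fin m) (Fin m) ℕ)
    (hA : A.IsPrimitiveNat) (N : ℕ) (hN : 1 ≤ N)
    (u : Fin m → ℕ) (hu : ∀ i, 0 < u i)
    (hle : ∀ i, A.mulVec u i ≤ N * u i) :
    ∃ k : ℕ, 1 ≤ k ∧ ∀ i : Fin m,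
      ∃ C : Fin (u i / Finset.univ.gcd u) → Fin m → ℕ,
        (∀ j, ∑ s, C s j = (A ^ k) i j) ∧
        (∀ s, ∑ j, C s j * u j ≤ Finset.univ.gcd u * N ^ k) := by
  obtain ⟨n, hn1, hnpos⟩ := hA
  set g : ℕ := Finset.univ.gcd u with hg_def
  have hgdvd : ∀ i, g ∣ u i := fun i => Finset.gcd_dvd (Finset.mem_univ i)
  have hi0 : Fin m := ⟨0, hm⟩
  have hg0 : 0 < g := by
    rcases Nat.eq_zero_or_pos g with h | h
    · have h2 := hgdvd hi0
      rw [h] at h2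
      have h3 := Nat.eq_zero_of_zero_dvd h2
      have h4 := hu hi0
      omega
    · exact h
  obtain ⟨v, hv_def⟩ : ∃ v : Fin m → ℕ, ∀ j, v j = u j / g := ⟨_, fun _ => rfl⟩
  have huv : ∀ j, u j = g * v j := by
    intro j
    rw [hv_def j, Nat.mul_div_cancel' (hgdvd j)]
  have hv : ∀ j, 0 < v j := by
    intro j
    rcases Nat.eq_zero_or_pos (v j) with h | h
    · have h2 := huv j
      rw [h, Nat.mul_zero] at h2
      have h3 := hu j
      omega
    · exact h
  have hgcdv : Finset.univ.gcd v = 1 := by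
    have h1 : Finset.univ.gcd u = Finset.univ.gcd (fun j => g * v j) := by
      apply Finset.gcd_congr rfl
      intro j _
      exact huv j
    have h2 : Finset.univ.gcd (fun j => g * v j) = normalize g * Finset.univ.gcd v :=
      Finset.gcd_mul_left
    rw [normalize_eq] at h2
    have h3 : g = g * Finset.univ.gcd v := by
      conv_lhs => rw [hg_def, h1, h2]
    have h4 : g * 1 = g * Finset.univ.gcd v := by rw [Nat.mul_one, ← h3]
    exact (Nat.eq_of_mul_eq_mul_left hg0 h4).symm
  obtain ⟨z, hz⟩ := bezout_finset_s2 v Finset.univ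
  rw [hgcdv] at hz
  norm_num at hz
  -- growth of powers
  have hgrow : ∀ r i j, m ^ r ≤ (A ^ (n * (r + 1))) i j := by
    intro r
    induction r with
    | zero =>
      intro i j
      simpa using Nat.succ_le_of_lt (hnpos i j)
    | succ r ihr =>
      intro i j
      have heq : A ^ (n * (r + 2)) = A ^ (n * (r + 1)) * A ^ n := by
        rw [← pow_add]
        ring_nf
      rw [show n * (r + 1 + 1) = n * (r + 2) by ring, heq, Matrix.mul_apply]
      calc m ^ (r + 1) = ∑ _l : Fin m, m ^ r := by
            rw [Finset.sum_const, Finset.card_univ, Fintype.card_fin, smul_eq_mul, pow_succ]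
            ring
        _ ≤ ∑ l, (A ^ (n * (r + 1))) i l * (A ^ n) l j := by
            apply Finset.sum_le_sum
            intro l _
            calc m ^ r = m ^ r * 1 := by ring
              _ ≤ (A ^ (n * (r + 1))) i l * (A ^ n) l j :=
                Nat.mul_le_mul (ihr i l) (hnpos l j)
    -- total weight bound
  have hle' : ∀ i, ∑ j, A i j * u j ≤ N * u i := by
    intro i
    have h := hle i
    simpa [Matrix.mulVec, dotProduct] using h
  have htotu : ∀ k, ∀ i, ∑ j, (A ^ k) i j * u j ≤ N ^ k * u i := by
    intro k
    induction k with
    | zero => intro i; simp [Matrix.one_apply]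
    | succ k ihk =>
      intro i
      calc ∑ j, (A ^ (k + 1)) i j * u j
          = ∑ j, ∑ l, (A ^ k) i l * A l j * u j := by
            apply Finset.sum_congr rfl
            intro j _
            rw [pow_succ, Matrix.mul_apply, Finset.sum_mul]
        _ = ∑ l, (A ^ k) i l * ∑ j, A l j * u j := by
            rw [Finset.sum_comm]
            apply Finset.sum_congr rfl
            intro l _
            rw [Finset.mul_sum]
            apply Finset.sum_congr rfl
            intro j _
            ring
        _ ≤ ∑ l, (A ^ k) i l * (N * u l) := by
            apply Finset.sum_le_sum
            intro l _
            exact Nat.mul_le_mul_left _ (hle' l)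
        _ = N * ∑ l, (A ^ k) i l * u l := by
            rw [Finset.mul_sum]
            apply Finset.sum_congr rfl
            intro l _
            ring
        _ ≤ N * (N ^ k * u i) := Nat.mul_le_mul_left _ (ihk i)
        _ = N ^ (k + 1) * u i := by ring
  -- choose parameters
  set Z : ℕ := ∑ j, (z j).natAbs with hZ
  set V : ℕ := ∑ j, v j with hV
  set W : ℕ := 1 + (V + 1) * Z with hW
  set B : ℕ := V ^ 2 * W with hB
  refine ⟨n * (B + 1), by simpa using Nat.mul_le_mul hn1 (Nat.succ_le_succ (Nat.zero_le B)), ?_⟩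
  intro i
  set k : ℕ := n * (B + 1) with hk
  -- total weighted bound in terms of v
  have htotv : ∑ j, (A ^ k) i j * v j ≤ (u i / g) * N ^ k := by
    have h1 : g * ∑ j, (A ^ k) i j * v j ≤ g * ((u i / g) * N ^ k) := by
      calc g * ∑ j, (A ^ k) i j * v j = ∑ j, (A ^ k) i j * (g * v j) := by
            rw [Finset.mul_sum]
            apply Finset.sum_congr rfl
            intro j _
            ring
        _ = ∑ j, (A ^ k) i j * u j := by
            apply Finset.sum_congr rfl
            intro j _
            rw [← huv j]
        _ ≤ N ^ k * u i := htotu k i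
        _ = g * ((u i / g) * N ^ k) := by
            have hud : g * (u i / g) = u i := Nat.mul_div_cancel' (hgdvd i)
            conv_lhs => rw [← hud]
            ring
    exact Nat.le_of_mul_le_mul_left h1 hg0
  have hp1 : 1 ≤ u i / g := (Nat.one_le_div_iff hg0).2 (Nat.le_of_dvd (hu i) (hgdvd i))
  have habund : 2 ≤ u i / g → ∀ j, (u i / g) ^ 2 * W ≤ (A ^ k) i j := by
    intro h2 j
    have hm2 : 2 ≤ m := by
      by_contra hcon
      have hm1 : m = 1 := by omega
      subst hm1
      have huniv : (Finset.univ : Finset (Fin 1)) = {i} := by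
        rw [Finset.univ_unique]
        congr
        exact Subsingleton.elim _ _
      have hgi : g = u i := by
        rw [hg_def, huniv, Finset.gcd_singleton, normalize_eq]
      rw [hgi, Nat.div_self (hu i)] at h2
      omega
    have hvile : u i / g ≤ V := by
      rw [← hv_def i, hV]
      exact Finset.single_le_sum (f := fun j => v j) (fun _ _ => Nat.zero_le _) (Finset.mem_univ i)
    calc (u i / g) ^ 2 * W ≤ V ^ 2 * W :=
          Nat.mul_le_mul_right _ (Nat.pow_le_pow_left hvile 2)
      _ = B := rfl
      _ ≤ 2 ^ B := le_of_lt Nat.lt_two_pow_self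
      _ ≤ m ^ B := Nat.pow_le_pow_left hm2 B
      _ ≤ (A ^ (n * (B + 1))) i j := hgrow B i j
  obtain ⟨C, hCcol, hCrow⟩ :=
    pack v hv z hz W (by rw [hW, hV, hZ]) (u i / g) hp1 (N ^ k)
      (fun j => (A ^ k) i j) htotv habund
  refine ⟨C, hCcol, ?_⟩
  intro s
  calc ∑ j, C s j * u j = g * ∑ j, C s j * v j := by
        rw [Finset.mul_sum]
        apply Finset.sum_congr rfl
        intro j _
        rw [huv j]
        ring
    _ ≤ g * N ^ k := Nat.mul_le_mul_left _ (hCrow s)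
end

section
/- Let A be an m×m primitive matrix with nonnegative integer entries, let N ≥ 1 be an integer, and let u = (u₁,…,u_m) be a vector of positive integers with A·u = N·u. If gcd(u₁,…,u_m) divides N, then there exists an integer k ≥ 1 such that every row of A^k is (N^k, u)-rearrangeable. -/
lemma exists_bezout {ι : Type*} [DecidableEq ι] (s : Finset ι) (u : ι → ℕ) :
    ∃ y : ι → ℤ, ∑ j ∈ s, y j * (u j : ℤ) = ((s.gcd u : ℕ) : ℤ) := by
  classical
  induction s using Finset.induction_on with
  | empty => exact ⟨0, by simp⟩
  | @insert a s ha ih =>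
    obtain ⟨y, hy⟩ := ih
    refine ⟨fun j => if j = a then Nat.gcdA (u a) (s.gcd u)
      else Nat.gcdB (u a) (s.gcd u) * y j, ?_⟩
    rw [Finset.sum_insert ha, Finset.gcd_insert]
    have h2 : ∑ j ∈ s, (if j = a then Nat.gcdA (u a) (s.gcd u)
        else Nat.gcdB (u a) (s.gcd u) * y j) * (u j : ℤ)
        = Nat.gcdB (u a) (s.gcd u) * ∑ j ∈ s, y j * (u j : ℤ) := by
      rw [Finset.mul_sum]
      refine Finset.sum_congr rfl fun j hj => ?_
      rw [if_neg (by rintro rfl; exact ha hj)]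
      ring
    rw [h2, hy]
    simp only [if_pos rfl, if_true]
    have hb := Nat.gcd_eq_gcd_ab (u a) (s.gcd u)
    have hg : (gcd (u a) (s.gcd u) : ℕ) = Nat.gcd (u a) (s.gcd u) := rfl
    rw [hg]
    rw [hb]; ring


lemma step_lemma {m : ℕ} (u' : Fin m → ℕ) (x : Fin m → ℤ)
    (hx : ∑ j, x j * (u' j : ℤ) = 1)
    (C : ℕ) (hC : ∀ j, (∑ i, u' i) * (x j).natAbs ≤ C)
    (t T : ℕ) (ht : 1 ≤ t)
    (b : Fin m → ℕ) (hsum : ∑ j, b j * u' j = (t + 1) * T)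
    (hb : ∀ j, (C + 1) * ((t + 1) * t) ≤ b j) :
    ∃ c : Fin m → ℕ, (∀ j, c j ≤ b j) ∧ (∑ j, c j * u' j = T) ∧
      ∀ j, (C + 1) * (t * (t - 1)) ≤ b j - c j := by
  set U : ℕ := ∑ i, u' i with hU
  set q : Fin m → ℕ := fun j => b j / (t + 1) with hq
  have hqb : ∀ j, (t + 1) * q j ≤ b j := fun j => by
    rw [hq, mul_comm]; exact Nat.div_mul_le_self _ _
  have hqb2 : ∀ j, b j ≤ (t + 1) * q j + t := fun j => by
    have h1 := Nat.div_add_mod (b j) (t + 1)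
    have h2 := Nat.mod_lt (b j) (y := t + 1) (by omega)
    simp only [hq]; omega
  have hSle : ∑ j, q j * u' j ≤ T := by
    have h1 : (t + 1) * ∑ j, q j * u' j ≤ (t + 1) * T := by
      rw [← hsum, Finset.mul_sum]
      refine Finset.sum_le_sum fun j _ => ?_
      rw [← mul_assoc]
      exact Nat.mul_le_mul_right _ (hqb j)
    exact Nat.le_of_mul_le_mul_left h1 (Nat.succ_pos t)
  set S : ℕ := ∑ j, q j * u' j with hS
  set r : ℕ := T - S with hr
  have hTS : T = S + r := by omega
  have hrU : r ≤ U := by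
    have h2 : (t + 1) * T ≤ (t + 1) * S + t * U := by
      calc (t + 1) * T = ∑ j, b j * u' j := hsum.symm
        _ ≤ ∑ j, ((t + 1) * (q j * u' j) + t * u' j) := by
            refine Finset.sum_le_sum fun j _ => ?_
            calc b j * u' j ≤ ((t + 1) * q j + t) * u' j :=
              Nat.mul_le_mul_right _ (hqb2 j)
              _ = (t + 1) * (q j * u' j) + t * u' j := by ring
        _ = (t + 1) * S + t * U := by
            rw [Finset.sum_add_distrib, ← Finset.mul_sum, ← Finset.mul_sum]
    have h3 : (t + 1) * r ≤ t * U := by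
      have h5 : (t + 1) * T = (t + 1) * S + (t + 1) * r := by rw [hTS]; ring
      linarith
    have h4 : (t + 1) * r ≤ (t + 1) * U :=
      le_trans h3 (Nat.mul_le_mul_right _ (Nat.le_succ t))
    exact Nat.le_of_mul_le_mul_left h4 (Nat.succ_pos t)
  have hqlb : ∀ j, (C + 1) * t ≤ q j := fun j => by
    rw [hq]
    refine (Nat.le_div_iff_mul_le (Nat.succ_pos t)).2 ?_
    calc (C + 1) * t * (t + 1) = (C + 1) * ((t + 1) * t) := by ring
      _ ≤ b j := hb j
  have hrx : ∀ j, (↑r * x j).natAbs ≤ C := fun j => by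
    rw [Int.natAbs_mul, Int.natAbs_natCast]
    exact le_trans (Nat.mul_le_mul_right _ hrU) (hC j)
  have hnn : ∀ j, (0 : ℤ) ≤ (q j : ℤ) + ↑r * x j := fun j => by
    have h5 : ((↑r * x j).natAbs : ℤ) ≤ (C : ℤ) := by exact_mod_cast hrx j
    have h6 : ((C : ℤ) + 1) * t ≤ (q j : ℤ) := by exact_mod_cast hqlb j
    have h7 : (1 : ℤ) ≤ t := by exact_mod_cast ht
    nlinarith [neg_abs_le (↑r * x j), Int.abs_eq_natAbs (↑r * x j)]
  set c : Fin m → ℕ := fun j => ((q j : ℤ) + ↑r * x j).toNat with hc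
  have hcast : ∀ j, (c j : ℤ) = (q j : ℤ) + ↑r * x j := fun j => Int.toNat_of_nonneg (hnn j)
  have hcub : ∀ j, c j ≤ q j + C := fun j => by
    have h5 : (c j : ℤ) ≤ (q j : ℤ) + C := by
      rw [hcast j]
      have h6 := Int.le_natAbs (a := ↑r * x j)
      have h7 : ((↑r * x j).natAbs : ℤ) ≤ (C : ℤ) := by exact_mod_cast hrx j
      linarith
    exact_mod_cast h5
  have hkey : ∀ j, q j + C + (C + 1) * (t * (t - 1)) ≤ b j := fun j => by
    obtain ⟨s, rfl⟩ : ∃ s, t = s + 1 := ⟨t - 1, by omega⟩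
    have h8 := hqb j
    have h9 := hb j
    simp only [Nat.add_sub_cancel]
    nlinarith [h8, h9]
  have hcb : ∀ j, c j ≤ b j := fun j => le_trans (hcub j) (by have := hkey j; omega)
  refine ⟨c, hcb, ?_, fun j => by have := hkey j; have := hcub j; omega⟩
  have hz : ((∑ j, c j * u' j : ℕ) : ℤ) = (T : ℤ) := by
    push_cast [hcast]
    calc ∑ j, ((q j : ℤ) + ↑r * x j) * (u' j : ℤ)
        = (∑ j, (q j : ℤ) * (u' j : ℤ)) + ↑r * ∑ j, x j * (u' j : ℤ) := by
          rw [Finset.mul_sum, ← Finset.sum_add_distrib]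
          refine Finset.sum_congr rfl fun j _ => by ring
      _ = (S : ℤ) + ↑r * 1 := by rw [hx]; congr 1; rw [hS]; push_cast; ring
      _ = (T : ℤ) := by rw [hTS]; push_cast; ring
  exact_mod_cast hz

lemma partition_lemma_s3 {m : ℕ} (u' : Fin m → ℕ) (hu' : ∀ j, 0 < u' j)
    (x : Fin m → ℤ) (hx : ∑ j, x j * (u' j : ℤ) = 1)
    (C : ℕ) (hC : ∀ j, (∑ i, u' i) * (x j).natAbs ≤ C) :
    ∀ t T (b : Fin m → ℕ), (∑ j, b j * u' j = t * T) →
      (∀ j, (C + 1) * (t * (t - 1)) ≤ b j) →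
      ∃ D : Fin t → Fin m → ℕ, (∀ j, ∑ s, D s j = b j) ∧
        (∀ s, ∑ j, D s j * u' j = T) := by
  intro t
  induction t with
  | zero =>
    intro T b hsum _
    refine ⟨fun s => s.elim0, fun j => ?_, fun s => s.elim0⟩
    simp only [Finset.univ_eq_empty, Finset.sum_empty]
    rw [zero_mul] at hsum
    have h1 : b j * u' j = 0 := (Finset.sum_eq_zero_iff.1 hsum) j (Finset.mem_univ j)
    have h2 := hu' j
    exact (Nat.mul_eq_zero.1 h1).resolve_right (by omega) |>.symm
  | succ t ih =>
    intro T b hsum hb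
    rcases Nat.eq_zero_or_pos t with rfl | ht
    · refine ⟨fun _ => b, fun j => ?_, fun s => ?_⟩
      · simp [Fin.sum_univ_one]
      · rw [hsum]; ring
    · obtain ⟨c, hcb, hcsum, hrem⟩ := step_lemma u' x hx C hC t T ht b hsum
        (fun j => by have := hb j; simpa using this)
      obtain ⟨D, hDcol, hDrow⟩ := ih T (fun j => b j - c j)
        (by
          have h1 : ∑ j, (b j - c j) * u' j = (∑ j, b j * u' j) - ∑ j, c j * u' j := by
            rw [← Finset.sum_tsub_distrib _ (fun j _ => Nat.mul_le_mul_right (u' j) (hcb j))]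
            exact Finset.sum_congr rfl fun j _ => Nat.sub_mul _ _ _
          rw [h1, hsum, hcsum, Nat.succ_mul, Nat.add_sub_cancel])
        hrem
      refine ⟨Fin.cons c D, fun j => ?_, fun s => ?_⟩
      · rw [Fin.sum_univ_succ]
        simp only [Fin.cons_zero, Fin.cons_succ]
        rw [hDcol j]
        exact Nat.add_sub_cancel' (hcb j)
      · refine Fin.cases ?_ (fun s => ?_) s
        · simpa using hcsum
        · simpa using hDrow s


lemma rearrange_aux {m : ℕ} (u : Fin m → ℕ) (hu : ∀ i, 0 < u i) (d : ℕ) (hdpos : 0 < d)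
    (hdvd : ∀ j, d ∣ u j)
    (x : Fin m → ℤ) (hx : ∑ j, x j * ((u j / d : ℕ) : ℤ) = 1)
    (C : ℕ) (hC : ∀ j, (∑ i, u i / d) * (x j).natAbs ≤ C)
    (M : ℕ) (hdM : d ∣ M) (t : ℕ) (ht : 1 ≤ t)
    (a : Fin m → ℕ) (hsum : ∑ j, a j * u j = t * M)
    (hent : ∀ j, (C + 1) * (t * (t - 1)) ≤ a j) :
    ∃ p, 1 ≤ p ∧ ∃ D : Fin p → Fin m → ℕ,
      (∀ j, ∑ s, D s j = a j) ∧ (∀ s, ∑ j, D s j * u j = M) := by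
  set u' : Fin m → ℕ := fun j => u j / d with hu'def
  have huu' : ∀ j, u j = d * u' j := fun j => (Nat.mul_div_cancel' (hdvd j)).symm
  have hu' : ∀ j, 0 < u' j := fun j => by
    have := hu j; have := huu' j; by_contra h; push_neg at h
    interval_cases h' : u' j <;> omega
  set T : ℕ := M / d with hT
  have hMT : M = d * T := (Nat.mul_div_cancel' hdM).symm
  have hsum' : ∑ j, a j * u' j = t * T := by
    have h1 : d * ∑ j, a j * u' j = d * (t * T) := by
      rw [Finset.mul_sum]
      calc ∑ j, d * (a j * u' j) = ∑ j, a j * u j := by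
            refine Finset.sum_congr rfl fun j _ => ?_
            rw [huu' j]; ring
        _ = t * M := hsum
        _ = d * (t * T) := by rw [hMT]; ring
    exact Nat.eq_of_mul_eq_mul_left hdpos h1
  obtain ⟨D, hcol, hrow⟩ := partition_lemma_s3 u' hu' x hx C hC t T a hsum' hent
  refine ⟨t, ht, D, hcol, fun s => ?_⟩
  calc ∑ j, D s j * u j = ∑ j, d * (D s j * u' j) := by
        refine Finset.sum_congr rfl fun j _ => ?_
        rw [huu' j]; ring
    _ = d * ∑ j, D s j * u' j := (Finset.mul_sum _ _ _).symm
    _ = d * T := by rw [hrow s]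
    _ = M := hMT.symm

lemma pow_mulVec_eig {m : ℕ} (A : Matrix (Fin m) (Fin m) ℕ) (N : ℕ) (u : Fin m → ℕ)
    (heig : A.mulVec u = N • u) (k : ℕ) : (A ^ k).mulVec u = (N ^ k) • u := by
  induction k with
  | zero => simp [Matrix.one_mulVec]
  | succ k ih =>
    rw [pow_succ, ← Matrix.mulVec_mulVec, heig, Matrix.mulVec_smul, ih, smul_smul,
      ← pow_succ']

lemma pow_entry_lb {m : ℕ} (B : Matrix (Fin m) (Fin m) ℕ) (hB : ∀ i j, 1 ≤ B i j) :
    ∀ s, 1 ≤ s → ∀ i j, m ^ (s - 1) ≤ (B ^ s) i j := by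
  intro s
  induction s with
  | zero => intro h; omega
  | succ s ih =>
    intro _ i j
    rcases Nat.eq_zero_or_pos s with rfl | hs
    · simpa using hB i j
    · rw [pow_succ', Matrix.mul_apply]
      have h1 : ∀ l ∈ Finset.univ, m ^ (s - 1) ≤ B i l * (B ^ s) l j := fun l _ => by
        calc m ^ (s - 1) = 1 * m ^ (s - 1) := (one_mul _).symm
          _ ≤ B i l * (B ^ s) l j := Nat.mul_le_mul (hB i l) (ih hs l j)
      calc m ^ (s + 1 - 1) = m * m ^ (s - 1) := by
            rw [Nat.add_sub_cancel, ← pow_succ', Nat.sub_add_cancel hs]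
        _ = ∑ _l : Fin m, m ^ (s - 1) := by
            rw [Finset.sum_const, Finset.card_univ, Fintype.card_fin, smul_eq_mul]
        _ ≤ ∑ l, B i l * (B ^ s) l j := Finset.sum_le_sum h1

theorem stmt3 {m : ℕ} (hm : 1 ≤ m) (A : Matrix (Fin m) (Fin m) ℕ)
    (hA : A.IsPrimitiveNat) (N : ℕ) (hN : 1 ≤ N)
    (u : Fin m → ℕ) (hu : ∀ i, 0 < u i)
    (heig : A.mulVec u = N • u)
    (hgcd : Finset.univ.gcd u ∣ N) :
    ∃ k : ℕ, 1 ≤ k ∧ ∀ i : Fin m, IsRearrangeable (N ^ k) u ((A ^ k) i) := by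
  classical
  set d : ℕ := Finset.univ.gcd u with hd
  have hdvd : ∀ j, d ∣ u j := fun j => Finset.gcd_dvd (Finset.mem_univ j)
  have hdpos : 0 < d := by
    rcases Nat.eq_zero_or_pos d with h | h
    · exfalso
      have h0 := Finset.gcd_eq_zero_iff.1 (hd ▸ h) ⟨0, hm⟩ (Finset.mem_univ _)
      have := hu ⟨0, hm⟩; omega
    · exact h
  obtain ⟨x, hxd⟩ := exists_bezout (Finset.univ : Finset (Fin m)) u
  have hx : ∑ j, x j * ((u j / d : ℕ) : ℤ) = 1 := by
    have h1 : (d : ℤ) * ∑ j, x j * ((u j / d : ℕ) : ℤ) = (d : ℤ) * 1 := by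
      rw [Finset.mul_sum, mul_one]
      calc ∑ j, (d : ℤ) * (x j * ((u j / d : ℕ) : ℤ))
          = ∑ j, x j * (u j : ℤ) := by
            refine Finset.sum_congr rfl fun j _ => ?_
            have h2 : ((u j : ℕ) : ℤ) = (d : ℤ) * ((u j / d : ℕ) : ℤ) := by
              exact_mod_cast congrArg (Nat.cast : ℕ → ℤ) (Nat.mul_div_cancel' (hdvd j)).symm
            rw [h2]; ring
        _ = (d : ℤ) := hxd
    exact mul_left_cancel₀ (by exact_mod_cast hdpos.ne') h1
  set C : ℕ := ∑ j, (∑ i, u i / d) * (x j).natAbs with hCdef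
  have hC : ∀ j, (∑ i, u i / d) * (x j).natAbs ≤ C := fun j => by
    rw [hCdef]
    exact Finset.single_le_sum (f := fun j => (∑ i, u i / d) * (x j).natAbs)
      (fun j _ => Nat.zero_le _) (Finset.mem_univ j)
  set S : ℕ := ∑ i, u i with hSdef
  have hus : ∀ i, u i ≤ S :=
    fun i => Finset.single_le_sum (fun i _ => Nat.zero_le _) (Finset.mem_univ i)
  set Bd : ℕ := (C + 1) * (S * S) with hBd
  have hrow : ∀ k i, ∑ j, (A ^ k) i j * u j = N ^ k * u i := fun k i => by
    have h1 := congrFun (pow_mulVec_eig A N u heig k) i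
    simpa [Matrix.mulVec, dotProduct] using h1
  have hbd : ∀ i, (C + 1) * (u i * (u i - 1)) ≤ Bd := fun i => by
    refine Nat.mul_le_mul_left _ (Nat.mul_le_mul (hus i) ?_)
    exact le_trans (Nat.sub_le _ _) (hus i)
  have hclose : ∀ k, 1 ≤ k → (∀ i j, (C + 1) * (u i * (u i - 1)) ≤ (A ^ k) i j) →
      ∀ i : Fin m, IsRearrangeable (N ^ k) u ((A ^ k) i) := by
    intro k hk hent i
    exact rearrange_aux u hu d hdpos hdvd x hx C hC (N ^ k)
      (hgcd.trans (dvd_pow_self N (by omega))) (u i) (hu i) ((A ^ k) i)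
      (by rw [hrow k i, mul_comm]) (fun j => hent i j)
  rcases Nat.lt_or_ge m 2 with hm2 | hm2
  · -- m = 1
    have hm1 : m = 1 := by omega
    subst hm1
    have huniv : (Finset.univ : Finset (Fin 1)) = {0} := rfl
    have hd0 : d = u 0 := by rw [hd, huniv, Finset.gcd_singleton]; simp
    have hApow : ∀ k, (A ^ k) 0 0 = N ^ k := fun k => by
      have h1 := hrow k 0
      rw [Fin.sum_univ_one] at h1
      exact Nat.eq_of_mul_eq_mul_right (hu 0) h1
    rcases Nat.lt_or_ge (u 0) 2 with hu2 | hu2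
    · -- u 0 = 1, bound is 0
      refine ⟨1, le_refl 1, hclose 1 (le_refl 1) fun i j => ?_⟩
      have hi : i = 0 := Subsingleton.elim i 0
      subst hi
      have h3 : u 0 = 1 := by have := hu 0; omega
      simp [h3]
    · -- N ≥ 2
      have hN2 : 2 ≤ N := le_trans (hd0 ▸ hu2) (Nat.le_of_dvd (by omega) hgcd)
      refine ⟨Bd + 1, by omega, hclose (Bd + 1) (by omega) fun i j => ?_⟩
      have hi : i = 0 := Subsingleton.elim _ _
      have hj : j = 0 := Subsingleton.elim _ _
      subst hi; subst hj
      rw [hApow]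
      calc (C + 1) * (u 0 * (u 0 - 1)) ≤ Bd := hbd 0
        _ ≤ 2 ^ Bd := le_of_lt (Nat.lt_two_pow_self (n := Bd))
        _ ≤ 2 ^ (Bd + 1) := Nat.pow_le_pow_right (by omega) (by omega)
        _ ≤ N ^ (Bd + 1) := Nat.pow_le_pow_left hN2 _
  · -- m ≥ 2
    obtain ⟨n, hn1, hnpos⟩ := hA
    set s : ℕ := Bd + 1 with hs
    refine ⟨n * s, Nat.mul_pos (by omega) (by omega), hclose (n * s) (Nat.mul_pos (by omega) (by omega)) fun i j => ?_⟩
    have h1 : (A ^ (n * s)) = (A ^ n) ^ s := by rw [pow_mul]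
    have h2 : m ^ (s - 1) ≤ ((A ^ n) ^ s) i j :=
      pow_entry_lb (A ^ n) (fun i j => hnpos i j) s (by omega) i j
    rw [h1]
    refine le_trans ?_ h2
    calc (C + 1) * (u i * (u i - 1)) ≤ Bd := hbd i
      _ ≤ 2 ^ Bd := le_of_lt (Nat.lt_two_pow_self (n := Bd))
      _ ≤ m ^ Bd := Nat.pow_le_pow_left hm2 _
      _ = m ^ (s - 1) := by rw [hs, Nat.add_sub_cancel]
end

section
/- Let C ⊆ ℝ denote the ternary Cantor set. Then C ∪ (C + 1) is Lipschitz equivalent to C. -/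
/-- Two subsets `X`, `Y` of (possibly different) metric spaces are Lipschitz
equivalent if there are a bijection `f : X → Y` and a constant `L ≥ 1` with
`L⁻¹ * dist x y ≤ dist (f x) (f y) ≤ L * dist x y` for all `x y ∈ X`. -/
def LipschitzEquivalent {E F : Type*} [MetricSpace E] [MetricSpace F]
    (X : Set E) (Y : Set F) : Prop :=
  ∃ (f : X → Y) (L : ℝ), 1 ≤ L ∧ Function.Bijective f ∧
    ∀ x y : X, L⁻¹ * dist (x : E) (y : E) ≤ dist (f x : F) (f y : F) ∧
      dist (f x : F) (f y : F) ≤ L * dist (x : E) (y : E)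

namespace Stmt9Aux

noncomputable section

local notation "C" => cantorSet

lemma preC_subset_I (n : ℕ) : preCantorSet n ⊆ Set.Icc (0:ℝ) 1 := by
  induction n with
  | zero => simp [preCantorSet]
  | succ n ih =>
    rintro x (⟨y, hy, rfl⟩ | ⟨y, hy, rfl⟩) <;> obtain ⟨h0, h1⟩ := ih hy <;>
      exact ⟨by norm_num; linarith, by rw [div_le_one (by norm_num)]; linarith⟩

lemma mem_div3 {x : ℝ} (hx : x ∈ C) : x / 3 ∈ C := by
  apply Set.mem_iInter.2
  intro n
  match n with
  | 0 =>
    obtain ⟨h0, h1⟩ := cantorSet_subset_unitInterval hx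
    exact ⟨by linarith, by linarith⟩
  | n + 1 => exact Or.inl ⟨x, Set.mem_iInter.1 hx n, rfl⟩

lemma mem_two_add_div3 {x : ℝ} (hx : x ∈ C) : (2 + x) / 3 ∈ C := by
  apply Set.mem_iInter.2
  intro n
  match n with
  | 0 =>
    obtain ⟨h0, h1⟩ := cantorSet_subset_unitInterval hx
    exact ⟨by linarith, by linarith⟩
  | n + 1 => exact Or.inr ⟨x, Set.mem_iInter.1 hx n, rfl⟩

lemma one_mem_C : (1:ℝ) ∈ C := by
  apply Set.mem_iInter.2
  intro n
  induction n with
  | zero => exact ⟨by norm_num, by norm_num⟩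
  | succ n ih => exact Or.inr ⟨1, ih, by norm_num⟩

lemma mem_triple {x : ℝ} (hx : x ∈ C) (h : x < 2/3) : 3 * x ∈ C := by
  apply Set.mem_iInter.2
  intro n
  have hx' := Set.mem_iInter.1 hx (n + 1)
  rcases hx' with ⟨y, hy, hxy⟩ | ⟨y, hy, hxy⟩
  · have : 3 * x = y := by simp only at hxy; linarith
    rw [this]; exact hy
  · exfalso
    obtain ⟨h0, _⟩ := preC_subset_I n hy
    simp only at hxy
    linarith

lemma mem_triple_sub {x : ℝ} (hx : x ∈ C) (h : 1/3 < x) : 3 * x - 2 ∈ C := by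
  apply Set.mem_iInter.2
  intro n
  have hx' := Set.mem_iInter.1 hx (n + 1)
  rcases hx' with ⟨y, hy, hxy⟩ | ⟨y, hy, hxy⟩
  · exfalso
    obtain ⟨_, h1⟩ := preC_subset_I n hy
    simp only at hxy
    linarith
  · have : 3 * x - 2 = y := by simp only at hxy; linarith
    rw [this]; exact hy

lemma C_gap {x : ℝ} (hx : x ∈ C) : x ≤ 1/3 ∨ 2/3 ≤ x := by
  by_contra h
  push_neg at h
  obtain ⟨h1, h2⟩ := h
  have := cantorSet_subset_unitInterval (mem_triple_sub hx h1)
  have h0 := this.1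
  linarith

/-- near-0 gap lemma -/
lemma near_zero_gap : ∀ m : ℕ, ∀ x ∈ C, x ≤ (1/3:ℝ)^m → (1/3:ℝ)^(m+1) < x →
    (2/3) * (1/3:ℝ)^m ≤ x := by
  intro m
  induction m with
  | zero =>
    intro x hx h1 h2
    simp only [pow_zero, pow_one] at *
    rcases C_gap hx with h | h
    · linarith
    · linarith
  | succ m ih =>
    intro x hx h1 h2
    have hp : (1/3:ℝ)^(m+1) ≤ 1/3 := by
      calc (1/3:ℝ)^(m+1) ≤ (1/3:ℝ)^1 := pow_le_pow_of_le_one (by norm_num) (by norm_num)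
            (by omega)
        _ = 1/3 := pow_one _
    have hx3 : 3 * x ∈ C := mem_triple hx (by linarith)
    have h1' : 3 * x ≤ (1/3:ℝ)^m := by
      rw [pow_succ] at h1; linarith
    have h2' : (1/3:ℝ)^(m+1) < 3 * x := by
      rw [pow_succ] at h2 ⊢
      rw [pow_succ] at h2
      linarith
    have := ih (3 * x) hx3 h1' h2'
    rw [pow_succ]
    linarith

/-- near-1 gap lemma -/
lemma near_one_gap : ∀ m : ℕ, ∀ x ∈ C, 1 - x ≤ (1/3:ℝ)^m → (1/3:ℝ)^(m+1) < 1 - x →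
    (2/3) * (1/3:ℝ)^m ≤ 1 - x := by
  intro m
  induction m with
  | zero =>
    intro x hx h1 h2
    simp only [pow_zero, pow_one] at *
    rcases C_gap hx with h | h
    · linarith
    · exfalso; linarith
  | succ m ih =>
    intro x hx h1 h2
    have hp : (1/3:ℝ)^(m+1) ≤ 1/3 := by
      calc (1/3:ℝ)^(m+1) ≤ (1/3:ℝ)^1 := pow_le_pow_of_le_one (by norm_num) (by norm_num)
            (by omega)
        _ = 1/3 := pow_one _
    have hy : 3 * x - 2 ∈ C := mem_triple_sub hx (by linarith)
    have e : 1 - (3 * x - 2) = 3 * (1 - x) := by ring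
    have h1' : 1 - (3 * x - 2) ≤ (1/3:ℝ)^m := by
      rw [e, pow_succ] at *; linarith
    have h2' : (1/3:ℝ)^(m+1) < 1 - (3 * x - 2) := by
      rw [e]
      rw [pow_succ] at h2 ⊢
      rw [pow_succ] at h2
      linarith
    have := ih (3 * x - 2) hy h1' h2'
    rw [pow_succ]
    rw [e] at this
    linarith

lemma exists_scale {u : ℝ} (h0 : 0 < u) (h1 : u ≤ 1)
    (gap : ∀ m : ℕ, u ≤ (1/3:ℝ)^m → (1/3:ℝ)^(m+1) < u → (2/3) * (1/3:ℝ)^m ≤ u) :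
    ∃ m : ℕ, (2/3) * (1/3:ℝ)^m ≤ u ∧ u ≤ (1/3:ℝ)^m := by
  have hex : ∃ k : ℕ, (1/3:ℝ)^k < u := exists_pow_lt_of_lt_one h0 (by norm_num)
  classical
  have hk := Nat.find_spec hex
  have hkne : Nat.find hex ≠ 0 := by
    intro h
    rw [h, pow_zero] at hk
    linarith
  obtain ⟨m, hm⟩ := Nat.exists_eq_succ_of_ne_zero hkne
  have hnot : ¬ (1/3:ℝ)^m < u := Nat.find_min hex (by omega)
  push_neg at hnot
  refine ⟨m, gap m hnot ?_, hnot⟩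
  rw [hm] at hk
  simpa [Nat.succ_eq_add_one] using hk

open Classical in
/-- scale index of x (distance to 1) -/
def nn (x : ℝ) : ℕ :=
  if h : ∃ n : ℕ, (2/3) * (1/3:ℝ)^n ≤ |x - 1| then Nat.find h else 0

lemma nn_eq {x : ℝ} {m : ℕ} (h1 : (2/3) * (1/3:ℝ)^m ≤ |x - 1|) (h2 : |x - 1| ≤ (1/3:ℝ)^m) :
    nn x = m := by
  classical
  have hex : ∃ n : ℕ, (2/3) * (1/3:ℝ)^n ≤ |x - 1| := ⟨m, h1⟩
  rw [nn, dif_pos hex]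
  have hle : Nat.find hex ≤ m := Nat.find_le h1
  rcases eq_or_lt_of_le hle with h | h
  · exact h
  · exfalso
    have hf := Nat.find_spec hex
    have hmono : (1/3:ℝ)^m ≤ (1/3:ℝ)^(Nat.find hex + 1) :=
      pow_le_pow_of_le_one (by norm_num) (by norm_num) (by omega)
    have hpos : (0:ℝ) < (1/3:ℝ)^(Nat.find hex) := pow_pos (by norm_num) _
    rw [pow_succ] at hmono
    linarith

/-- the bi-Lipschitz map -/
def ff (x : ℝ) : ℝ :=
  if x = 1 then 1
  else if x < 1 then x/3 + 2/3 - (2/3) * (1/3:ℝ)^(nn x)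
  else x/3 + 2/3 - (1/3:ℝ)^(nn x)

def Dset : Set ℝ := cantorSet ∪ (fun x => x + 1) '' cantorSet

lemma D_cases {x : ℝ} (hx : x ∈ Dset) (hne : x ≠ 1) :
    (x < 1 ∧ x ∈ C) ∨ (1 < x ∧ x - 1 ∈ C) := by
  rcases hx with h | ⟨c, hc, hce⟩
  · exact Or.inl ⟨lt_of_le_of_ne (cantorSet_subset_unitInterval h).2 hne, h⟩
  · right
    have hc0 : 0 ≤ c := (cantorSet_subset_unitInterval hc).1
    have : c ≠ 0 := by
      intro h0
      apply hne
      rw [← hce, h0]; norm_num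
    constructor
    · simp only at hce
      have : 0 < c := lt_of_le_of_ne hc0 (Ne.symm this)
      linarith
    · have : x - 1 = c := by simp only at hce; linarith
      rw [this]; exact hc

lemma uu {x : ℝ} (hx : x ∈ Dset) (hne : x ≠ 1) :
    (2/3) * (1/3:ℝ)^(nn x) ≤ |x - 1| ∧ |x - 1| ≤ (1/3:ℝ)^(nn x) := by
  rcases D_cases hx hne with ⟨hlt, hC⟩ | ⟨hgt, hC⟩
  · have hx0 : 0 ≤ x := (cantorSet_subset_unitInterval hC).1
    have habs : |x - 1| = 1 - x := by rw [abs_of_neg (by linarith)]; ring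
    obtain ⟨m, hm1, hm2⟩ := exists_scale (u := 1 - x) (by linarith) (by linarith)
      (fun m h1 h2 => near_one_gap m x hC h1 h2)
    rw [habs]
    have := nn_eq (x := x) (m := m) (by rw [habs]; exact hm1) (by rw [habs]; exact hm2)
    rw [this]
    exact ⟨hm1, hm2⟩
  · have hx1 : x - 1 ≤ 1 := (cantorSet_subset_unitInterval hC).2
    have habs : |x - 1| = x - 1 := abs_of_pos (by linarith)
    obtain ⟨m, hm1, hm2⟩ := exists_scale (u := x - 1) (by linarith) hx1
      (fun m h1 h2 => near_zero_gap m (x - 1) hC h1 h2)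
    rw [habs]
    have := nn_eq (x := x) (m := m) (by rw [habs]; exact hm1) (by rw [habs]; exact hm2)
    rw [this]
    exact ⟨hm1, hm2⟩

lemma ff_eq_A {x : ℝ} (h1 : x < 1) : ff x = x/3 + 2/3 - (2/3) * (1/3:ℝ)^(nn x) := by
  rw [ff, if_neg (by linarith), if_pos h1]

lemma ff_eq_B {x : ℝ} (h1 : 1 < x) : ff x = x/3 + 2/3 - (1/3:ℝ)^(nn x) := by
  rw [ff, if_neg (by linarith), if_neg (by linarith)]

lemma pow_mul_pow_three (m : ℕ) : (1/3:ℝ)^m * 3^m = 1 := by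
  rw [← mul_pow]; norm_num

/-- zoom lemmas -/
lemma Z2 : ∀ m : ℕ, ∀ z ∈ C, (1/3:ℝ)^m * (z - 1) + 1 ∈ C := by
  intro m
  induction m with
  | zero => intro z hz; simpa using hz
  | succ m ih =>
    intro z hz
    have h := mem_two_add_div3 ((ih z hz))
    have e : (2 + ((1/3:ℝ)^m * (z - 1) + 1)) / 3 = (1/3:ℝ)^(m+1) * (z - 1) + 1 := by
      rw [pow_succ]; ring
    rw [← e]
    exact h

lemma Z0' : ∀ m : ℕ, ∀ z ∈ C, (1/3:ℝ)^m * z ∈ C := by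
  intro m
  induction m with
  | zero => intro z hz; simpa using hz
  | succ m ih =>
    intro z hz
    have h := mem_div3 (ih z hz)
    have e : ((1/3:ℝ)^m * z) / 3 = (1/3:ℝ)^(m+1) * z := by rw [pow_succ]; ring
    rw [← e]
    exact h

lemma Z1 : ∀ m : ℕ, ∀ x ∈ C, 1 - x ≤ (1/3:ℝ)^m → (3:ℝ)^m * (x - 1) + 1 ∈ C := by
  intro m
  induction m with
  | zero => intro x hx _; simpa using hx
  | succ m ih =>
    intro x hx h
    have hp : (1/3:ℝ)^(m+1) ≤ 1/3 := by
      calc (1/3:ℝ)^(m+1) ≤ (1/3:ℝ)^1 := pow_le_pow_of_le_one (by norm_num) (by norm_num)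
            (by omega)
        _ = 1/3 := pow_one _
    have hy : 3 * x - 2 ∈ C := mem_triple_sub hx (by linarith)
    have h' : 1 - (3 * x - 2) ≤ (1/3:ℝ)^m := by
      rw [pow_succ] at h; linarith
    have := ih (3 * x - 2) hy h'
    have e : (3:ℝ)^m * ((3 * x - 2) - 1) + 1 = (3:ℝ)^(m+1) * (x - 1) + 1 := by
      rw [pow_succ]; ring
    rw [← e]
    exact this

lemma Z0 : ∀ m : ℕ, ∀ x ∈ C, x ≤ (1/3:ℝ)^m → (3:ℝ)^m * x ∈ C := by
  intro m
  induction m with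
  | zero => intro x hx _; simpa using hx
  | succ m ih =>
    intro x hx h
    have hp : (1/3:ℝ)^(m+1) ≤ 1/3 := by
      calc (1/3:ℝ)^(m+1) ≤ (1/3:ℝ)^1 := pow_le_pow_of_le_one (by norm_num) (by norm_num)
            (by omega)
        _ = 1/3 := pow_one _
    have hy : 3 * x ∈ C := mem_triple hx (by linarith)
    have h' : 3 * x ≤ (1/3:ℝ)^m := by rw [pow_succ] at h; linarith
    have := ih (3 * x) hy h'
    have e : (3:ℝ)^m * (3 * x) = (3:ℝ)^(m+1) * x := by rw [pow_succ]; ring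
    rw [← e]
    exact this

lemma ff_mem {x : ℝ} (hx : x ∈ Dset) : ff x ∈ C := by
  by_cases hne : x = 1
  · rw [hne]
    have : ff 1 = 1 := by rw [ff, if_pos rfl]
    rw [this]; exact one_mem_C
  obtain ⟨hu1, hu2⟩ := uu hx hne
  set n := nn x with hn
  rcases D_cases hx hne with ⟨hlt, hC⟩ | ⟨hgt, hC⟩
  · have habs : |x - 1| = 1 - x := by rw [abs_of_neg (by linarith)]; ring
    rw [habs] at hu1 hu2
    have hz : (3:ℝ)^n * (x - 1) + 1 ∈ C := Z1 n x hC hu2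
    have hz3 : ((3:ℝ)^n * (x - 1) + 1) / 3 ∈ C := mem_div3 hz
    have hf : (1/3:ℝ)^n * (((3:ℝ)^n * (x - 1) + 1) / 3 - 1) + 1 ∈ C := Z2 n _ hz3
    have h3 := pow_mul_pow_three n
    have e : ff x = (1/3:ℝ)^n * (((3:ℝ)^n * (x - 1) + 1) / 3 - 1) + 1 := by
      rw [ff_eq_A hlt, ← hn]
      linear_combination (-(x - 1) / 3) * h3
    rw [e]
    exact hf
  · have habs : |x - 1| = x - 1 := abs_of_pos (by linarith)
    rw [habs] at hu1 hu2
    have ht : (3:ℝ)^n * (x - 1) ∈ C := Z0 n (x - 1) hC hu2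
    have ht3 : ((3:ℝ)^n * (x - 1)) / 3 ∈ C := mem_div3 ht
    have hf : (1/3:ℝ)^n * (((3:ℝ)^n * (x - 1)) / 3 - 1) + 1 ∈ C := Z2 n _ ht3
    have h3 := pow_mul_pow_three n
    have e : ff x = (1/3:ℝ)^n * (((3:ℝ)^n * (x - 1)) / 3 - 1) + 1 := by
      rw [ff_eq_B hgt, ← hn]
      linear_combination (-(x - 1) / 3) * h3
    rw [e]
    exact hf

lemma ff_one : ff 1 = 1 := by rw [ff, if_pos rfl]

/-- band bounds: for x ∈ D, x ≠ 1, 1 - ff x lies in a band determined by nn x,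
    and also 1 - ff x is comparable to |x-1|. -/
lemma band {x : ℝ} (hx : x ∈ Dset) (hne : x ≠ 1) :
    (2/3) * (1/3:ℝ)^(nn x) ≤ 1 - ff x ∧ 1 - ff x ≤ (1/3:ℝ)^(nn x) ∧
    (2/3) * |x - 1| ≤ 1 - ff x ∧ 1 - ff x ≤ (4/3) * |x - 1| ∧
    (x < 1 → (8/9) * (1/3:ℝ)^(nn x) ≤ 1 - ff x) ∧
    (1 < x → 1 - ff x ≤ (7/9) * (1/3:ℝ)^(nn x)) := by
  obtain ⟨hu1, hu2⟩ := uu hx hne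
  set n := nn x
  rcases D_cases hx hne with ⟨hlt, hC⟩ | ⟨hgt, hC⟩
  · have habs : |x - 1| = 1 - x := by rw [abs_of_neg (by linarith)]; ring
    rw [habs] at hu1 hu2 ⊢
    rw [ff_eq_A hlt]
    refine ⟨by linarith, by linarith, by linarith, by linarith, fun _ => by linarith,
      fun h => absurd h (by linarith)⟩
  · have habs : |x - 1| = x - 1 := abs_of_pos (by linarith)
    rw [habs] at hu1 hu2 ⊢
    rw [ff_eq_B hgt]
    refine ⟨by linarith, by linarith, by linarith, by linarith,
      fun h => absurd h (by linarith), fun _ => by linarith⟩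

lemma pow_anti {n m : ℕ} (h : n ≤ m) : (1/3:ℝ)^m ≤ (1/3:ℝ)^n :=
  pow_le_pow_of_le_one (by norm_num) (by norm_num) h

lemma pow_pos' (n : ℕ) : (0:ℝ) < (1/3:ℝ)^n := pow_pos (by norm_num) n

set_option maxHeartbeats 2000000 in
/-- main estimate -/
lemma main_est {x y : ℝ} (hx : x ∈ Dset) (hy : y ∈ Dset) :
    |x - y| ≤ 18 * |ff x - ff y| ∧ |ff x - ff y| ≤ 18 * |x - y| := by
  by_cases hxy : x = y
  · subst hxy; simp
  by_cases hx1 : x = 1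
  · subst hx1
    have hy1 : y ≠ 1 := fun h => hxy h.symm
    obtain ⟨_, _, hb1, hb2, _, _⟩ := band hy hy1
    have hf1 : ff 1 = 1 := ff_one
    have hay := abs_nonneg (y - 1)
    have habs1 : |ff 1 - ff y| = 1 - ff y := by
      rw [hf1]
      have : (0:ℝ) ≤ 1 - ff y := by linarith
      rw [abs_of_nonneg (by linarith)]
    have habs2 : |1 - y| = |y - 1| := abs_sub_comm _ _
    rw [habs1, habs2]
    constructor <;> linarith
  by_cases hy1 : y = 1
  · subst hy1
    obtain ⟨_, _, hb1, hb2, _, _⟩ := band hx hx1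
    have hf1 : ff 1 = 1 := ff_one
    have hax := abs_nonneg (x - 1)
    have habs1 : |ff x - ff 1| = 1 - ff x := by
      rw [hf1, abs_sub_comm, abs_of_nonneg (by linarith)]
    rw [habs1]
    constructor <;> linarith
  -- both different from 1
  obtain ⟨hu1, hu2⟩ := uu hx hx1
  obtain ⟨hv1, hv2⟩ := uu hy hy1
  obtain ⟨hbx1, hbx2, hbx3, hbx4, hbxA, hbxB⟩ := band hx hx1
  obtain ⟨hby1, hby2, hby3, hby4, hbyA, hbyB⟩ := band hy hy1
  set n := nn x with hn
  set m := nn y with hm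
  clear_value n m
  have hpn := pow_pos' n
  have hpm := pow_pos' m
  -- triangle facts
  have htri1 : |x - y| ≤ |x - 1| + |y - 1| := by
    have e : x - y = (x - 1) + (1 - y) := by ring
    rw [e]
    calc |(x - 1) + (1 - y)| ≤ |x - 1| + |1 - y| := abs_add_le _ _
      _ = |x - 1| + |y - 1| := by rw [abs_sub_comm 1 y]
  have htri2 : |x - 1| - |y - 1| ≤ |x - y| := by
    have h := abs_sub_abs_le_abs_sub (x - 1) (y - 1)
    have e : (x - 1) - (y - 1) = x - y := by ring
    rw [e] at h
    exact h
  have htri2' : |y - 1| - |x - 1| ≤ |x - y| := by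
    have h := abs_sub_abs_le_abs_sub (y - 1) (x - 1)
    have e : (y - 1) - (x - 1) = y - x := by ring
    rw [e] at h
    calc |y - 1| - |x - 1| ≤ |y - x| := h
      _ = |x - y| := abs_sub_comm _ _
  rcases lt_trichotomy n m with hnm | hnm | hnm
  · -- n < m : scale separation
    have hmono : (1/3:ℝ)^m ≤ (1/3:ℝ)^(n+1) := pow_anti (by omega)
    rw [pow_succ] at hmono
    have hgap : (1 - ff x) - (1 - ff y) ≥ (1/3) * (1/3:ℝ)^n := by linarith
    have habs : |ff x - ff y| = (1 - ff x) - (1 - ff y) := by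
      rw [abs_sub_comm, abs_of_pos (by linarith)]
      ring
    rw [habs]
    have habsxy := abs_nonneg (x - y)
    constructor
    · -- |x-y| ≤ 18 * gap
      have h1 : |x - y| ≤ (1/3:ℝ)^n + (1/3:ℝ)^m := by linarith
      linarith
    · -- gap ≤ 18 |x - y|
      have h2 : (1/3) * (1/3:ℝ)^n ≤ |x - y| := by linarith
      have h3 : (1 - ff x) - (1 - ff y) ≤ (1/3:ℝ)^n := by linarith
      linarith
  · -- n = m
    rw [← hnm] at hv1 hv2 hby1 hby2
    -- determine sides
    rcases D_cases hx hx1 with ⟨hxlt, hxC⟩ | ⟨hxgt, hxC⟩ <;>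
      rcases D_cases hy hy1 with ⟨hylt, hyC⟩ | ⟨hygt, hyC⟩
    · -- both A: same piece, affine
      have ex := ff_eq_A hxlt
      have ey := ff_eq_A hylt
      rw [← hn] at ex
      rw [← hm] at ey
      have e : ff x - ff y = (x - y) / 3 := by
        rw [ex, ey, hnm]; ring
      rw [e, abs_div]
      have h3 : |(3:ℝ)| = 3 := by norm_num
      rw [h3]
      have := abs_nonneg (x - y)
      constructor <;> linarith
    · -- x in A, y in B : same scale, opposite sides
      have hA := hbxA hxlt
      have hB := hbyB hygt
      rw [← hnm] at hB
      have hgap : (1 - ff x) - (1 - ff y) ≥ (1/9) * (1/3:ℝ)^n := by linarith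
      have habsx : |x - 1| = 1 - x := by rw [abs_of_neg (by linarith)]; ring
      have habsy : |y - 1| = y - 1 := abs_of_pos (by linarith)
      have hxy' : |x - y| = (1 - x) + (y - 1) := by
        rw [abs_sub_comm, abs_of_pos (by linarith)]; ring
      have habs : |ff x - ff y| = (1 - ff x) - (1 - ff y) := by
        rw [abs_sub_comm, abs_of_pos (by linarith)]; ring
      rw [habs, hxy']
      rw [habsx] at hu1 hu2
      rw [habsy] at hv1 hv2
      constructor
      · linarith
      · linarith
    · -- x in B, y in A
      have hA := hbyA hylt
      have hB := hbxB hxgt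
      rw [← hnm] at hA
      have hgap : (1 - ff y) - (1 - ff x) ≥ (1/9) * (1/3:ℝ)^n := by linarith
      have habsx : |x - 1| = x - 1 := abs_of_pos (by linarith)
      have habsy : |y - 1| = 1 - y := by rw [abs_of_neg (by linarith)]; ring
      have hxy' : |x - y| = (x - 1) + (1 - y) := by
        rw [abs_of_pos (by linarith)]; ring
      have habs : |ff x - ff y| = (1 - ff y) - (1 - ff x) := by
        rw [abs_of_pos (by linarith)]; ring
      rw [habs, hxy']
      rw [habsx] at hu1 hu2
      rw [habsy] at hv1 hv2
      constructor
      · linarith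
      · linarith
    · -- both B: same piece, affine
      have ex := ff_eq_B hxgt
      have ey := ff_eq_B hygt
      rw [← hn] at ex
      rw [← hm] at ey
      have e : ff x - ff y = (x - y) / 3 := by
        rw [ex, ey, hnm]; ring
      rw [e, abs_div]
      have h3 : |(3:ℝ)| = 3 := by norm_num
      rw [h3]
      have := abs_nonneg (x - y)
      constructor <;> linarith
  · -- m < n : scale separation (symmetric)
    have hmono : (1/3:ℝ)^n ≤ (1/3:ℝ)^(m+1) := pow_anti (by omega)
    rw [pow_succ] at hmono
    have hgap : (1 - ff y) - (1 - ff x) ≥ (1/3) * (1/3:ℝ)^m := by linarith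
    have habs : |ff x - ff y| = (1 - ff y) - (1 - ff x) := by
      rw [abs_of_pos (by linarith)]
      ring
    rw [habs]
    have habsxy := abs_nonneg (x - y)
    constructor
    · have h1 : |x - y| ≤ (1/3:ℝ)^n + (1/3:ℝ)^m := by linarith
      linarith
    · have h2 : (1/3) * (1/3:ℝ)^m ≤ |x - y| := by linarith
      have h3 : (1 - ff y) - (1 - ff x) ≤ (1/3:ℝ)^m := by linarith
      linarith

lemma ff_inj {x y : ℝ} (hx : x ∈ Dset) (hy : y ∈ Dset) (h : ff x = ff y) : x = y := by
  by_contra hxy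
  obtain ⟨h1, _⟩ := main_est hx hy
  rw [h, sub_self, abs_zero, mul_zero] at h1
  have h2 := abs_sub_pos.2 hxy
  linarith

lemma ff_surj {y : ℝ} (hy : y ∈ C) : ∃ x ∈ Dset, ff x = y := by
  by_cases hy1 : y = 1
  · exact ⟨1, Or.inl one_mem_C, by rw [ff_one, hy1]⟩
  obtain ⟨hy0, hy1'⟩ := cantorSet_subset_unitInterval hy
  have hylt : y < 1 := lt_of_le_of_ne hy1' hy1
  obtain ⟨m, hm1, hm2⟩ := exists_scale (u := 1 - y) (by linarith) (by linarith)
    (fun m h1 h2 => near_one_gap m y hy h1 h2)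
  have h3 := pow_mul_pow_three m
  have hpm := pow_pos' m
  have hp3 : (0:ℝ) < (3:ℝ)^m := pow_pos (by norm_num) m
  set z : ℝ := (3:ℝ)^m * (y - 1) + 1 with hz
  have hzC : z ∈ C := Z1 m y hy hm2
  have hz1 : 1 - z = (3:ℝ)^m * (1 - y) := by rw [hz]; ring
  clear_value z
  have hzub : z ≤ 1/3 := by
    have h := mul_le_mul_of_nonneg_left hm1 hp3.le
    have e : (3:ℝ)^m * ((2/3) * (1/3:ℝ)^m) = 2/3 := by linear_combination (2/3) * h3
    rw [e] at h
    rw [← hz1] at h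
    linarith
  have hzlb : 0 ≤ z := (cantorSet_subset_unitInterval hzC).1
  have hw : 3 * z ∈ C := mem_triple hzC (by linarith)
  rcases C_gap hw with hcase | hcase
  · -- w = 3z ≤ 1/3, i.e. z ≤ 1/9 : preimage on the left (A side)
    set x : ℝ := (1/3:ℝ)^m * (3 * z - 1) + 1 with hxdef
    have hxC : x ∈ C := Z2 m (3 * z) hw
    have hx1 : 1 - x = (1/3:ℝ)^m * (1 - 3 * z) := by rw [hxdef]; ring
    clear_value x
    have hxb1 : (2/3) * (1/3:ℝ)^m ≤ 1 - x := by
      rw [hx1]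
      have h := mul_le_mul_of_nonneg_left (by linarith : (2/3:ℝ) ≤ 1 - 3 * z) hpm.le
      linarith
    have hxb2 : 1 - x ≤ (1/3:ℝ)^m := by
      rw [hx1]
      have h := mul_le_mul_of_nonneg_left (by linarith : (1:ℝ) - 3 * z ≤ 1) hpm.le
      linarith
    have hxlt : x < 1 := by linarith
    have habs : |x - 1| = 1 - x := by rw [abs_of_neg (by linarith)]; ring
    have hnn : nn x = m := nn_eq (by rw [habs]; exact hxb1) (by rw [habs]; exact hxb2)
    refine ⟨x, Or.inl hxC, ?_⟩
    rw [ff_eq_A hxlt, hnn, hxdef, hz]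
    linear_combination (y - 1) * h3
  · -- w = 3z ≥ 2/3, i.e. z ≥ 2/9 : preimage on the right (B side)
    set x : ℝ := (1/3:ℝ)^m * (3 * z) + 1 with hxdef
    have hxm : (1/3:ℝ)^m * (3 * z) ∈ C := Z0' m (3 * z) hw
    have hxD : x ∈ Dset := Or.inr ⟨(1/3:ℝ)^m * (3 * z), hxm, rfl⟩
    have hx1 : x - 1 = (1/3:ℝ)^m * (3 * z) := by rw [hxdef]; ring
    clear_value x
    have hw1 : 3 * z ≤ 1 := (cantorSet_subset_unitInterval hw).2
    have hxb1 : (2/3) * (1/3:ℝ)^m ≤ x - 1 := by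
      rw [hx1]
      have h := mul_le_mul_of_nonneg_left hcase hpm.le
      linarith
    have hxb2 : x - 1 ≤ (1/3:ℝ)^m := by
      rw [hx1]
      have h := mul_le_mul_of_nonneg_left hw1 hpm.le
      linarith
    have hxgt : 1 < x := by linarith
    have habs : |x - 1| = x - 1 := abs_of_pos (by linarith)
    have hnn : nn x = m := nn_eq (by rw [habs]; exact hxb1) (by rw [habs]; exact hxb2)
    refine ⟨x, hxD, ?_⟩
    rw [ff_eq_B hxgt, hnn, hxdef, hz]
    linear_combination (y - 1) * h3

end

end Stmt9Aux

theorem stmt9 :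
    LipschitzEquivalent (cantorSet ∪ (fun x => x + 1) '' cantorSet) cantorSet := by
  classical
  refine ⟨fun x => ⟨Stmt9Aux.ff x.1, Stmt9Aux.ff_mem x.2⟩, 18, by norm_num, ⟨?_, ?_⟩, ?_⟩
  · intro a b hab
    apply Subtype.ext
    exact Stmt9Aux.ff_inj a.2 b.2 (congrArg Subtype.val hab)
  · intro y
    obtain ⟨x, hxD, hfx⟩ := Stmt9Aux.ff_surj y.2
    exact ⟨⟨x, hxD⟩, Subtype.ext hfx⟩
  · intro a b
    obtain ⟨h1, h2⟩ := Stmt9Aux.main_est a.2 b.2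
    rw [Real.dist_eq, Real.dist_eq]
    constructor
    · rw [inv_eq_one_div]
      linarith
    · exact h2
end

section
/- Let K ⊆ ℝ be the unique nonempty compact set satisfying K = S₁(K) ∪ S₂(K) ∪ S₃(K), where S₁(x) = x/5, S₂(x) = (4 − x)/5, S₃(x) = (x + 4)/5, and let K' ⊆ ℝ be the unique nonempty compact set satisfying K' = S'₁(K') ∪ S'₂(K') ∪ S'₃(K'), where S'ᵢ(x) = (x + 2(i − 1))/5 for i = 1, 2, 3. Then K is Lipschitz equivalent to K'. -/
noncomputable section
namespace Stmt10Aux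
open Set

/-- Uniqueness of the attractor for a finite system of (1/5)-contractions. -/
lemma attractor_unique {ι : Type*} (f : ι → ℝ → ℝ)
    (hf : ∀ i x y, dist (f i x) (f i y) ≤ dist x y / 5)
    {A B : Set ℝ} (hAne : A.Nonempty) (hAc : IsCompact A)
    (hBne : B.Nonempty) (hBc : IsCompact B)
    (hAeq : A = ⋃ i, f i '' A) (hBeq : B = ⋃ i, f i '' B) : A = B := by
  have hfin : EMetric.hausdorffEdist A B ≠ ⊤ :=
    Metric.hausdorffEdist_ne_top_of_nonempty_of_bounded hAne hBne hAc.isBounded hBc.isBounded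
  set r := Metric.hausdorffDist A B with hr
  have hr0 : 0 ≤ r := Metric.hausdorffDist_nonneg
  have main : ∀ (C D : Set ℝ), C.Nonempty → IsCompact C → D.Nonempty → IsCompact D →
      C = ⋃ i, f i '' C → D = ⋃ i, f i '' D →
      ∀ x ∈ C, ∃ y ∈ D, dist x y ≤ Metric.hausdorffDist C D / 5 := by
    intro C D hCne hCc hDne hDc hCeq hDeq x hx
    rw [hCeq] at hx
    obtain ⟨i, a, ha, rfl⟩ := by simpa using hx
    obtain ⟨b, hb, hab⟩ := hDc.exists_infDist_eq_dist hDne a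
    refine ⟨f i b, by rw [hDeq]; exact mem_iUnion.2 ⟨i, mem_image_of_mem _ hb⟩, ?_⟩
    have hfinCD : EMetric.hausdorffEdist C D ≠ ⊤ :=
      Metric.hausdorffEdist_ne_top_of_nonempty_of_bounded hCne hDne hCc.isBounded hDc.isBounded
    have h2 : Metric.infDist a D ≤ Metric.hausdorffDist C D :=
      Metric.infDist_le_hausdorffDist_of_mem ha hfinCD
    calc dist (f i a) (f i b) ≤ dist a b / 5 := hf i a b
      _ ≤ Metric.hausdorffDist C D / 5 := by rw [← hab]; linarith
  have key : r ≤ r / 5 := by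
    apply Metric.hausdorffDist_le_of_mem_dist (by linarith)
    · exact main A B hAne hAc hBne hBc hAeq hBeq
    · intro x hx
      have := main B A hBne hBc hAne hAc hBeq hAeq x hx
      rwa [Metric.hausdorffDist_comm] at this
  have : r = 0 := by linarith
  exact (hAc.isClosed.hausdorffDist_zero_iff_eq hBc.isClosed hfin).1 this


abbrev Sg := ℕ → Fin 3

def v (σ : Sg) : ℝ := ∑' n, 2 * ((σ n : ℕ) : ℝ) / 5 ^ (n + 1)

lemma term_nonneg (σ : Sg) (n : ℕ) : 0 ≤ 2 * ((σ n : ℕ) : ℝ) / 5 ^ (n + 1) := by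
  positivity

lemma term_le (σ : Sg) (n : ℕ) : 2 * ((σ n : ℕ) : ℝ) / 5 ^ (n + 1) ≤ (4/5) * (1/5) ^ n := by
  have h : ((σ n : ℕ) : ℝ) ≤ 2 := by
    have := (σ n).is_lt
    exact_mod_cast Nat.lt_succ_iff.1 this
  rw [div_le_iff₀ (by positivity)]
  have : ((4:ℝ)/5) * (1/5)^n * 5^(n+1) = 4 := by
    rw [pow_succ]
    field_simp
    rw [← mul_pow]; norm_num
  rw [this]
  linarith

lemma summable_v (σ : Sg) : Summable (fun n => 2 * ((σ n : ℕ) : ℝ) / 5 ^ (n + 1)) := by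
  apply Summable.of_nonneg_of_le (term_nonneg σ) (term_le σ)
  exact (summable_geometric_of_lt_one (by norm_num) (by norm_num)).mul_left _

lemma v_nonneg (σ : Sg) : 0 ≤ v σ := tsum_nonneg (term_nonneg σ)

lemma v_le_one (σ : Sg) : v σ ≤ 1 := by
  have h := Summable.tsum_le_tsum (term_le σ) (summable_v σ)
    ((summable_geometric_of_lt_one (by norm_num) (by norm_num)).mul_left _)
  calc v σ ≤ ∑' n : ℕ, (4/5) * (1/5:ℝ) ^ n := h
    _ = 1 := by
        rw [tsum_mul_left, tsum_geometric_of_lt_one (by norm_num) (by norm_num)]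
        norm_num

def cons (d : Fin 3) (σ : Sg) : Sg := fun n => Nat.casesOn n d σ

@[simp] lemma cons_zero (d : Fin 3) (σ : Sg) : cons d σ 0 = d := rfl
@[simp] lemma cons_succ (d : Fin 3) (σ : Sg) (n : ℕ) : cons d σ (n+1) = σ n := rfl

def shf (σ : Sg) : Sg := fun n => σ (n + 1)

lemma cons_shf (σ : Sg) : cons (σ 0) (shf σ) = σ := by
  funext n; cases n <;> rfl

lemma v_cons (d : Fin 3) (σ : Sg) : v (cons d σ) = (2 * ((d : ℕ) : ℝ) + v σ) / 5 := by
  unfold v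
  rw [Summable.tsum_eq_zero_add (summable_v (cons d σ))]
  simp only [cons_zero, cons_succ]
  have : ∀ n : ℕ, 2 * ((σ n : ℕ) : ℝ) / 5 ^ (n + 1 + 1) = (2 * ((σ n : ℕ) : ℝ) / 5 ^ (n + 1)) / 5 := by
    intro n; rw [pow_succ]; ring
  simp_rw [this]
  rw [tsum_div_const]
  ring

lemma v_rec (σ : Sg) : v σ = (2 * ((σ 0 : ℕ) : ℝ) + v (shf σ)) / 5 := by
  conv_lhs => rw [← cons_shf σ]
  exact v_cons _ _

lemma v_diff_le (n : ℕ) : ∀ (σ τ : Sg), (∀ i < n, σ i = τ i) → |v σ - v τ| ≤ 1 / 5 ^ n := by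
  induction n with
  | zero =>
    intro σ τ _
    rw [abs_sub_le_iff]
    constructor <;> simp <;> nlinarith [v_nonneg σ, v_nonneg τ, v_le_one σ, v_le_one τ]
  | succ n ih =>
    intro σ τ h
    have h0 : σ 0 = τ 0 := h 0 (Nat.succ_pos n)
    have hs : ∀ i < n, shf σ i = shf τ i := fun i hi => h (i+1) (Nat.succ_lt_succ hi)
    have := ih (shf σ) (shf τ) hs
    rw [v_rec σ, v_rec τ, h0]
    have heq2 : (2 * ((τ 0 : ℕ) : ℝ) + v (shf σ)) / 5 - (2 * ((τ 0 : ℕ) : ℝ) + v (shf τ)) / 5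
        = (v (shf σ) - v (shf τ)) / 5 := by ring
    rw [heq2, abs_div, abs_of_pos (by norm_num : (0:ℝ) < 5)]
    rw [pow_succ]
    calc |v (shf σ) - v (shf τ)| / 5 ≤ (1/5^n)/5 := by linarith [ih (shf σ) (shf τ) hs]
      _ = 1 / (5^n * 5) := by ring

lemma digit_dist {a b : Fin 3} (h : a ≠ b) : 2 ≤ |2 * ((a : ℕ) : ℝ) - 2 * ((b : ℕ) : ℝ)| := by
  have : ((a:ℕ):ℝ) ≠ ((b:ℕ):ℝ) := by
    simp only [ne_eq, Nat.cast_inj]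
    exact fun hh => h (Fin.ext hh)
  have ha := a.is_lt; have hb := b.is_lt
  interval_cases ha' : (a : ℕ) <;> interval_cases hb' : (b : ℕ) <;> simp_all <;> norm_num

lemma v_diff_ge (n : ℕ) : ∀ (σ τ : Sg), (∀ i < n, σ i = τ i) → σ n ≠ τ n →
    1 / 5 ^ (n + 1) ≤ |v σ - v τ| := by
  induction n with
  | zero =>
    intro σ τ _ hne
    rw [v_rec σ, v_rec τ]
    have h1 : 2 ≤ |2 * ((σ 0 : ℕ) : ℝ) - 2 * ((τ 0 : ℕ) : ℝ)| := digit_dist hne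
    have h2 : |v (shf σ) - v (shf τ)| ≤ 1 := by
      rw [abs_sub_le_iff]
      constructor <;> nlinarith [v_nonneg (shf σ), v_nonneg (shf τ), v_le_one (shf σ), v_le_one (shf τ)]
    have : (2 * ((σ 0 : ℕ) : ℝ) + v (shf σ)) / 5 - (2 * ((τ 0 : ℕ) : ℝ) + v (shf τ)) / 5
        = ((2 * ((σ 0 : ℕ) : ℝ) - 2 * ((τ 0 : ℕ) : ℝ)) + (v (shf σ) - v (shf τ))) / 5 := by ring
    rw [this, abs_div]
    have habs : 1 ≤ |(2 * ((σ 0 : ℕ) : ℝ) - 2 * ((τ 0 : ℕ) : ℝ)) + (v (shf σ) - v (shf τ))| := by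
      set d := 2 * ((σ 0 : ℕ) : ℝ) - 2 * ((τ 0 : ℕ) : ℝ)
      set t := v (shf σ) - v (shf τ)
      have h3 : |d| ≤ |d + t| + |t| := by
        have := abs_add_le (d + t) (-t)
        simpa using this
      linarith
    rw [abs_of_pos (by norm_num : (0:ℝ) < 5)]
    norm_num
    linarith
  | succ n ih =>
    intro σ τ h hne
    have h0 : σ 0 = τ 0 := h 0 (Nat.succ_pos n)
    have hs : ∀ i < n, shf σ i = shf τ i := fun i hi => h (i+1) (Nat.succ_lt_succ hi)
    have hsne : shf σ n ≠ shf τ n := hne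
    have := ih (shf σ) (shf τ) hs hsne
    rw [v_rec σ, v_rec τ, h0]
    have heq2 : (2 * ((τ 0 : ℕ) : ℝ) + v (shf σ)) / 5 - (2 * ((τ 0 : ℕ) : ℝ) + v (shf τ)) / 5
        = (v (shf σ) - v (shf τ)) / 5 := by ring
    rw [heq2, abs_div, abs_of_pos (by norm_num : (0:ℝ) < 5)]
    rw [pow_succ]
    calc 1 / (5^(n+1) * 5) = (1/5^(n+1))/5 := by ring
      _ ≤ |v (shf σ) - v (shf τ)| / 5 := by linarith



lemma exists_first_diff {σ τ : Sg} (h : σ ≠ τ) :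
    ∃ n, (∀ i < n, σ i = τ i) ∧ σ n ≠ τ n := by
  classical
  have hex : ∃ n, σ n ≠ τ n := by
    by_contra hc
    push_neg at hc
    exact h (funext hc)
  refine ⟨Nat.find hex, fun i hi => ?_, Nat.find_spec hex⟩
  by_contra hne
  exact Nat.find_min hex hi hne

lemma v_injective : Function.Injective v := by
  intro σ τ hv
  by_contra h
  obtain ⟨n, hag, hne⟩ := exists_first_diff h
  have h1 := v_diff_ge n σ τ hag hne
  rw [hv, sub_self, abs_zero] at h1
  have : (0:ℝ) < 1 / 5 ^ (n+1) := by positivity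
  linarith

lemma v_continuous : Continuous v := by
  rw [continuous_iff_continuousAt]
  intro σ
  rw [ContinuousAt, Metric.tendsto_nhds]
  intro ε hε
  obtain ⟨n, hn⟩ : ∃ n : ℕ, (1:ℝ) / 5 ^ n < ε := by
    obtain ⟨n, hn⟩ := pow_unbounded_of_one_lt (1/ε) (by norm_num : (1:ℝ) < 5)
    refine ⟨n, ?_⟩
    rw [div_lt_iff₀ (by positivity)]
    rw [div_lt_iff₀ hε] at hn
    nlinarith [pow_pos (by norm_num : (0:ℝ) < 5) n]
  have hev : ∀ᶠ τ in nhds σ, ∀ i ∈ Finset.range n, τ i = σ i := by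
    rw [Filter.eventually_all_finset]
    intro i _
    have hopen : IsOpen {τ : Sg | τ i = σ i} := by
      have : {τ : Sg | τ i = σ i} = (fun τ : Sg => τ i) ⁻¹' {σ i} := rfl
      rw [this]
      exact (continuous_apply i).isOpen_preimage _ (isOpen_discrete _)
    exact hopen.mem_nhds rfl
  filter_upwards [hev] with τ hτ
  have := v_diff_le n τ σ (fun i hi => hτ i (Finset.mem_range.2 hi))
  calc dist (v τ) (v σ) = |v τ - v σ| := Real.dist_eq _ _
    _ ≤ 1 / 5 ^ n := this
    _ < ε := hn

lemma range_v_invariant :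
    Set.range v = ⋃ i : Fin 3, (fun x => (x + 2 * ((i:ℕ):ℝ)) / 5) '' Set.range v := by
  ext x
  constructor
  · rintro ⟨σ, rfl⟩
    refine Set.mem_iUnion.2 ⟨σ 0, ⟨v (shf σ), Set.mem_range_self _, ?_⟩⟩
    rw [show v σ = (2 * ((σ 0 : ℕ) : ℝ) + v (shf σ)) / 5 from v_rec σ]
    ring
  · intro hx
    rw [Set.mem_iUnion] at hx
    obtain ⟨i, y, ⟨τ, rfl⟩, rfl⟩ := hx
    exact ⟨cons i τ, by rw [v_cons]; ring⟩

attribute [irreducible] v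

open Classical in
/-- The symbolic bijection from the one-sided shift to two copies of it. -/
def Psi (σ : Sg) : Sg ⊕ Sg :=
  if h : ∃ n, σ n ≠ 2 then
    let k := Nat.find h
    if σ k = 1 then Sum.inr (fun n => if n < k then 2 else if n = k then 0 else σ n)
    else if k = 0 then Sum.inl (shf σ)
    else Sum.inr (fun n => if n < k - 1 then 2 else if n = k - 1 then 1 else σ (n + 1))
  else Sum.inr σ

lemma psi_R0 (σ : Sg) : Psi (cons 0 σ) = Sum.inl σ := by
  classical
  have h : ∃ n, (cons 0 σ) n ≠ 2 := ⟨0, by simp⟩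
  have hk : Nat.find h = 0 := Nat.le_zero.1 (Nat.find_le (by simp))
  rw [Psi, dif_pos h]
  simp only [hk]
  rw [if_neg (by simp)]
  simp only [if_true, if_pos rfl]
  have : shf (cons 0 σ) = σ := by funext n; rfl
  rw [this]

lemma psi_R1 (σ : Sg) : Psi (cons 1 σ) = Sum.inr (cons 0 σ) := by
  classical
  have h : ∃ n, (cons 1 σ) n ≠ 2 := ⟨0, by simp⟩
  have hk : Nat.find h = 0 := Nat.le_zero.1 (Nat.find_le (by simp))
  rw [Psi, dif_pos h]
  simp only [hk]
  rw [if_pos (by simp)]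
  congr 1
  funext n
  cases n with
  | zero => simp
  | succ m => simp

lemma psi_R2 (σ : Sg) :
    Psi (cons 2 σ) = Sum.elim (fun τ => Sum.inr (cons 1 τ)) (fun τ => Sum.inr (cons 2 τ)) (Psi σ) := by
  classical
  by_cases hσ : ∃ n, σ n ≠ 2
  · have hkspec : σ (Nat.find hσ) ≠ 2 := Nat.find_spec hσ
    have h : ∃ n, (cons 2 σ) n ≠ 2 := ⟨Nat.find hσ + 1, by simpa using hkspec⟩
    set k := Nat.find hσ with hkdef
    have hmin : ∀ i < k, σ i = 2 := fun i hi => not_not.1 (Nat.find_min hσ hi)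
    have hk' : Nat.find h = k + 1 := by
      rw [Nat.find_eq_iff]
      refine ⟨by simpa using hkspec, ?_⟩
      intro i hi
      rw [not_not]
      cases i with
      | zero => rfl
      | succ m => exact hmin m (by omega)
    rw [Psi, dif_pos h, Psi, dif_pos hσ]
    simp only [hk', ← hkdef]
    have hc2 : cons 2 σ (k + 1) = σ k := rfl
    by_cases h1 : σ k = 1
    · rw [if_pos (by rw [hc2]; exact h1), if_pos h1]
      simp only [Sum.elim_inr]
      congr 1
      funext n
      cases n with
      | zero =>
        simp only [cons_zero, cons_succ, hk', ← hkdef]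
        split_ifs <;> first | rfl | omega
      | succ m =>
        simp only [cons_zero, cons_succ, hk', ← hkdef]
        split_ifs <;> first | rfl | omega
    · rw [if_neg (by rw [hc2]; exact h1), if_neg (Nat.succ_ne_zero k), if_neg h1]
      by_cases hk0 : k = 0
      · rw [if_pos hk0]
        simp only [Sum.elim_inl]
        congr 1
        funext n
        cases n with
        | zero =>
          simp only [cons_zero, cons_succ, hk', ← hkdef]
          split_ifs <;> first | rfl | omega
        | succ m =>
          simp only [cons_zero, cons_succ, hk', ← hkdef]
          split_ifs <;> first | rfl | omega
      · rw [if_neg hk0]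
        simp only [Sum.elim_inr]
        congr 1
        funext n
        cases n with
        | zero =>
          simp only [cons_zero, cons_succ, hk', ← hkdef]
          split_ifs <;> first | rfl | omega
        | succ m =>
          simp only [cons_zero, cons_succ, hk', ← hkdef]
          split_ifs <;> first | rfl | omega
  · have hall : ∀ n, σ n = 2 := fun n => not_not.1 (fun hc => hσ ⟨n, hc⟩)
    have h2 : ¬ ∃ n, (cons 2 σ) n ≠ 2 := by
      rintro ⟨n, hn⟩
      cases n with
      | zero => simp at hn
      | succ m => exact hn (by simp [hall m])
    rw [Psi, dif_neg h2, Psi, dif_neg hσ]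
    rfl

def W (σ : Sg) : ℝ := Sum.elim v (fun τ => 2 + v τ) (Psi σ)

lemma W_nonneg (σ : Sg) : 0 ≤ W σ := by
  rw [W]
  rcases Psi σ with τ | τ <;> simp <;> linarith [v_nonneg τ]

lemma W_le_three (σ : Sg) : W σ ≤ 3 := by
  rw [W]
  rcases Psi σ with τ | τ <;> simp <;> linarith [v_le_one τ, v_nonneg τ]

lemma W_cons0 (σ : Sg) : W (cons 0 σ) = v σ := by rw [W, psi_R0]; rfl

lemma W_cons1 (σ : Sg) : W (cons 1 σ) = 2 + v σ / 5 := by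
  rw [W, psi_R1]
  simp [v_cons]

lemma W_cons2 (σ : Sg) : W (cons 2 σ) = (12 + W σ) / 5 := by
  rw [W, psi_R2, W]
  rcases Psi σ with τ | τ <;> simp [v_cons] <;> ring

lemma abs_shift_div (c x y : ℝ) : |(c + x)/5 - (c + y)/5| = |x - y|/5 := by
  have h : (c + x)/5 - (c + y)/5 = (x - y)/5 := by ring
  rw [h, abs_div, abs_of_pos (by norm_num : (0:ℝ) < 5)]

lemma W_lip : ∀ (n : ℕ) (σ τ : Sg), (∀ i < n, σ i = τ i) → σ n ≠ τ n →
    |v σ - v τ| / 5 ≤ |W σ - W τ| ∧ |W σ - W τ| ≤ 25 * |v σ - v τ| := by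
  have aux01 : ∀ σ τ : Sg,
      |v (cons 0 σ) - v (cons 1 τ)| / 5 ≤ |W (cons 0 σ) - W (cons 1 τ)| ∧
      |W (cons 0 σ) - W (cons 1 τ)| ≤ 25 * |v (cons 0 σ) - v (cons 1 τ)| := by
    intro σ τ
    have hx0 := v_nonneg σ; have hx1 := v_le_one σ
    have hy0 := v_nonneg τ; have hy1 := v_le_one τ
    rw [W_cons0, W_cons1, v_cons, v_cons]
    push_cast [show ((0:Fin 3):ℕ) = 0 from rfl, show ((1:Fin 3):ℕ) = 1 from rfl,
      show ((2:Fin 3):ℕ) = 2 from rfl]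
    rw [abs_of_nonpos (by linarith), abs_of_nonpos (by linarith)]
    constructor <;> nlinarith
  have aux02 : ∀ σ τ : Sg,
      |v (cons 0 σ) - v (cons 2 τ)| / 5 ≤ |W (cons 0 σ) - W (cons 2 τ)| ∧
      |W (cons 0 σ) - W (cons 2 τ)| ≤ 25 * |v (cons 0 σ) - v (cons 2 τ)| := by
    intro σ τ
    have hx0 := v_nonneg σ; have hx1 := v_le_one σ
    have hy0 := v_nonneg τ; have hy1 := v_le_one τ
    have hw0 := W_nonneg τ; have hw1 := W_le_three τ
    rw [W_cons0, W_cons2, v_cons, v_cons]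
    push_cast [show ((0:Fin 3):ℕ) = 0 from rfl, show ((1:Fin 3):ℕ) = 1 from rfl,
      show ((2:Fin 3):ℕ) = 2 from rfl]
    rw [abs_of_nonpos (by linarith), abs_of_nonpos (by linarith)]
    constructor <;> nlinarith
  have aux12 : ∀ σ τ : Sg,
      |v (cons 1 σ) - v (cons 2 τ)| / 5 ≤ |W (cons 1 σ) - W (cons 2 τ)| ∧
      |W (cons 1 σ) - W (cons 2 τ)| ≤ 25 * |v (cons 1 σ) - v (cons 2 τ)| := by
    intro σ τ
    have hx0 := v_nonneg σ; have hx1 := v_le_one σ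
    have hy0 := v_nonneg τ; have hy1 := v_le_one τ
    have hw0 := W_nonneg τ; have hw1 := W_le_three τ
    rw [W_cons1, W_cons2, v_cons, v_cons]
    push_cast [show ((0:Fin 3):ℕ) = 0 from rfl, show ((1:Fin 3):ℕ) = 1 from rfl,
      show ((2:Fin 3):ℕ) = 2 from rfl]
    rw [abs_of_nonpos (by linarith), abs_of_nonpos (by linarith)]
    constructor <;> nlinarith
  have symm : ∀ σ τ : Sg,
      (|v σ - v τ| / 5 ≤ |W σ - W τ| ∧ |W σ - W τ| ≤ 25 * |v σ - v τ|) →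
      (|v τ - v σ| / 5 ≤ |W τ - W σ| ∧ |W τ - W σ| ≤ 25 * |v τ - v σ|) := by
    intro σ τ h
    rwa [abs_sub_comm (v τ), abs_sub_comm (W τ)]
  intro n
  induction n with
  | zero =>
    intro σ τ hag hne
    rw [← cons_shf σ, ← cons_shf τ]
    have h2 : ∀ d : Fin 3, d = 0 ∨ d = 1 ∨ d = 2 := by decide
    rcases h2 (σ 0) with ha | ha | ha <;> rcases h2 (τ 0) with hb | hb | hb <;> rw [ha, hb]
    · exact absurd (ha.trans hb.symm) hne
    · exact aux01 _ _
    · exact aux02 _ _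
    · exact symm _ _ (aux01 _ _)
    · exact absurd (ha.trans hb.symm) hne
    · exact aux12 _ _
    · exact symm _ _ (aux02 _ _)
    · exact symm _ _ (aux12 _ _)
    · exact absurd (ha.trans hb.symm) hne
  | succ n ih =>
    intro σ τ hag hne
    have h0 : σ 0 = τ 0 := hag 0 (by omega)
    have hs : ∀ i < n, shf σ i = shf τ i := fun i hi => hag (i+1) (by omega)
    have hsne : shf σ n ≠ shf τ n := hne
    have IH := ih (shf σ) (shf τ) hs hsne
    have habs0 := abs_nonneg (v (shf σ) - v (shf τ))
    rw [← cons_shf σ, ← cons_shf τ, h0]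
    have h2 : ∀ d : Fin 3, d = 0 ∨ d = 1 ∨ d = 2 := by decide
    rcases h2 (τ 0) with hb | hb | hb <;> rw [hb]
    · rw [W_cons0, W_cons0, v_cons, v_cons, abs_shift_div]
      constructor <;> linarith
    · rw [W_cons1, W_cons1, v_cons, v_cons, abs_shift_div]
      have : |2 + v (shf σ) / 5 - (2 + v (shf τ) / 5)| = |v (shf σ) - v (shf τ)| / 5 := by
        have h : 2 + v (shf σ) / 5 - (2 + v (shf τ) / 5) = (v (shf σ) - v (shf τ))/5 := by ring
        rw [h, abs_div, abs_of_pos (by norm_num : (0:ℝ) < 5)]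
      rw [this]
      constructor <;> linarith
    · rw [W_cons2, W_cons2, v_cons, v_cons, abs_shift_div, abs_shift_div]
      constructor <;> linarith [IH.1, IH.2]

lemma W_injective : Function.Injective W := by
  intro σ τ h
  by_contra hne
  obtain ⟨n, hag, hd⟩ : ∃ n, (∀ i < n, σ i = τ i) ∧ σ n ≠ τ n := by
    classical
    have hex : ∃ n, σ n ≠ τ n := by
      by_contra hc; push_neg at hc; exact hne (funext hc)
    exact ⟨Nat.find hex, fun i hi => not_not.1 (Nat.find_min hex hi), Nat.find_spec hex⟩
  have h1 := (W_lip n σ τ hag hd).1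
  have h2 : v σ ≠ v τ := by
    intro hv
    have := v_injective hv
    exact hne this
  have h3 : 0 < |v σ - v τ| := abs_pos.2 (sub_ne_zero.2 h2)
  rw [h, sub_self, abs_zero] at h1
  linarith

lemma psi_surj_inr : ∀ (j : ℕ) (τ : Sg), (∀ i < j, τ i = 2) → τ j ≠ 2 →
    ∃ σ, Psi σ = Sum.inr τ := by
  intro j
  induction j with
  | zero =>
    intro τ hmin hj
    have h2 : ∀ d : Fin 3, d = 0 ∨ d = 1 ∨ d = 2 := by decide
    rcases h2 (τ 0) with h | h | h
    · refine ⟨cons 1 (shf τ), ?_⟩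
      rw [psi_R1]
      congr 1
      rw [← h, cons_shf]
    · refine ⟨cons 2 (cons 0 (shf τ)), ?_⟩
      rw [psi_R2, psi_R0]
      simp only [Sum.elim_inl]
      congr 1
      rw [← h, cons_shf]
    · exact absurd h hj
  | succ j ih =>
    intro τ hmin hj
    obtain ⟨σ₁, hσ₁⟩ := ih (shf τ) (fun i hi => hmin (i+1) (by omega)) hj
    refine ⟨cons 2 σ₁, ?_⟩
    rw [psi_R2, hσ₁]
    simp only [Sum.elim_inr]
    congr 1
    rw [← hmin 0 (by omega), cons_shf]

lemma psi_surj : Function.Surjective Psi := by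
  classical
  rintro (τ | τ)
  · exact ⟨cons 0 τ, psi_R0 τ⟩
  · by_cases h : ∃ n, τ n ≠ 2
    · exact psi_surj_inr (Nat.find h) τ (fun i hi => not_not.1 (Nat.find_min h hi))
        (Nat.find_spec h)
    · refine ⟨τ, ?_⟩
      rw [Psi, dif_neg h]

lemma range_W : Set.range W = Set.range v ∪ (fun x => 2 + x) '' Set.range v := by
  ext z
  constructor
  · rintro ⟨σ, rfl⟩
    rw [W]
    rcases Psi σ with τ | τ
    · exact Or.inl ⟨τ, rfl⟩
    · exact Or.inr ⟨v τ, ⟨τ, rfl⟩, rfl⟩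
  · rintro (⟨τ, rfl⟩ | ⟨y, ⟨τ, rfl⟩, rfl⟩)
    · obtain ⟨σ, hσ⟩ := psi_surj (Sum.inl τ)
      exact ⟨σ, by rw [W, hσ]; rfl⟩
    · obtain ⟨σ, hσ⟩ := psi_surj (Sum.inr τ)
      exact ⟨σ, by rw [W, hσ]; rfl⟩


lemma image_congr_fun {f g : ℝ → ℝ} (h : ∀ x, f x = g x) (S : Set ℝ) : f '' S = g '' S := by
  rw [funext h]

/-- Peeling off the first branch of a self-similar decomposition. -/
lemma peel {A P : Set ℝ} (hAcl : IsClosed A) (hAne : A.Nonempty)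
    (hA01 : A ⊆ Set.Icc 0 1) (hrec : A = (fun x => x / 5) '' A ∪ P)
    (hPlb : ∀ p ∈ P, 2/5 ≤ p) :
    A = {0} ∪ ⋃ n : ℕ, (fun x => x / 5 ^ n) '' P := by
  have hPsubA : P ⊆ A := by
    intro p hp; rw [hrec]; exact Or.inr hp
  have hdiv : ∀ z ∈ A, z / 5 ∈ A := by
    intro z hz
    rw [hrec]; exact Or.inl ⟨z, hz, rfl⟩
  have hpieces : ∀ n : ℕ, ∀ p ∈ P, p / 5 ^ n ∈ A := by
    intro n
    induction n with
    | zero => intro p hp; simpa using hPsubA hp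
    | succ n ih =>
      intro p hp
      have := hdiv _ (ih p hp)
      have heq : p / 5 ^ n / 5 = p / 5 ^ (n+1) := by rw [pow_succ]; ring
      rwa [heq] at this
  have h0A : (0:ℝ) ∈ A := by
    obtain ⟨a, ha⟩ := hAne
    have hseq : ∀ n : ℕ, a / 5 ^ n ∈ A := by
      intro n
      induction n with
      | zero => simpa using ha
      | succ n ih =>
        have := hdiv _ ih
        have heq : a / 5 ^ n / 5 = a / 5 ^ (n+1) := by rw [pow_succ]; ring
        rwa [heq] at this
    have htend : Filter.Tendsto (fun n : ℕ => a / 5 ^ n) Filter.atTop (nhds 0) := by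
      have : (fun n : ℕ => a / 5 ^ n) = fun n => a * (1/5:ℝ) ^ n := by
        funext n; rw [div_pow]; ring
      rw [this]
      have := tendsto_pow_atTop_nhds_zero_of_lt_one (by norm_num : (0:ℝ) ≤ 1/5) (by norm_num)
      simpa using this.const_mul a
    exact hAcl.mem_of_tendsto htend (Filter.Eventually.of_forall hseq)
  have claim : ∀ n : ℕ, ∀ x ∈ A, (∃ m : ℕ, ∃ p ∈ P, x = p / 5 ^ m) ∨ ∃ z ∈ A, x = z / 5 ^ n := by
    intro n
    induction n with
    | zero => intro x hx; exact Or.inr ⟨x, hx, by simp⟩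
    | succ n ih =>
      intro x hx
      rcases ih x hx with h | ⟨z, hz, rfl⟩
      · exact Or.inl h
      · rw [hrec] at hz
        rcases hz with ⟨z', hz', rfl⟩ | hz
        · exact Or.inr ⟨z', hz', by rw [pow_succ]; ring⟩
        · exact Or.inl ⟨n, z, hz, rfl⟩
  ext x
  constructor
  · intro hx
    by_cases hx0 : x = 0
    · exact Or.inl hx0
    · have hxpos : 0 < x := lt_of_le_of_ne (hA01 hx).1 (Ne.symm hx0)
      obtain ⟨n, hn⟩ : ∃ n : ℕ, (1:ℝ) / 5 ^ n < x := by
        obtain ⟨n, hn⟩ := pow_unbounded_of_one_lt (1/x) (by norm_num : (1:ℝ) < 5)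
        refine ⟨n, ?_⟩
        rw [div_lt_iff₀ (by positivity)]
        rw [div_lt_iff₀ hxpos] at hn
        nlinarith [pow_pos (by norm_num : (0:ℝ) < 5) n]
      rcases claim n x hx with ⟨m, p, hp, rfl⟩ | ⟨z, hz, rfl⟩
      · exact Or.inr (mem_iUnion.2 ⟨m, ⟨p, hp, rfl⟩⟩)
      · exfalso
        have hz1 : z ≤ 1 := (hA01 hz).2
        have hppos : (0:ℝ) < 5 ^ n := by positivity
        have : z / 5 ^ n ≤ 1 / 5 ^ n := (div_le_div_iff_of_pos_right hppos).mpr hz1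
        linarith
  · rintro (rfl | hx)
    · exact h0A
    · obtain ⟨n, p, hp, rfl⟩ := by simpa using hx
      exact hpieces n p hp

lemma scale_sep {n m : ℕ} {a b : ℝ} (ha2 : 2 ≤ a) (ha5 : a ≤ 5) (hb2 : 2 ≤ b) (hb5 : b ≤ 5)
    (heq : a / 5 ^ (n+1) = b / 5 ^ (m+1)) : n = m := by
  rcases lt_trichotomy n m with h | h | h
  · exfalso
    have hp1 : (0:ℝ) < 5 ^ (n+1) := by positivity
    have hp2 : (0:ℝ) < 5 ^ (m+1) := by positivity
    rw [div_eq_div_iff hp1.ne' hp2.ne'] at heq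
    have h5 : (5:ℝ) ^ (n+1) * 5 ≤ 5 ^ (m+1) := by
      rw [← pow_succ]
      exact pow_le_pow_right₀ (by norm_num) (by omega)
    nlinarith
  · exact h
  · exfalso
    have hp1 : (0:ℝ) < 5 ^ (n+1) := by positivity
    have hp2 : (0:ℝ) < 5 ^ (m+1) := by positivity
    rw [div_eq_div_iff hp1.ne' hp2.ne'] at heq
    have h5 : (5:ℝ) ^ (m+1) * 5 ≤ 5 ^ (n+1) := by
      rw [← pow_succ]
      exact pow_le_pow_right₀ (by norm_num) (by omega)
    nlinarith


lemma K_bounds {K : Set ℝ} (hKne : K.Nonempty) (hKcpt : IsCompact K)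
    (hK : K = (fun x => x / 5) '' K ∪ (fun x => (4 - x) / 5) '' K ∪
              (fun x => (x + 4) / 5) '' K) :
    K ⊆ Set.Icc 0 1 := by
  obtain ⟨b, hbK, hbub⟩ := hKcpt.exists_isGreatest hKne
  obtain ⟨a, haK, halb⟩ := hKcpt.exists_isLeast hKne
  simp only [upperBounds, lowerBounds, Set.mem_setOf_eq] at hbub halb
  have hab : a ≤ b := hbub haK
  have acase : 0 ≤ a ∨ (4 - b)/5 ≤ a ∨ 1 ≤ a := by
    have ha' := haK
    rw [hK] at ha'
    rcases ha' with (⟨y, hy, hyeq⟩ | ⟨y, hy, hyeq⟩) | ⟨y, hy, hyeq⟩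
    · have : a ≤ y := halb hy
      exact Or.inl (by simp only at hyeq; linarith)
    · have : y ≤ b := hbub hy
      exact Or.inr (Or.inl (by simp only at hyeq; linarith))
    · have : a ≤ y := halb hy
      exact Or.inr (Or.inr (by simp only at hyeq; linarith))
  have bcase : b ≤ 0 ∨ b ≤ (4 - a)/5 ∨ b ≤ 1 := by
    have hb' := hbK
    rw [hK] at hb'
    rcases hb' with (⟨y, hy, hyeq⟩ | ⟨y, hy, hyeq⟩) | ⟨y, hy, hyeq⟩
    · have : y ≤ b := hbub hy
      exact Or.inl (by simp only at hyeq; linarith)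
    · have : a ≤ y := halb hy
      exact Or.inr (Or.inl (by simp only at hyeq; linarith))
    · have : y ≤ b := hbub hy
      exact Or.inr (Or.inr (by simp only at hyeq; linarith))
  have hfinal : 0 ≤ a ∧ b ≤ 1 := by
    rcases acase with h1 | h1 | h1 <;> rcases bcase with h2 | h2 | h2 <;>
      constructor <;> linarith
  intro x hx
  exact ⟨le_trans hfinal.1 (halb hx), le_trans (hbub hx) hfinal.2⟩

lemma cross_est {u w a b c d : ℝ} (hu : 0 < u) (hw : 0 < w) (h9 : 5*w ≤ u)
    (ha : 3 ≤ a) (ha5 : a ≤ 5) (hb : 0 ≤ b) (hb5 : b ≤ 5)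
    (hc : 2 ≤ c) (hc5 : c ≤ 5) (hd : 0 ≤ d) (hd5 : d ≤ 5) :
    25⁻¹ * |a*u - b*w| ≤ |c*u - d*w| ∧ |c*u - d*w| ≤ 25 * |a*u - b*w| := by
  have f1 : 3*u ≤ a*u := by nlinarith
  have f2 : a*u ≤ 5*u := by nlinarith
  have f3 : 0 ≤ b*w := by positivity
  have f4 : b*w ≤ 5*w := by nlinarith
  have f5 : 2*u ≤ c*u := by nlinarith
  have f6 : c*u ≤ 5*u := by nlinarith
  have f7 : 0 ≤ d*w := by positivity
  have f8 : d*w ≤ 5*w := by nlinarith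
  rw [abs_of_nonneg (by linarith), abs_of_nonneg (by linarith)]
  constructor <;> linarith


lemma hDA {K : Set ℝ}
    (hK : K = (fun x => x / 5) '' K ∪ (fun x => (4 - x) / 5) '' K ∪
              (fun x => (x + 4) / 5) '' K) :
    ((fun x : ℝ => -x) '' K ∪ K) =
      ⋃ i : Fin 3, (fun x : ℝ => (x + (4*((i:ℕ):ℝ) - 4))/5) ''
        ((fun x : ℝ => -x) '' K ∪ K) := by
  have h3 : ∀ j : Fin 3, j = 0 ∨ j = 1 ∨ j = 2 := by decide
  have c0 : ((((0:Fin 3)):ℕ):ℝ) = 0 := by norm_num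
  have c1 : ((((1:Fin 3)):ℕ):ℝ) = 1 := by norm_num [show ((1:Fin 3):ℕ) = 1 from rfl]
  have c2 : ((((2:Fin 3)):ℕ):ℝ) = 2 := by norm_num [show ((2:Fin 3):ℕ) = 2 from rfl]
  have hm1 : ∀ y ∈ K, y/5 ∈ K := by
    intro y hy; rw [hK]; exact Or.inl (Or.inl ⟨y, hy, rfl⟩)
  have hm2 : ∀ y ∈ K, (4-y)/5 ∈ K := by
    intro y hy; rw [hK]; exact Or.inl (Or.inr ⟨y, hy, rfl⟩)
  have hm3 : ∀ y ∈ K, (y+4)/5 ∈ K := by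
    intro y hy; rw [hK]; exact Or.inr ⟨y, hy, rfl⟩
  ext x
  rw [mem_iUnion]
  constructor
  · rintro (⟨y, hy, rfl⟩ | hy)
    · rw [hK] at hy
      rcases hy with (⟨z, hz, rfl⟩ | ⟨z, hz, rfl⟩) | ⟨z, hz, rfl⟩
      · exact ⟨1, -z, Or.inl ⟨z, hz, rfl⟩, by simp only [c1]; ring⟩
      · exact ⟨0, z, Or.inr hz, by simp only [c0]; ring⟩
      · exact ⟨0, -z, Or.inl ⟨z, hz, rfl⟩, by simp only [c0]; ring⟩
    · rw [hK] at hy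
      rcases hy with (⟨z, hz, rfl⟩ | ⟨z, hz, rfl⟩) | ⟨z, hz, rfl⟩
      · exact ⟨1, z, Or.inr hz, by simp only [c1]; ring⟩
      · exact ⟨2, -z, Or.inl ⟨z, hz, rfl⟩, by simp only [c2]; ring⟩
      · exact ⟨2, z, Or.inr hz, by simp only [c2]; ring⟩
  · rintro ⟨i, a, ha, rfl⟩
    rcases h3 i with rfl | rfl | rfl
    · rcases ha with ⟨y, hy, rfl⟩ | hy
      · exact Or.inl ⟨(y+4)/5, hm3 y hy, by simp only [c0]; ring⟩
      · exact Or.inl ⟨(4-a)/5, hm2 a hy, by simp only [c0]; ring⟩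
    · rcases ha with ⟨y, hy, rfl⟩ | hy
      · exact Or.inl ⟨y/5, hm1 y hy, by simp only [c1]; ring⟩
      · refine Or.inr ?_
        have heq : (fun x : ℝ => (x + (4*((((1:Fin 3)):ℕ):ℝ) - 4))/5) a = a/5 := by
          simp only [c1]; ring
        rw [heq]; exact hm1 a hy
    · rcases ha with ⟨y, hy, rfl⟩ | hy
      · refine Or.inr ?_
        have heq : (fun x : ℝ => (x + (4*((((2:Fin 3)):ℕ):ℝ) - 4))/5) ((fun x : ℝ => -x) y)
            = (4-y)/5 := by simp only [c2]; ring
        rw [heq]; exact hm2 y hy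
      · refine Or.inr ?_
        have heq : (fun x : ℝ => (x + (4*((((2:Fin 3)):ℕ):ℝ) - 4))/5) a = (a+4)/5 := by
          simp only [c2]; ring
        rw [heq]; exact hm3 a hy

lemma hDB {K' : Set ℝ}
    (hK' : K' = (fun x => x / 5) '' K' ∪ (fun x => (x + 2) / 5) '' K' ∪
              (fun x => (x + 4) / 5) '' K') :
    ((fun y : ℝ => 2*y - 1) '' K') =
      ⋃ i : Fin 3, (fun x : ℝ => (x + (4*((i:ℕ):ℝ) - 4))/5) ''
        ((fun y : ℝ => 2*y - 1) '' K') := by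
  have h3 : ∀ j : Fin 3, j = 0 ∨ j = 1 ∨ j = 2 := by decide
  have c0 : ((((0:Fin 3)):ℕ):ℝ) = 0 := by norm_num
  have c1 : ((((1:Fin 3)):ℕ):ℝ) = 1 := by norm_num [show ((1:Fin 3):ℕ) = 1 from rfl]
  have c2 : ((((2:Fin 3)):ℕ):ℝ) = 2 := by norm_num [show ((2:Fin 3):ℕ) = 2 from rfl]
  have hn1 : ∀ y ∈ K', y/5 ∈ K' := by
    intro y hy; rw [hK']; exact Or.inl (Or.inl ⟨y, hy, rfl⟩)
  have hn2 : ∀ y ∈ K', (y+2)/5 ∈ K' := by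
    intro y hy; rw [hK']; exact Or.inl (Or.inr ⟨y, hy, rfl⟩)
  have hn3 : ∀ y ∈ K', (y+4)/5 ∈ K' := by
    intro y hy; rw [hK']; exact Or.inr ⟨y, hy, rfl⟩
  ext x
  rw [mem_iUnion]
  constructor
  · rintro ⟨y, hy, rfl⟩
    rw [hK'] at hy
    rcases hy with (⟨z, hz, rfl⟩ | ⟨z, hz, rfl⟩) | ⟨z, hz, rfl⟩
    · exact ⟨0, 2*z - 1, ⟨z, hz, rfl⟩, by simp only [c0]; ring⟩
    · exact ⟨1, 2*z - 1, ⟨z, hz, rfl⟩, by simp only [c1]; ring⟩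
    · exact ⟨2, 2*z - 1, ⟨z, hz, rfl⟩, by simp only [c2]; ring⟩
  · rintro ⟨i, a, ⟨y, hy, rfl⟩, rfl⟩
    rcases h3 i with rfl | rfl | rfl
    · exact ⟨y/5, hn1 y hy, by simp only [c0]; ring⟩
    · exact ⟨(y+2)/5, hn2 y hy, by simp only [c1]; ring⟩
    · exact ⟨(y+4)/5, hn3 y hy, by simp only [c2]; ring⟩



lemma union3_eq_iUnion {α : Type*} (s : Fin 3 → Set α) : s 0 ∪ s 1 ∪ s 2 = ⋃ i, s i := by
  have h3 : ∀ j : Fin 3, j = 0 ∨ j = 1 ∨ j = 2 := by decide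
  ext x
  rw [Set.mem_iUnion]
  constructor
  · rintro ((h | h) | h)
    exacts [⟨0, h⟩, ⟨1, h⟩, ⟨2, h⟩]
  · rintro ⟨i, h⟩
    rcases h3 i with rfl | rfl | rfl
    exacts [Or.inl (Or.inl h), Or.inl (Or.inr h), Or.inr h]

end Stmt10Aux
end

open Stmt10Aux

theorem stmt10 (K K' : Set ℝ)
    (hKne : K.Nonempty) (hKcpt : IsCompact K)
    (hK : K = (fun x => x / 5) '' K ∪ (fun x => (4 - x) / 5) '' K ∪
              (fun x => (x + 4) / 5) '' K)
    (hK'ne : K'.Nonempty) (hK'cpt : IsCompact K')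
    (hK' : K' = (fun x => (x + 2 * (1 - 1)) / 5) '' K' ∪
                (fun x => (x + 2 * (2 - 1)) / 5) '' K' ∪
                (fun x => (x + 2 * (3 - 1)) / 5) '' K') :
    LipschitzEquivalent K K' := by
  classical
  have e1 : (fun x : ℝ => (x + 2 * (1 - 1)) / 5) = (fun x : ℝ => x / 5) := by
    funext x; norm_num
  have e2 : (fun x : ℝ => (x + 2 * (2 - 1)) / 5) = (fun x : ℝ => (x + 2) / 5) := by
    funext x; norm_num
  have e3 : (fun x : ℝ => (x + 2 * (3 - 1)) / 5) = (fun x : ℝ => (x + 4) / 5) := by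
    funext x; norm_num
  rw [e1, e2, e3] at hK'
  have f0 : (fun x : ℝ => (x + 2 * ((((0:Fin 3)):ℕ):ℝ))/5) = (fun x : ℝ => x / 5) := by
    funext x; norm_num [show ((0:Fin 3):ℕ) = 0 from rfl]
  have f1 : (fun x : ℝ => (x + 2 * ((((1:Fin 3)):ℕ):ℝ))/5) = (fun x : ℝ => (x + 2) / 5) := by
    funext x; norm_num [show ((1:Fin 3):ℕ) = 1 from rfl]
  have f2 : (fun x : ℝ => (x + 2 * ((((2:Fin 3)):ℕ):ℝ))/5) = (fun x : ℝ => (x + 4) / 5) := by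
    funext x; norm_num [show ((2:Fin 3):ℕ) = 2 from rfl]
  have hK'i : K' = ⋃ i : Fin 3, (fun x => (x + 2 * ((i:ℕ):ℝ))/5) '' K' := by
    rw [← union3_eq_iUnion (fun i : Fin 3 => (fun x => (x + 2 * ((i:ℕ):ℝ))/5) '' K')]
    rw [f0, f1, f2]
    exact hK'
  have hcontr : ∀ (c : ℝ) (x y : ℝ), dist ((x + c)/5) ((y + c)/5) ≤ dist x y / 5 := by
    intro c x y
    rw [Real.dist_eq, Real.dist_eq]
    have h : (x + c)/5 - (y + c)/5 = (x - y)/5 := by ring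
    rw [h, abs_div, abs_of_pos (by norm_num : (0:ℝ) < 5)]
  -- K' is the range of the coding map v
  have hK'v : K' = Set.range v :=
    attractor_unique (fun i : Fin 3 => fun x => (x + 2 * ((i:ℕ):ℝ))/5)
      (fun i x y => hcontr _ x y) hK'ne hK'cpt
      ⟨v (fun _ => 0), Set.mem_range_self _⟩ (isCompact_range v_continuous)
      hK'i range_v_invariant
  have hK'sub : K' ⊆ Set.Icc 0 1 := by
    rw [hK'v]; rintro x ⟨σ, rfl⟩; exact ⟨v_nonneg σ, v_le_one σ⟩
  have hKsub : K ⊆ Set.Icc 0 1 := K_bounds hKne hKcpt hK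
  have hm1 : ∀ y ∈ K, y/5 ∈ K := by
    intro y hy; rw [hK]; exact Or.inl (Or.inl ⟨y, hy, rfl⟩)
  have hm2 : ∀ y ∈ K, (4-y)/5 ∈ K := by
    intro y hy; rw [hK]; exact Or.inl (Or.inr ⟨y, hy, rfl⟩)
  have hm3 : ∀ y ∈ K, (y+4)/5 ∈ K := by
    intro y hy; rw [hK]; exact Or.inr ⟨y, hy, rfl⟩
  have hn1 : ∀ y ∈ K', y/5 ∈ K' := by
    intro y hy; rw [hK']; exact Or.inl (Or.inl ⟨y, hy, rfl⟩)
  have hn2 : ∀ y ∈ K', (y+2)/5 ∈ K' := by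
    intro y hy; rw [hK']; exact Or.inl (Or.inr ⟨y, hy, rfl⟩)
  have hn3 : ∀ y ∈ K', (y+4)/5 ∈ K' := by
    intro y hy; rw [hK']; exact Or.inr ⟨y, hy, rfl⟩
  -- the doubled set : (-K) ∪ K = 2K' - 1
  have hD : ((fun x : ℝ => -x) '' K ∪ K) = (fun y : ℝ => 2*y - 1) '' K' :=
    attractor_unique (fun i : Fin 3 => fun x : ℝ => (x + (4*((i:ℕ):ℝ) - 4))/5)
      (fun i x y => hcontr _ x y)
      (hKne.imp (fun a ha => Or.inr ha))
      ((hKcpt.image continuous_neg).union hKcpt)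
      (hK'ne.image _)
      (hK'cpt.image ((continuous_const.mul continuous_id).sub continuous_const))
      (hDA hK) (hDB hK')
  have pow51 : ∀ (c:ℝ) (n:ℕ), c/5/5^n = c/5^(n+1) := by
    intro c n; rw [pow_succ]; ring
  -- split K into the first piece and a copy of  3 + 2K'
  have hK2 : K = (fun x => x/5) '' K ∪ (fun y => (3 + 2*y)/5) '' K' := by
    ext x
    constructor
    · intro hx
      rw [hK] at hx
      rcases hx with (⟨y,hy,rfl⟩|⟨y,hy,rfl⟩)|⟨y,hy,rfl⟩
      · exact Or.inl ⟨y, hy, rfl⟩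
      · have hym : -y ∈ ((fun x : ℝ => -x) '' K ∪ K) := Or.inl ⟨y, hy, rfl⟩
        rw [hD] at hym
        obtain ⟨z, hz, hzeq⟩ := hym
        refine Or.inr ⟨z, hz, ?_⟩
        simp only at hzeq ⊢
        linarith
      · have hym : y ∈ ((fun x : ℝ => -x) '' K ∪ K) := Or.inr hy
        rw [hD] at hym
        obtain ⟨z, hz, hzeq⟩ := hym
        refine Or.inr ⟨z, hz, ?_⟩
        simp only at hzeq ⊢
        linarith
    · intro hx
      rcases hx with ⟨y,hy,rfl⟩|⟨z,hz,rfl⟩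
      · exact hm1 y hy
      · have hmem : (2*z - 1 : ℝ) ∈ (fun y : ℝ => 2*y - 1) '' K' := ⟨z, hz, rfl⟩
        rw [← hD] at hmem
        show (3 + 2*z)/5 ∈ K
        rcases hmem with ⟨y, hy, hyeq⟩ | hy
        · simp only at hyeq
          have heq2 : (3+2*z)/5 = (4-y)/5 := by linarith
          rw [heq2]; exact hm2 y hy
        · have heq2 : (3+2*z)/5 = ((2*z-1)+4)/5 := by ring
          rw [heq2]; exact hm3 _ hy
  have hKdec := peel hKcpt.isClosed hKne hKsub hK2 (by
    rintro p ⟨y, hy, rfl⟩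
    have := (hK'sub hy).1
    show 2/5 ≤ (3 + 2*y)/5
    linarith)
  have memK : ∀ x : ℝ, x ∈ K ↔ x = 0 ∨ ∃ (n : ℕ) (σ : Sg), x = (3 + 2*(v σ))/5^(n+1) := by
    intro x
    rw [hKdec]
    constructor
    · rintro (h0 | h)
      · exact Or.inl h0
      · rw [Set.mem_iUnion] at h
        obtain ⟨n, p, ⟨y, hy, rfl⟩, rfl⟩ := h
        rw [hK'v] at hy
        obtain ⟨σ, rfl⟩ := hy
        refine Or.inr ⟨n, σ, ?_⟩
        show (fun x => x / 5^n) ((fun y => (3 + 2*y)/5) (v σ)) = (3 + 2*(v σ))/5^(n+1)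
        show (3 + 2*(v σ))/5/5^n = (3 + 2*(v σ))/5^(n+1)
        exact pow51 _ n
    · rintro (rfl | ⟨n, σ, rfl⟩)
      · exact Or.inl rfl
      · refine Or.inr (Set.mem_iUnion.2 ⟨n, ⟨(3+2*(v σ))/5,
          ⟨v σ, by rw [hK'v]; exact Set.mem_range_self σ, rfl⟩, pow51 _ n⟩⟩)
  -- split K' into the first piece and a copy of 2 + range W
  have hK'2 : K' = (fun x => x/5) '' K' ∪ (fun w => (2+w)/5) '' (Set.range W) := by
    ext z
    constructor
    · intro hz
      rw [hK'] at hz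
      rcases hz with (⟨y,hy,rfl⟩|⟨y,hy,rfl⟩)|⟨y,hy,rfl⟩
      · exact Or.inl ⟨y, hy, rfl⟩
      · refine Or.inr ⟨y, ?_, by show (2+y)/5 = (y+2)/5; ring⟩
        rw [range_W]
        exact Or.inl (by rw [← hK'v]; exact hy)
      · refine Or.inr ⟨2 + y, ?_, by show (2+(2+y))/5 = (y+4)/5; ring⟩
        rw [range_W]
        exact Or.inr ⟨y, by rw [← hK'v]; exact hy, rfl⟩
    · intro hz
      rcases hz with ⟨y, hy, rfl⟩ | ⟨w, hw, rfl⟩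
      · exact hn1 y hy
      · rw [range_W] at hw
        rcases hw with ⟨τ, rfl⟩ | ⟨y, ⟨τ, rfl⟩, rfl⟩
        · have hkm : v τ ∈ K' := by rw [hK'v]; exact Set.mem_range_self τ
          show (2 + v τ)/5 ∈ K'
          have heq : (2 + v τ)/5 = (v τ + 2)/5 := by ring
          rw [heq]; exact hn2 _ hkm
        · have hkm : v τ ∈ K' := by rw [hK'v]; exact Set.mem_range_self τ
          show (2 + (2 + v τ))/5 ∈ K'
          have heq : (2+(2+v τ))/5 = (v τ + 4)/5 := by ring
          rw [heq]; exact hn3 _ hkm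
  have hK'dec := peel hK'cpt.isClosed hK'ne hK'sub hK'2 (by
    rintro p ⟨w, ⟨σ, rfl⟩, rfl⟩
    show 2/5 ≤ (2 + W σ)/5
    linarith [W_nonneg σ])
  have memK' : ∀ z : ℝ, z ∈ K' ↔ z = 0 ∨ ∃ (n : ℕ) (σ : Sg), z = (2 + W σ)/5^(n+1) := by
    intro z
    rw [hK'dec]
    constructor
    · rintro (h0 | h)
      · exact Or.inl h0
      · rw [Set.mem_iUnion] at h
        obtain ⟨n, p, ⟨w, ⟨σ, rfl⟩, rfl⟩, rfl⟩ := h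
        refine Or.inr ⟨n, σ, ?_⟩
        show (fun x => x / 5^n) ((fun w => (2 + w)/5) (W σ)) = (2 + W σ)/5^(n+1)
        show (2 + W σ)/5/5^n = (2 + W σ)/5^(n+1)
        exact pow51 _ n
    · rintro (rfl | ⟨n, σ, rfl⟩)
      · exact Or.inl rfl
      · exact Or.inr (Set.mem_iUnion.2 ⟨n, ⟨(2 + W σ)/5,
          ⟨W σ, Set.mem_range_self σ, rfl⟩, pow51 _ n⟩⟩)
  -- uniqueness of the representation
  have pkey : ∀ (n m : ℕ) (σ τ : Sg),
      (3+2*(v σ))/5^(n+1) = (3+2*(v τ))/5^(m+1) → n = m ∧ σ = τ := by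
    intro n m σ τ h
    have h1 := v_nonneg σ; have h2 := v_le_one σ
    have h3 := v_nonneg τ; have h4 := v_le_one τ
    have hnm : n = m := scale_sep (by linarith) (by linarith) (by linarith) (by linarith) h
    subst hnm
    refine ⟨rfl, v_injective ?_⟩
    have hp : (0:ℝ) < 5^(n+1) := by positivity
    rw [div_eq_div_iff hp.ne' hp.ne'] at h
    have := mul_right_cancel₀ hp.ne' h
    linarith
  have qkey : ∀ (n m : ℕ) (σ τ : Sg),
      (2 + W σ)/5^(n+1) = (2 + W τ)/5^(m+1) → n = m ∧ σ = τ := by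
    intro n m σ τ h
    have h1 := W_nonneg σ; have h2 := W_le_three σ
    have h3 := W_nonneg τ; have h4 := W_le_three τ
    have hnm : n = m := scale_sep (by linarith) (by linarith) (by linarith) (by linarith) h
    subst hnm
    refine ⟨rfl, W_injective ?_⟩
    have hp : (0:ℝ) < 5^(n+1) := by positivity
    rw [div_eq_div_iff hp.ne' hp.ne'] at h
    have := mul_right_cancel₀ hp.ne' h
    linarith
  have h0K : (0:ℝ) ∈ K := (memK 0).2 (Or.inl rfl)
  have h0K' : (0:ℝ) ∈ K' := (memK' 0).2 (Or.inl rfl)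
  have hppos : ∀ (n:ℕ) (σ : Sg), (0:ℝ) < (3+2*(v σ))/5^(n+1) := by
    intro n σ
    have := v_nonneg σ
    apply div_pos (by linarith) (by positivity)
  have hqpos : ∀ (n:ℕ) (σ : Sg), (0:ℝ) < (2 + W σ)/5^(n+1) := by
    intro n σ
    have := W_nonneg σ
    apply div_pos (by linarith) (by positivity)
  have main : ∀ x : K, ∃ z : K', ((x:ℝ) = 0 ∧ (z:ℝ) = 0) ∨
      ∃ (n : ℕ) (σ : Sg), (x:ℝ) = (3+2*(v σ))/5^(n+1) ∧ (z:ℝ) = (2 + W σ)/5^(n+1) := by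
    rintro ⟨x, hx⟩
    rcases (memK x).1 hx with rfl | ⟨n, σ, rfl⟩
    · exact ⟨⟨0, h0K'⟩, Or.inl ⟨rfl, rfl⟩⟩
    · exact ⟨⟨(2 + W σ)/5^(n+1), (memK' _).2 (Or.inr ⟨n, σ, rfl⟩)⟩, Or.inr ⟨n, σ, rfl, rfl⟩⟩
  choose F hF using main
  -- helper inequalities for scaling
  have hdivle : ∀ (t A B c : ℝ), 0 < t → c * B ≤ A → c * (B/t) ≤ A/t := by
    intro t A B c ht h
    rw [mul_div_assoc']
    exact (div_le_div_iff_of_pos_right ht).2 h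
  refine ⟨F, 25, by norm_num, ⟨?_, ?_⟩, ?_⟩
  · -- injectivity
    intro x y hxy
    rcases hF x with ⟨hx0, hz0⟩ | ⟨n, σ, hx, hz⟩ <;>
      rcases hF y with ⟨hy0, hw0⟩ | ⟨m, τ, hy, hw⟩
    · exact Subtype.ext (hx0.trans hy0.symm)
    · exfalso
      have hc : ((F y : K') : ℝ) = 0 := by rw [← hxy]; exact hz0
      rw [hw] at hc
      exact absurd hc (ne_of_gt (hqpos m τ))
    · exfalso
      have hc : ((F x : K') : ℝ) = 0 := by rw [hxy]; exact hw0
      rw [hz] at hc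
      exact absurd hc (ne_of_gt (hqpos n σ))
    · have hq : (2 + W σ)/5^(n+1) = (2 + W τ)/5^(m+1) := by
        rw [← hz, ← hw, hxy]
      obtain ⟨hnm, hst⟩ := qkey n m σ τ hq
      subst hnm; subst hst
      exact Subtype.ext (by rw [hx, hy])
  · -- surjectivity
    intro z
    rcases (memK' (z:ℝ)).1 z.2 with hz0 | ⟨n, σ, hz⟩
    · refine ⟨⟨0, h0K⟩, ?_⟩
      rcases hF ⟨0, h0K⟩ with ⟨_, h0⟩ | ⟨m, τ, hx, _⟩
      · exact Subtype.ext (by rw [h0, hz0])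
      · exact absurd hx.symm (ne_of_gt (hppos m τ))
    · refine ⟨⟨(3+2*(v σ))/5^(n+1), (memK _).2 (Or.inr ⟨n, σ, rfl⟩)⟩, ?_⟩
      rcases hF ⟨(3+2*(v σ))/5^(n+1), (memK _).2 (Or.inr ⟨n, σ, rfl⟩)⟩ with
        ⟨hx0, _⟩ | ⟨m, τ, hx, hw⟩
      · exact absurd hx0 (ne_of_gt (hppos n σ))
      · obtain ⟨hnm, hst⟩ := pkey n m σ τ hx
        subst hnm; subst hst
        exact Subtype.ext (by rw [hw, hz])
  · -- the Lipschitz estimates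
    intro x y
    rw [Real.dist_eq, Real.dist_eq]
    have cross : ∀ (n m : ℕ) (σ τ : Sg), n < m →
        25⁻¹ * |(3+2*(v σ))/5^(n+1) - (3+2*(v τ))/5^(m+1)| ≤
          |(2 + W σ)/5^(n+1) - (2 + W τ)/5^(m+1)| ∧
        |(2 + W σ)/5^(n+1) - (2 + W τ)/5^(m+1)| ≤
          25 * |(3+2*(v σ))/5^(n+1) - (3+2*(v τ))/5^(m+1)| := by
      intro n m σ τ hnm
      have hu : (0:ℝ) < ((5:ℝ)^(n+1))⁻¹ := by positivity
      have hw' : (0:ℝ) < ((5:ℝ)^(m+1))⁻¹ := by positivity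
      have hps : (5:ℝ)^(n+1) * 5 ≤ 5^(m+1) := by
        rw [← pow_succ]
        exact pow_le_pow_right₀ (by norm_num) (by omega)
      have h9 : 5 * ((5:ℝ)^(m+1))⁻¹ ≤ ((5:ℝ)^(n+1))⁻¹ := by
        rw [← div_eq_mul_inv, inv_eq_one_div, div_le_div_iff₀ (by positivity) (by positivity)]
        linarith
      have hb := cross_est (a := 3+2*(v σ)) (b := 3+2*(v τ)) (c := 2 + W σ) (d := 2 + W τ) hu hw' h9
        (by linarith [v_nonneg σ]) (by linarith [v_le_one σ])
        (by linarith [v_nonneg τ]) (by linarith [v_le_one τ])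
        (by linarith [W_nonneg σ]) (by linarith [W_le_three σ])
        (by linarith [W_nonneg τ]) (by linarith [W_le_three τ])
      simpa only [div_eq_mul_inv] using hb
    have hdivle2 : ∀ (t A B c : ℝ), 0 < t → A ≤ c * B → A/t ≤ c * (B/t) := by
      intro t A B c ht h
      rw [mul_div_assoc']
      exact (div_le_div_iff_of_pos_right ht).2 h
    have zeroest : ∀ (n : ℕ) (σ : Sg),
        25⁻¹ * |(3+2*(v σ))/5^(n+1) - 0| ≤ |(2 + W σ)/5^(n+1) - 0| ∧
        |(2 + W σ)/5^(n+1) - 0| ≤ 25 * |(3+2*(v σ))/5^(n+1) - 0| := by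
      intro n σ
      have hp : (0:ℝ) < (5:ℝ)^(n+1) := by positivity
      rw [sub_zero, sub_zero, abs_of_pos (hppos n σ), abs_of_pos (hqpos n σ)]
      constructor
      · refine hdivle _ _ _ _ hp ?_
        linarith [v_le_one σ, W_nonneg σ]
      · refine hdivle2 _ _ _ _ hp ?_
        linarith [W_le_three σ, v_nonneg σ]
    rcases hF x with ⟨hx0, hz0⟩ | ⟨n, σ, hx, hz⟩ <;>
      rcases hF y with ⟨hy0, hw0⟩ | ⟨m, τ, hy, hw⟩
    · rw [hx0, hy0, hz0, hw0]
      norm_num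
    · rw [hx0, hz0, hy, hw]
      have h := zeroest m τ
      rwa [abs_sub_comm ((3+2*(v τ))/5^(m+1)) 0, abs_sub_comm ((2 + W τ)/5^(m+1)) 0] at h
    · rw [hy0, hw0, hx, hz]
      exact zeroest n σ
    · rw [hx, hy, hz, hw]
      rcases lt_trichotomy n m with hlt | hnm | hlt
      · exact cross n m σ τ hlt
      · subst hnm
        by_cases hst : σ = τ
        · subst hst
          simp
        · obtain ⟨j, hag, hne⟩ := exists_first_diff hst
          have hWl := W_lip j σ τ hag hne
          have hp : (0:ℝ) < (5:ℝ)^(n+1) := by positivity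
          have hav : |(3+2*(v σ))/5^(n+1) - (3+2*(v τ))/5^(n+1)|
              = (2*|v σ - v τ|)/5^(n+1) := by
            have h : (3+2*(v σ))/5^(n+1) - (3+2*(v τ))/5^(n+1)
                = (2*(v σ - v τ))/5^(n+1) := by ring
            rw [h, abs_div, abs_of_pos hp, abs_mul, abs_two]
          have haw : |(2 + W σ)/5^(n+1) - (2 + W τ)/5^(n+1)|
              = |W σ - W τ|/5^(n+1) := by
            have h : (2 + W σ)/5^(n+1) - (2 + W τ)/5^(n+1)
                = (W σ - W τ)/5^(n+1) := by ring
            rw [h, abs_div, abs_of_pos hp]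
          rw [hav, haw]
          constructor
          · refine hdivle _ _ _ _ hp ?_
            linarith [hWl.1]
          · refine hdivle2 _ _ _ _ hp ?_
            linarith [hWl.2]
      · have h := cross m n τ σ hlt
        rwa [abs_sub_comm ((3+2*(v τ))/5^(m+1)) ((3+2*(v σ))/5^(n+1)),
          abs_sub_comm ((2 + W τ)/5^(m+1)) ((2 + W σ)/5^(n+1))] at h
end

section
/- Let (α_k)_{k≥1} be a sequence with α_k ∈ {−2, 0, 2} for all k, let α = Σ_{k=1}^∞ α_k·3^{−k}, and assume 0 < α < 1 and that this expansion is unique, i.e., every sequence (β_k)_{k≥1} with β_k ∈ {−2, 0, 2} and Σ_{k=1}^∞ β_k·3^{−k} = α satisfies β_k = α_k for all k. Then for every integer n ≥ 1 and all digit sequences i₁,…,i_n and j₁,…,j_n with i_k, j_k ∈ {0, 2}, the inequality |Σ_{k=1}^n (i_k − j_k)·3^{−k} − α| < 3^{−n} holds if and only if i_k − j_k = α_k for all 1 ≤ k ≤ n. -/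
open Finset

private lemma term_eq3 (n k : ℕ) : (2:ℝ) / 3 ^ (k + n + 1) = (2 / 3 ^ (n+1)) * (1/3) ^ k := by
  rw [show k + n + 1 = k + (n+1) by ring, pow_add]
  have h3 : (3:ℝ) ^ k ≠ 0 := by positivity
  have h3' : (3:ℝ) ^ (n+1) ≠ 0 := by positivity
  field_simp
  rw [← mul_pow]; norm_num

private lemma summable_geom3 (n : ℕ) : Summable (fun k : ℕ => (2:ℝ) / 3 ^ (k + n + 1)) := by
  have := (summable_geometric_of_lt_one (r := (1/3:ℝ)) (by norm_num) (by norm_num)).mul_left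
    (2 / 3 ^ (n+1))
  exact this.congr (fun k => (term_eq3 n k).symm)

private lemma geom_tail3 (n : ℕ) : ∑' k : ℕ, (2:ℝ) / 3 ^ (k + n + 1) = 1 / 3 ^ n := by
  rw [tsum_congr (term_eq3 n), tsum_mul_left,
    tsum_geometric_of_lt_one (by norm_num) (by norm_num)]
  rw [pow_succ]
  have : (3:ℝ) ^ n ≠ 0 := by positivity
  field_simp
  ring

private lemma norm_term_le (a : ℕ → ℤ) (ha : ∀ k, 1 ≤ k → |a k| ≤ 2) (n k : ℕ) :
    ‖(a (k + n + 1) : ℝ) / 3 ^ (k + n + 1)‖ ≤ 2 / 3 ^ (k + n + 1) := by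
  rw [Real.norm_eq_abs, abs_div, abs_of_pos (by positivity : (0:ℝ) < 3 ^ (k + n + 1))]
  gcongr
  have := ha (k + n + 1) (by omega)
  exact_mod_cast (by exact_mod_cast this : |(a (k + n + 1) : ℝ)| ≤ 2)

private lemma summable_tail (a : ℕ → ℤ) (ha : ∀ k, 1 ≤ k → |a k| ≤ 2) (n : ℕ) :
    Summable (fun k : ℕ => (a (k + n + 1) : ℝ) / 3 ^ (k + n + 1)) :=
  Summable.of_norm_bounded (summable_geom3 n) (norm_term_le a ha n)

private lemma summable_dig (a : ℕ → ℤ) (ha : ∀ k, 1 ≤ k → |a k| ≤ 2) :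
    Summable (fun k : ℕ => (a (k + 1) : ℝ) / 3 ^ (k + 1)) :=
  summable_tail a ha 0

private lemma tail_le (a : ℕ → ℤ) (ha : ∀ k, 1 ≤ k → |a k| ≤ 2) (n : ℕ) :
    |∑' k : ℕ, (a (k + n + 1) : ℝ) / 3 ^ (k + n + 1)| ≤ 1 / 3 ^ n := by
  have hnorm : Summable (fun k : ℕ => ‖(a (k + n + 1) : ℝ) / 3 ^ (k + n + 1)‖) :=
    Summable.of_norm_bounded (summable_geom3 n)
      (fun k => by rw [norm_norm]; exact norm_term_le a ha n k)
  calc |∑' k : ℕ, (a (k + n + 1) : ℝ) / 3 ^ (k + n + 1)|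
      ≤ ∑' k : ℕ, ‖(a (k + n + 1) : ℝ) / 3 ^ (k + n + 1)‖ := norm_tsum_le_tsum_norm hnorm
    _ ≤ ∑' k : ℕ, (2:ℝ) / 3 ^ (k + n + 1) :=
        Summable.tsum_le_tsum (norm_term_le a ha n) hnorm (summable_geom3 n)
    _ = 1 / 3 ^ n := geom_tail3 n

private lemma sum_Icc_one (n : ℕ) (f : ℕ → ℝ) :
    ∑ k ∈ Finset.Icc 1 n, f k = ∑ k ∈ Finset.range n, f (k + 1) := by
  rw [← Finset.Ico_add_one_right_eq_Icc, Finset.sum_Ico_eq_sum_range]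
  simp [add_comm]

private lemma abs_of_digits (a : ℕ → ℤ) (ha : ∀ k, 1 ≤ k → a k = -2 ∨ a k = 0 ∨ a k = 2) :
    ∀ k, 1 ≤ k → |a k| ≤ 2 := by
  intro k hk
  rcases ha k hk with h | h | h <;> simp [h]

private lemma tail_lt (a : ℕ → ℤ) (ha : ∀ k, 1 ≤ k → a k = -2 ∨ a k = 0 ∨ a k = 2)
    (α : ℝ) (hα : α = ∑' k : ℕ, (a (k + 1) : ℝ) / 3 ^ (k + 1)) (h1 : α < 1)
    (huniq : ∀ b : ℕ → ℤ, (∀ k, 1 ≤ k → b k = -2 ∨ b k = 0 ∨ b k = 2) →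
      (∑' n : ℕ, (b (n + 1) : ℝ) / 3 ^ (n + 1)) = α → ∀ k, 1 ≤ k → b k = a k)
    (n : ℕ) : ∑' k : ℕ, (a (k + n + 1) : ℝ) / 3 ^ (k + n + 1) < 1 / 3 ^ n := by
  classical
  have habs := abs_of_digits a ha
  by_cases h : ∀ k, n + 1 ≤ k → a k = 2
  · exfalso
    by_cases h' : ∀ k, 1 ≤ k → a k = 2
    · have : α = 1 := by
        have hc : ∀ k : ℕ, (a (k + 1) : ℝ) / 3 ^ (k + 1) = (2:ℝ) / 3 ^ (k + 0 + 1) := by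
          intro k; rw [h' (k+1) (by omega)]; norm_num
        rw [hα, tsum_congr hc, geom_tail3 0]; norm_num
      linarith
    · push_neg at h'
      obtain ⟨k0, hk01, hk0⟩ := h'
      set P : ℕ → Prop := fun k => 1 ≤ k ∧ a k ≠ 2 with hP
      have hk0n : k0 ≤ n := by
        by_contra hh
        exact hk0 (h k0 (by omega))
      set m := Nat.findGreatest P n with hm
      have hPm : P m := Nat.findGreatest_spec hk0n ⟨hk01, hk0⟩
      have hm1 : 1 ≤ m := hPm.1
      have hmn : m ≤ n := Nat.findGreatest_le n
      have hgt : ∀ k, m < k → a k = 2 := by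
        intro k hk
        by_cases hkn : k ≤ n
        · by_contra hne
          exact Nat.findGreatest_is_greatest hk hkn ⟨by omega, hne⟩
        · exact h k (by omega)
      set b : ℕ → ℤ := fun k => if k < m then a k else if k = m then a m + 2 else -2 with hb
      have ham : a m = -2 ∨ a m = 0 := by
        rcases ha m hm1 with hh | hh | hh
        · left; exact hh
        · right; exact hh
        · exact absurd hh hPm.2
      have hbd : ∀ k, 1 ≤ k → b k = -2 ∨ b k = 0 ∨ b k = 2 := by
        intro k hk
        by_cases hk1 : k < m
        · simp only [hb, if_pos hk1]; exact ha k hk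
        · by_cases hk2 : k = m
          · subst hk2
            simp only [hb, if_neg hk1, if_pos rfl]
            rcases ham with hh | hh <;> simp [hh]
          · simp [hb, hk1, hk2]
      have hbabs := abs_of_digits b hbd
      have hsb := summable_dig b hbabs
      have hsa := summable_dig a habs
      have hsplitb := Summable.sum_add_tsum_nat_add (f := fun k : ℕ => (b (k + 1) : ℝ) / 3 ^ (k + 1)) m hsb
      have hsplita := Summable.sum_add_tsum_nat_add (f := fun k : ℕ => (a (k + 1) : ℝ) / 3 ^ (k + 1)) m hsa
      have htailb : ∑' k : ℕ, (b (k + m + 1) : ℝ) / 3 ^ (k + m + 1) = -(1 / 3 ^ m) := by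
        have : ∀ k : ℕ, (b (k + m + 1) : ℝ) / 3 ^ (k + m + 1) = -((2:ℝ) / 3 ^ (k + m + 1)) := by
          intro k
          have : b (k + m + 1) = -2 := by simp only [hb]; rw [if_neg (by omega), if_neg (by omega)]
          rw [this]; push_cast; ring
        rw [tsum_congr this, tsum_neg, geom_tail3 m]
      have htaila : ∑' k : ℕ, (a (k + m + 1) : ℝ) / 3 ^ (k + m + 1) = 1 / 3 ^ m := by
        have : ∀ k : ℕ, (a (k + m + 1) : ℝ) / 3 ^ (k + m + 1) = (2:ℝ) / 3 ^ (k + m + 1) := by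
          intro k
          rw [hgt (k + m + 1) (by omega)]; norm_num
        rw [tsum_congr this, geom_tail3 m]
      have hrange : ∑ k ∈ Finset.range m, (b (k + 1) : ℝ) / 3 ^ (k + 1)
          = ∑ k ∈ Finset.range m, (a (k + 1) : ℝ) / 3 ^ (k + 1) + 2 / 3 ^ m := by
        have key : ∀ k ∈ Finset.range m, (b (k + 1) : ℝ) / 3 ^ (k + 1)
            - (a (k + 1) : ℝ) / 3 ^ (k + 1) = if k = m - 1 then (2:ℝ) / 3 ^ m else 0 := by
          intro k hk
          rw [Finset.mem_range] at hk
          by_cases hkm : k = m - 1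
          · subst hkm
            rw [if_pos rfl]
            have hkm1 : m - 1 + 1 = m := by omega
            rw [hkm1]
            have : b m = a m + 2 := by simp only [hb]; rw [if_neg (by omega)]; simp
            rw [this]; push_cast; ring
          · rw [if_neg hkm]
            have : b (k + 1) = a (k + 1) := by simp only [hb]; rw [if_pos (by omega)]
            rw [this]; ring
        have := Finset.sum_congr rfl key
        rw [Finset.sum_sub_distrib] at this
        rw [Finset.sum_ite_eq' (Finset.range m) (m - 1) (fun _ => (2:ℝ) / 3 ^ m),
          if_pos (Finset.mem_range.mpr (by omega))] at this
        linarith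
      have hsum : (∑' k : ℕ, (b (k + 1) : ℝ) / 3 ^ (k + 1)) = α := by
        have e1 : ∑' k : ℕ, (b (k + 1) : ℝ) / 3 ^ (k + 1)
            = ∑ k ∈ Finset.range m, (b (k + 1) : ℝ) / 3 ^ (k + 1)
              + ∑' k : ℕ, (b (k + m + 1) : ℝ) / 3 ^ (k + m + 1) := by
          rw [← hsplitb]
        have e2 : (∑' k : ℕ, (a (k + 1) : ℝ) / 3 ^ (k + 1))
            = ∑ k ∈ Finset.range m, (a (k + 1) : ℝ) / 3 ^ (k + 1)
              + ∑' k : ℕ, (a (k + m + 1) : ℝ) / 3 ^ (k + m + 1) := by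
          rw [← hsplita]
        rw [hα, e1, e2, htailb, htaila, hrange]
        ring
      have := huniq b hbd hsum m hm1
      have hbm : b m = a m + 2 := by simp only [hb]; rw [if_neg (by omega)]; simp
      omega
  · push_neg at h
    obtain ⟨k0, hk0n, hk0⟩ := h
    have hlt : ∑' k : ℕ, (a (k + n + 1) : ℝ) / 3 ^ (k + n + 1)
        < ∑' k : ℕ, (2:ℝ) / 3 ^ (k + n + 1) := by
      apply Summable.tsum_lt_tsum (i := k0 - n - 1) _ _ (summable_tail a habs n) (summable_geom3 n)
      · intro k
        have h2 : (a (k + n + 1) : ℝ) ≤ 2 := by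
          exact_mod_cast (abs_le.mp (habs (k + n + 1) (by omega))).2
        have h3 : (0:ℝ) < 3 ^ (k + n + 1) := by positivity
        show (a (k + n + 1) : ℝ) / 3 ^ (k + n + 1) ≤ 2 / 3 ^ (k + n + 1)
        gcongr
      · have hke : k0 - n - 1 + n + 1 = k0 := by omega
        rw [hke]
        have : a k0 ≤ 0 := by rcases ha k0 (by omega) with hh | hh | hh <;> omega
        have h0' : (a k0 : ℝ) ≤ 0 := by exact_mod_cast this
        have : (a k0 : ℝ) / 3 ^ k0 ≤ 0 := by
          apply div_nonpos_of_nonpos_of_nonneg h0'; positivity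
        have hpos : (0:ℝ) < 2 / 3 ^ k0 := by positivity
        linarith
    rwa [geom_tail3 n] at hlt

private lemma tail_gt (a : ℕ → ℤ) (ha : ∀ k, 1 ≤ k → a k = -2 ∨ a k = 0 ∨ a k = 2)
    (α : ℝ) (hα : α = ∑' k : ℕ, (a (k + 1) : ℝ) / 3 ^ (k + 1)) (h0 : 0 < α)
    (huniq : ∀ b : ℕ → ℤ, (∀ k, 1 ≤ k → b k = -2 ∨ b k = 0 ∨ b k = 2) →
      (∑' n : ℕ, (b (n + 1) : ℝ) / 3 ^ (n + 1)) = α → ∀ k, 1 ≤ k → b k = a k)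
    (n : ℕ) : -(1 / 3 ^ n) < ∑' k : ℕ, (a (k + n + 1) : ℝ) / 3 ^ (k + n + 1) := by
  have ha' : ∀ k, 1 ≤ k → -a k = -2 ∨ -a k = 0 ∨ -a k = 2 := by
    intro k hk; rcases ha k hk with h | h | h <;> simp [h]
  have hα' : -α = ∑' k : ℕ, ((-a (k + 1) : ℤ) : ℝ) / 3 ^ (k + 1) := by
    rw [hα, ← tsum_neg]
    congr 1
    funext k
    push_cast
    ring
  have h1' : -α < 1 := by linarith
  have huniq' : ∀ b : ℕ → ℤ, (∀ k, 1 ≤ k → b k = -2 ∨ b k = 0 ∨ b k = 2) →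
      (∑' n : ℕ, (b (n + 1) : ℝ) / 3 ^ (n + 1)) = -α → ∀ k, 1 ≤ k → b k = -a k := by
    intro b hbd hbs k hk
    have hbd' : ∀ k, 1 ≤ k → -b k = -2 ∨ -b k = 0 ∨ -b k = 2 := by
      intro k hk; rcases hbd k hk with h | h | h <;> simp [h]
    have hbs' : (∑' n : ℕ, ((-b (n + 1) : ℤ) : ℝ) / 3 ^ (n + 1)) = α := by
      rw [show α = -(-α) by ring, ← hbs, ← tsum_neg]
      congr 1
      funext k
      push_cast
      ring
    have h2 : -b k = a k := huniq (fun j => -b j) hbd' hbs' k hk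
    omega
  have := tail_lt (fun j => -a j) ha' (-α) hα' h1' huniq' n
  have heq : ∑' k : ℕ, ((-a (k + n + 1) : ℤ) : ℝ) / 3 ^ (k + n + 1)
      = -∑' k : ℕ, (a (k + n + 1) : ℝ) / 3 ^ (k + n + 1) := by
    rw [← tsum_neg]
    congr 1
    funext k
    push_cast
    ring
  rw [heq] at this
  linarith

private lemma geom_Icc3 (m n : ℕ) (h : m ≤ n) :
    ∑ k ∈ Finset.Icc (m+1) n, (1/3:ℝ) ^ k = ((1/3) ^ m - (1/3) ^ n) / 2 := by
  induction n, h using Nat.le_induction with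
  | base => rw [Finset.Icc_eq_empty (by omega)]; simp
  | succ n hmn ih =>
    rw [Finset.sum_Icc_succ_top (by omega), ih, pow_succ]
    ring

theorem stmt12 (a : ℕ → ℤ) (ha : ∀ k, 1 ≤ k → a k = -2 ∨ a k = 0 ∨ a k = 2)
    (α : ℝ) (hα : α = ∑' n : ℕ, (a (n + 1) : ℝ) / 3 ^ (n + 1))
    (h0 : 0 < α) (h1 : α < 1)
    (huniq : ∀ b : ℕ → ℤ, (∀ k, 1 ≤ k → b k = -2 ∨ b k = 0 ∨ b k = 2) →
      (∑' n : ℕ, (b (n + 1) : ℝ) / 3 ^ (n + 1)) = α → ∀ k, 1 ≤ k → b k = a k) :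
    ∀ n : ℕ, 1 ≤ n → ∀ i j : ℕ → ℤ,
      (∀ k, 1 ≤ k → k ≤ n → (i k = 0 ∨ i k = 2) ∧ (j k = 0 ∨ j k = 2)) →
      (|(∑ k ∈ Finset.Icc 1 n, ((i k - j k : ℤ) : ℝ) / 3 ^ k) - α| < 1 / 3 ^ n ↔
        ∀ k, 1 ≤ k → k ≤ n → i k - j k = a k) := by
  classical
  intro n hn i j hij
  have habs := abs_of_digits a ha
  have hsa := summable_dig a habs
  have hsplit := Summable.sum_add_tsum_nat_add (f := fun k : ℕ => (a (k + 1) : ℝ) / 3 ^ (k + 1)) n hsa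
  set T := ∑' k : ℕ, (a (k + n + 1) : ℝ) / 3 ^ (k + n + 1) with hT
  have hαT : α = ∑ k ∈ Finset.Icc 1 n, (a k : ℝ) / 3 ^ k + T := by
    rw [hα, ← hsplit, sum_Icc_one n (fun k => (a k : ℝ) / 3 ^ k)]
  have hTle : |T| ≤ 1 / 3 ^ n := tail_le a habs n
  have hTlt : |T| < 1 / 3 ^ n :=
    abs_lt.mpr ⟨tail_gt a ha α hα h0 huniq n, tail_lt a ha α hα h1 huniq n⟩
  constructor
  · intro hlt
    by_contra hc
    push_neg at hc
    obtain ⟨k0, hk01, hk0n, hk0⟩ := hc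
    have hex : ∃ k, 1 ≤ k ∧ k ≤ n ∧ i k - j k ≠ a k := ⟨k0, hk01, hk0n, hk0⟩
    obtain ⟨hm1, hmn, hmne⟩ := Nat.find_spec hex
    set m := Nat.find hex with hm
    have hpre : ∀ k, 1 ≤ k → k < m → i k - j k = a k := by
      intro k h1k h2k
      by_contra hne
      have h2k' : k < Nat.find hex := by rw [← hm]; exact h2k
      exact Nat.find_min hex h2k' ⟨h1k, by omega, hne⟩
    set x := ∑ k ∈ Finset.Icc m n, ((i k - j k - a k : ℤ) : ℝ) / 3 ^ k with hxdef
    have hx : (∑ k ∈ Finset.Icc 1 n, ((i k - j k : ℤ) : ℝ) / 3 ^ k)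
        - ∑ k ∈ Finset.Icc 1 n, (a k : ℝ) / 3 ^ k = x := by
      rw [← Finset.sum_sub_distrib]
      rw [hxdef]
      rw [← Finset.sum_subset (Finset.Icc_subset_Icc (by omega) le_rfl :
        Finset.Icc m n ⊆ Finset.Icc 1 n)]
      · apply Finset.sum_congr rfl
        intro k hk
        push_cast
        ring
      · intro k hk hknot
        rw [Finset.mem_Icc] at hk
        rw [Finset.mem_Icc] at hknot
        have hkm : k < m := by omega
        have := hpre k hk.1 hkm
        rw [this]
        push_cast
        ring
    have hIcc : Finset.Icc m n = insert m (Finset.Icc (m+1) n) := by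
      ext k
      simp only [Finset.mem_Icc, Finset.mem_insert]
      omega
    have hxsplit : x = ((i m - j m - a m : ℤ) : ℝ) / 3 ^ m
        + ∑ k ∈ Finset.Icc (m+1) n, ((i k - j k - a k : ℤ) : ℝ) / 3 ^ k := by
      rw [hxdef, hIcc, Finset.sum_insert (by simp)]
    set s := ∑ k ∈ Finset.Icc (m+1) n, ((i k - j k - a k : ℤ) : ℝ) / 3 ^ k with hs
    have hcm : i m - j m - a m ≤ -2 ∨ 2 ≤ i m - j m - a m := by
      obtain ⟨hi, hj⟩ := hij m hm1 hmn
      rcases ha m hm1 with h' | h' | h' <;> rcases hi with hi' | hi' <;>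
        rcases hj with hj' | hj' <;> omega
    have hcmabs : (2:ℝ) ≤ |((i m - j m - a m : ℤ) : ℝ)| := by
      rcases hcm with h' | h'
      · have hR : ((i m - j m - a m : ℤ) : ℝ) ≤ -2 := by exact_mod_cast h'
        calc (2:ℝ) ≤ -((i m - j m - a m : ℤ) : ℝ) := by linarith
          _ ≤ |((i m - j m - a m : ℤ) : ℝ)| := neg_le_abs _
      · have hR : (2:ℝ) ≤ ((i m - j m - a m : ℤ) : ℝ) := by exact_mod_cast h'
        exact hR.trans (le_abs_self _)
    have hcmR : (2:ℝ) / 3 ^ m ≤ |((i m - j m - a m : ℤ) : ℝ) / 3 ^ m| := by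
      rw [abs_div, abs_of_pos (by positivity : (0:ℝ) < 3 ^ m)]
      gcongr
    have hsle : |s| ≤ 2 / 3 ^ m - 2 / 3 ^ n := by
      calc |s| ≤ ∑ k ∈ Finset.Icc (m+1) n, |((i k - j k - a k : ℤ) : ℝ) / 3 ^ k| :=
            Finset.abs_sum_le_sum_abs _ _
        _ ≤ ∑ k ∈ Finset.Icc (m+1) n, 4 * (1/3:ℝ) ^ k := by
            apply Finset.sum_le_sum
            intro k hk
            rw [Finset.mem_Icc] at hk
            have hk1 : 1 ≤ k := by omega
            have hkn : k ≤ n := hk.2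
            have hb : -4 ≤ i k - j k - a k ∧ i k - j k - a k ≤ 4 := by
              obtain ⟨hi, hj⟩ := hij k hk1 hkn
              rcases ha k hk1 with h' | h' | h' <;> rcases hi with hi' | hi' <;>
                rcases hj with hj' | hj' <;> omega
            rw [abs_div, abs_of_pos (by positivity : (0:ℝ) < 3 ^ k)]
            have hbR : |((i k - j k - a k : ℤ) : ℝ)| ≤ 4 := by
              rw [abs_le]
              constructor <;> [exact_mod_cast hb.1; exact_mod_cast hb.2]
            rw [div_pow, one_pow]
            rw [mul_div_assoc', mul_one]
            gcongr
        _ = 4 * (((1/3:ℝ) ^ m - (1/3) ^ n) / 2) := by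
            rw [← Finset.mul_sum, geom_Icc3 m n hmn]
        _ = 2 / 3 ^ m - 2 / 3 ^ n := by
            rw [div_pow, div_pow, one_pow, one_pow]
            ring
    have hxlb : 2 / 3 ^ n ≤ |x| := by
      have h1' : |((i m - j m - a m : ℤ) : ℝ) / 3 ^ m| - |s| ≤ |x| := by
        rw [hxsplit]
        have := abs_add_le (((i m - j m - a m : ℤ) : ℝ) / 3 ^ m + s) (-s)
        simp only [add_neg_cancel_right, abs_neg] at this
        linarith
      linarith
    have he : (∑ k ∈ Finset.Icc 1 n, ((i k - j k : ℤ) : ℝ) / 3 ^ k) - α = x - T := by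
      rw [hαT, ← hx]
      ring
    rw [he] at hlt
    have := abs_sub_abs_le_abs_sub x T
    have habs_xT : |x| - |T| ≤ |x - T| := this
    have hdoub : (2:ℝ) / 3 ^ n = 1 / 3 ^ n + 1 / 3 ^ n := by ring
    linarith
  · intro heq
    have hS : (∑ k ∈ Finset.Icc 1 n, ((i k - j k : ℤ) : ℝ) / 3 ^ k)
        = ∑ k ∈ Finset.Icc 1 n, (a k : ℝ) / 3 ^ k := by
      apply Finset.sum_congr rfl
      intro k hk
      rw [Finset.mem_Icc] at hk
      rw [heq k hk.1 hk.2]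
    rw [hS, hαT]
    have : (∑ k ∈ Finset.Icc 1 n, (a k : ℝ) / 3 ^ k)
        - (∑ k ∈ Finset.Icc 1 n, (a k : ℝ) / 3 ^ k + T) = -T := by ring
    rw [this, abs_neg]
    exact hTlt
end
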